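/- arXiv:2302.13723 — 6 statements merged into one kernel-verified Lean document; each statement's English description precedes it below -/
import Mathlib

section
/- There exists a dimensional constant C(n) such that: for every nonnegative locally integrable f on ℝⁿ with ‖f‖_{BMO(ℝⁿ)} ≤ 1, every closed axis-parallel cube Q₀ with side length l(Q₀) > 0, every constant c > e, every x, y ∈ Q₀, and every closed axis-parallel cube Q containing x with side length l(Q) ≥ c·l(Q₀), one has f_Q − M₂f(y) ≤ C(n) c^{−1} log c, where f_Q = (1/|Q|)∫_Q f and M₂f(y) = sup{ f_{Q'} : Q' a closed axis-parallel cube containing y with l(Q') ≥ c·l(Q₀) } (a supremum in [0,∞]). Consequently, if M₂f is finite on Q₀, then |M₂f(x) − M₂f(y)| ≤ C(n) c^{−1} log c for all x, y ∈ Q₀. -/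
open MeasureTheory Set Filter
open scoped ENNReal Topology

/-- Mean oscillation of `f` over `A ⊆ ℝⁿ`. -/
noncomputable def oscN {n : ℕ} (f : (Fin n → ℝ) → ℝ) (A : Set (Fin n → ℝ)) : ℝ :=
  ⨍ x in A, |f x - ⨍ y in A, f y|

/-- The closed axis-parallel cube with lower corner `a` and side length `l`. -/
def cube {n : ℕ} (a : Fin n → ℝ) (l : ℝ) : Set (Fin n → ℝ) :=
  Set.Icc a (fun i => a i + l)

/-- BMO(ℝⁿ) seminorm. -/
noncomputable def bmoN {n : ℕ} (f : (Fin n → ℝ) → ℝ) : ℝ≥0∞ :=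
  ⨆ (a : Fin n → ℝ) (l : ℝ) (_ : 0 < l), ENNReal.ofReal (oscN f (cube a l))

/-- The "nonlocal" maximal function: supremum (in `[0,∞]`) of the averages of `f`
over cubes containing `y` with side length at least `c · l₀`. -/
noncomputable def nonlocalMax {n : ℕ} (f : (Fin n → ℝ) → ℝ) (c l₀ : ℝ)
    (y : Fin n → ℝ) : ℝ≥0∞ :=
  ⨆ (a : Fin n → ℝ) (l : ℝ) (_ : c * l₀ ≤ l) (_ : y ∈ cube a l),
    ENNReal.ofReal (⨍ t in cube a l, f t)

section basics
variable {n : ℕ} {f : (Fin n → ℝ) → ℝ}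

lemma measurableSet_cube {a : Fin n → ℝ} {l : ℝ} : MeasurableSet (cube a l) :=
  measurableSet_Icc

lemma volume_cube (a : Fin n → ℝ) (l : ℝ) :
    volume (cube a l) = ENNReal.ofReal l ^ n := by
  rw [cube, Real.volume_Icc_pi]; simp

lemma volume_cube_toReal (a : Fin n → ℝ) {l : ℝ} (hl : 0 ≤ l) :
    (volume (cube a l)).toReal = l ^ n := by
  rw [volume_cube a, ← ENNReal.ofReal_pow hl, ENNReal.toReal_ofReal (by positivity)]

lemma volume_cube_ne_top (a : Fin n → ℝ) (l : ℝ) : volume (cube a l) ≠ ⊤ := by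
  rw [volume_cube a]; exact ENNReal.pow_ne_top ENNReal.ofReal_ne_top

lemma volume_cube_ne_zero (a : Fin n → ℝ) {l : ℝ} (hl : 0 < l) :
    volume (cube a l) ≠ 0 := by
  rw [volume_cube a]; positivity

lemma integrableOn_cube (hf : LocallyIntegrable f volume) {a : Fin n → ℝ} {l : ℝ} :
    IntegrableOn f (cube a l) volume :=
  hf.integrableOn_isCompact isCompact_Icc

lemma setAverage_sub_const {A : Set (Fin n → ℝ)} (hA : volume A ≠ 0) (hA' : volume A ≠ ⊤)
    (hf : IntegrableOn f A volume) (k : ℝ) :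
    ⨍ x in A, (f x - k) = (⨍ x in A, f x) - k := by
  rw [setAverage_eq, setAverage_eq, integral_sub hf (integrableOn_const hA')]
  rw [setIntegral_const, measureReal_def]; simp only [smul_eq_mul]
  have h0 : (volume A).toReal ≠ 0 := by
    simp [ENNReal.toReal_eq_zero_iff, hA, hA']
  field_simp

lemma abs_setAverage_le {A : Set (Fin n → ℝ)} (g : (Fin n → ℝ) → ℝ) :
    |⨍ x in A, g x| ≤ ⨍ x in A, |g x| := by
  rw [setAverage_eq, setAverage_eq]
  rw [smul_eq_mul, smul_eq_mul, abs_mul, abs_of_nonneg (by positivity : (0:ℝ) ≤ (volume.real A)⁻¹)]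
  gcongr
  simpa [Real.norm_eq_abs] using norm_integral_le_integral_norm (μ := volume.restrict A) g

lemma oscN_nonneg {A : Set (Fin n → ℝ)} : 0 ≤ oscN f A := by
  rw [oscN, setAverage_eq]
  have : 0 ≤ ∫ x in A, |f x - ⨍ y in A, f y| := by
    apply integral_nonneg; intro x; positivity
  positivity

/-- L1 : comparison of averages over nested sets. -/
lemma avg_comparison {A B : Set (Fin n → ℝ)} (hAB : A ⊆ B)
    (hA : volume A ≠ 0) (hA' : volume A ≠ ⊤) (hB : volume B ≠ 0) (hB' : volume B ≠ ⊤)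
    (hf : IntegrableOn f B volume) :
    |(⨍ x in A, f x) - ⨍ x in B, f x| ≤
      (volume B).toReal / (volume A).toReal * oscN f B := by
  set k := ⨍ x in B, f x with hk
  have h1 : (⨍ x in A, f x) - k = ⨍ x in A, (f x - k) :=
    (setAverage_sub_const hA hA' (hf.mono_set hAB) k).symm
  rw [h1]
  calc |⨍ x in A, (f x - k)| ≤ ⨍ x in A, |f x - k| := abs_setAverage_le _
    _ = (volume A).toReal⁻¹ * ∫ x in A, |f x - k| := by rw [setAverage_eq, smul_eq_mul, measureReal_def]
    _ ≤ (volume A).toReal⁻¹ * ∫ x in B, |f x - k| := by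
        have hint : IntegrableOn (fun x => |f x - k|) B volume :=
          ((hf.sub (integrableOn_const hB')).abs)
        have hmono : (∫ x in A, |f x - k|) ≤ ∫ x in B, |f x - k| :=
          setIntegral_mono_set hint (Eventually.of_forall fun x => abs_nonneg _)
            (HasSubset.Subset.eventuallyLE hAB)
        have hpos : (0:ℝ) ≤ (volume A).toReal⁻¹ := by positivity
        exact mul_le_mul_of_nonneg_left hmono hpos
    _ = (volume B).toReal / (volume A).toReal * oscN f B := by
        rw [oscN, setAverage_eq, smul_eq_mul, ← hk]
        have h0 : (volume B).toReal ≠ 0 := by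
          simp [ENNReal.toReal_eq_zero_iff, hB, hB']
        rw [eq_comm]
        field_simp
        rw [mul_comm ((volume A).toReal), ← div_div, mul_comm ((volume B).toReal),
          mul_div_assoc, (show (volume B).toReal / volume.real B = 1 from div_self h0), mul_one]
lemma cube_coords {a A : Fin n → ℝ} {s L : ℝ} (hs : 0 ≤ s)
    (h : cube a s ⊆ cube A L) : ∀ i, A i ≤ a i ∧ a i + s ≤ A i + L := by
  intro i
  have h1 : a ∈ cube A L := h ⟨fun j => le_rfl, fun j => by dsimp; linarith⟩
  have h2 : (fun j => a j + s) ∈ cube A L :=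
    h ⟨fun j => by dsimp; linarith, fun j => le_rfl⟩
  exact ⟨h1.1 i, h2.2 i⟩

/-- Clamped intermediate cube. -/
lemma exists_mid_cube {a A : Fin n → ℝ} {s L σ : ℝ} (hs : 0 ≤ s) (hsσ : s ≤ σ)
    (hσL : σ ≤ L) (h : cube a s ⊆ cube A L) :
    ∃ p, cube a s ⊆ cube p σ ∧ cube p σ ⊆ cube A L := by
  have hco := cube_coords hs h
  refine ⟨fun i => max (A i) (min (a i) (A i + L - σ)), ?_, ?_⟩
  · apply Set.Icc_subset_Icc
    · intro i
      show max (A i) (min (a i) (A i + L - σ)) ≤ a i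
      exact max_le (hco i).1 (min_le_left _ _)
    · intro i
      show a i + s ≤ max (A i) (min (a i) (A i + L - σ)) + σ
      have : min (a i) (A i + L - σ) + σ = min (a i + σ) (A i + L) := by
        rw [← min_add_add_right]; ring_nf
      have h2 : a i + s ≤ min (a i) (A i + L - σ) + σ := by
        rw [this]
        exact le_min (by linarith) (by linarith [(hco i).2])
      have h3 : min (a i) (A i + L - σ) ≤ max (A i) (min (a i) (A i + L - σ)) :=
        le_max_right _ _
      linarith
  · apply Set.Icc_subset_Icc
    · intro i; exact le_max_left _ _
    · intro i
      show max (A i) (min (a i) (A i + L - σ)) + σ ≤ A i + L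
      have : max (A i) (min (a i) (A i + L - σ)) ≤ A i + L - σ :=
        max_le (by linarith [(hco i).1, (hco i).2, hsσ]) (min_le_right _ _)
      linarith

/-- L3: doubling chain. -/
lemma chain_bound (hosc : ∀ (p : Fin n → ℝ) (s : ℝ), 0 < s → oscN f (cube p s) ≤ 1)
    (hf : LocallyIntegrable f volume) :
    ∀ (k : ℕ) (a A : Fin n → ℝ) (s L : ℝ), 0 < s → s ≤ L → L ≤ 2 ^ k * s →
      cube a s ⊆ cube A L →
      |(⨍ x in cube a s, f x) - ⨍ x in cube A L, f x| ≤ 2 ^ n * (k + 1) := by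
  intro k
  induction k with
  | zero =>
    intro a A s L hs hsL hL h
    have hL0 : 0 < L := lt_of_lt_of_le hs hsL
    have := avg_comparison h (volume_cube_ne_zero a hs) (volume_cube_ne_top a s)
      (volume_cube_ne_zero A hL0) (volume_cube_ne_top A L) (integrableOn_cube hf)
    rw [volume_cube_toReal A hL0.le, volume_cube_toReal a hs.le] at this
    have hr : L ^ n / s ^ n ≤ 2 ^ n := by
      rw [← div_pow]
      have h1 : L / s ≤ 2 := by
        rw [div_le_iff₀ hs]
        have : L ≤ s := by simpa using hL
        linarith
      exact pow_le_pow_left₀ (by positivity) h1 n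
    have : |(⨍ x in cube a s, f x) - ⨍ x in cube A L, f x| ≤ 2 ^ n * 1 :=
      this.trans (mul_le_mul hr (hosc A L hL0) oscN_nonneg (by positivity))
    have h2n : (0:ℝ) ≤ 2 ^ n := by positivity
    push_cast
    linarith
  | succ k ih =>
    intro a A s L hs hsL hL h
    have hL0 : 0 < L := lt_of_lt_of_le hs hsL
    rcases le_or_gt L (2 ^ k * s) with hc | hc
    · have h1 := ih a A s L hs hsL hc h
      have h2n : (0:ℝ) < 2 ^ n := by positivity
      push_cast at h1 ⊢
      have h3 : (2:ℝ)^n * ((k:ℝ)+1) ≤ 2^n * ((k:ℝ)+1+1) :=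
        mul_le_mul_of_nonneg_left (by linarith) h2n.le
      linarith
    · set σ := L / 2 ^ k with hσ
      have h2k : (0:ℝ) < 2 ^ k := by positivity
      have h1k : (1:ℝ) ≤ 2 ^ k := one_le_pow₀ (by norm_num)
      have hsσ : s ≤ σ := by
        rw [hσ, le_div_iff₀ h2k]; linarith [hc]
      have hσL : σ ≤ L := by
        rw [hσ, div_le_iff₀ h2k]
        have h4 : L * 1 ≤ L * 2 ^ k := mul_le_mul_of_nonneg_left h1k hL0.le
        linarith
      have hσ2s : σ ≤ 2 * s := by
        rw [hσ, div_le_iff₀ h2k]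
        calc L ≤ 2 ^ (k+1) * s := hL
          _ = 2 * s * 2 ^ k := by ring
      have hσ0 : 0 < σ := by positivity
      obtain ⟨p, h1, h2⟩ := exists_mid_cube hs.le hsσ hσL h
      have e1 := avg_comparison h1 (volume_cube_ne_zero a hs) (volume_cube_ne_top a s)
        (volume_cube_ne_zero p hσ0) (volume_cube_ne_top p σ) (integrableOn_cube hf)
      rw [volume_cube_toReal p hσ0.le, volume_cube_toReal a hs.le] at e1
      have hr : σ ^ n / s ^ n ≤ 2 ^ n := by
        rw [← div_pow]
        have h1' : σ / s ≤ 2 := by rw [div_le_iff₀ hs]; linarith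
        exact pow_le_pow_left₀ (by positivity) h1' n
      have e1' : |(⨍ x in cube a s, f x) - ⨍ x in cube p σ, f x| ≤ 2 ^ n := by
        calc |(⨍ x in cube a s, f x) - ⨍ x in cube p σ, f x| ≤
            σ ^ n / s ^ n * oscN f (cube p σ) := e1
          _ ≤ 2 ^ n * 1 := mul_le_mul hr (hosc p σ hσ0) oscN_nonneg (by positivity)
          _ = 2 ^ n := mul_one _
      have e2 := ih p A σ L hσ0 hσL (by rw [hσ]; field_simp; exact le_rfl) h2
      calc |(⨍ x in cube a s, f x) - ⨍ x in cube A L, f x| ≤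
          |(⨍ x in cube a s, f x) - ⨍ x in cube p σ, f x| +
          |(⨍ x in cube p σ, f x) - ⨍ x in cube A L, f x| := abs_sub_le _ _ _
        _ ≤ 2 ^ n + 2 ^ n * (k + 1) := add_le_add e1' e2
        _ = 2 ^ n * ((k:ℝ) + 1 + 1) := by ring
        _ = 2 ^ n * (↑(k + 1) + 1) := by push_cast; ring
      


set_option maxHeartbeats 1000000 in
/-- The key analytic estimate. -/
lemma core_estimate (hn : 1 ≤ n)
    (hosc : ∀ (p : Fin n → ℝ) (s : ℝ), 0 < s → oscN f (cube p s) ≤ 1)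
    (hf : LocallyIntegrable f volume)
    {a₀ a : Fin n → ℝ} {l₀ l c : ℝ} (hl₀ : 0 < l₀) (hc : Real.exp 1 < c)
    (hcl : c * l₀ ≤ l) {x : Fin n → ℝ} (hx₀ : x ∈ cube a₀ l₀) (hx : x ∈ cube a l) :
    (⨍ t in cube a l, f t) ≤
      (⨍ t in cube (fun i => min (a i) (a₀ i)) (l + l₀), f t)
        + (n * 2 ^ (2*n+3)) * c⁻¹ * Real.log c := by
  have he : (1:ℝ) < Real.exp 1 := by
    have h := Real.exp_one_gt_d9; linarith
  have hc1 : (1:ℝ) < c := he.trans hc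
  have hc0 : (0:ℝ) < c := by linarith
  have hl : 0 < l := lt_of_lt_of_le (mul_pos hc0 hl₀) hcl
  have hl0l : l₀ < l := lt_of_lt_of_le ((lt_mul_iff_one_lt_left hl₀).2 hc1) hcl
  set A := (fun i => min (a i) (a₀ i)) with hA
  set l'' := l + l₀ with hl''
  have hl''0 : 0 < l'' := by rw [hl'']; linarith
  have hll'' : l ≤ l'' := by rw [hl'']; linarith
  have hl₀l'' : l₀ ≤ l'' := by rw [hl'']; linarith
  -- coordinates of x
  have hxc : ∀ i, a₀ i ≤ x i ∧ x i ≤ a₀ i + l₀ := fun i => ⟨hx₀.1 i, hx₀.2 i⟩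
  have hxa : ∀ i, a i ≤ x i ∧ x i ≤ a i + l := fun i => ⟨hx.1 i, hx.2 i⟩
  have haa₀ : ∀ i, a i ≤ a₀ i + l₀ := fun i => (hxa i).1.trans (hxc i).2
  have hQQ'' : cube a l ⊆ cube A l'' := by
    apply Set.Icc_subset_Icc
    · intro i; exact min_le_left _ _
    · intro i
      show a i + l ≤ min (a i) (a₀ i) + l''
      rcases min_cases (a i) (a₀ i) with ⟨h1, _⟩ | ⟨h1, h2⟩ <;> rw [h1, hl'']
      · linarith
      · linarith [haa₀ i]
  set fQ := ⨍ t in cube a l, f t with hfQ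
  set fQ'' := ⨍ t in cube A l'', f t with hfQ''
  set S := cube A l'' \ cube a l with hS
  -- Step 1 : identity
  have hSm : MeasurableSet S := measurableSet_cube.diff measurableSet_cube
  have hintQ : IntegrableOn f (cube a l) volume := integrableOn_cube hf
  have hintQ'' : IntegrableOn f (cube A l'') volume := integrableOn_cube hf
  have hintS : IntegrableOn f S volume := hintQ''.mono_set Set.diff_subset
  have hvolS' : volume S = volume (cube A l'') - volume (cube a l) :=
    measure_diff hQQ'' measurableSet_cube.nullMeasurableSet (volume_cube_ne_top a l)
  have hvolSfin : volume S ≠ ⊤ := by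
    rw [hvolS']
    exact ENNReal.sub_ne_top (volume_cube_ne_top A l'')
  have hvolS : (volume S).toReal = l'' ^ n - l ^ n := by
    rw [hvolS', ENNReal.toReal_sub_of_le (measure_mono hQQ'') (volume_cube_ne_top A l''),
      volume_cube_toReal a hl.le, volume_cube_toReal A hl''0.le]
  have hsplit : (∫ z in cube A l'', f z) = (∫ z in cube a l, f z) + ∫ z in S, f z := by
    rw [← setIntegral_union (Set.disjoint_sdiff_right) hSm hintQ hintS,
      Set.union_diff_cancel hQQ'']
  have hln0 : (l:ℝ) ^ n ≠ 0 := by positivity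
  have hl''n0 : (l'':ℝ) ^ n ≠ 0 := by positivity
  have e1 : l ^ n * fQ = ∫ z in cube a l, f z := by
    rw [hfQ, setAverage_eq, smul_eq_mul, measureReal_def, volume_cube_toReal a hl.le, ← mul_assoc,
      mul_inv_cancel₀ hln0, one_mul]
  have e2 : l'' ^ n * fQ'' = ∫ z in cube A l'', f z := by
    rw [hfQ'', setAverage_eq, smul_eq_mul, measureReal_def, volume_cube_toReal A hl''0.le, ← mul_assoc,
      mul_inv_cancel₀ hl''n0, one_mul]
  have e3 : (∫ z in S, (fQ - f z)) = (l'' ^ n - l ^ n) * fQ - ∫ z in S, f z := by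
    rw [integral_sub (integrableOn_const hvolSfin : IntegrableOn (fun _ => fQ) S volume) hintS,
      setIntegral_const, smul_eq_mul, measureReal_def, hvolS]
  have step1 : l'' ^ n * (fQ - fQ'') = ∫ z in S, (fQ - f z) := by
    linear_combination e1 - e2 - e3 - hsplit
  -- Step 2 : covering bound
  set m := ⌈l''/l₀⌉₊ with hm
  set k'' := ⌈Real.logb 2 (l''/l₀)⌉₊ with hk''
  set B := 1 + (2 ^ n * ((k'':ℝ) + 1) + 2 ^ n) with hB
  have hm1 : 1 ≤ m := by
    rw [hm, Nat.one_le_ceil_iff]; positivity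
  have hml : l'' ≤ (m:ℝ) * l₀ := by
    have h1 : l''/l₀ ≤ (m:ℝ) := Nat.le_ceil _
    calc l'' = l''/l₀ * l₀ := by field_simp
      _ ≤ (m:ℝ) * l₀ := by gcongr
  have hmle : (m:ℝ) ≤ l''/l₀ + 1 := by
    have := Nat.ceil_lt_add_one (a := l''/l₀) (by positivity)
    rw [hm]; linarith
  have h2k'' : l'' ≤ 2 ^ k'' * l₀ := by
    have h1 : l''/l₀ ≤ 2 ^ (k'' : ℝ) := by
      have h2 : Real.logb 2 (l''/l₀) ≤ (k'' : ℝ) := Nat.le_ceil _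
      have h3 : (2:ℝ) ^ Real.logb 2 (l''/l₀) = l''/l₀ :=
        Real.rpow_logb (by norm_num) (by norm_num) (by positivity)
      calc l''/l₀ = (2:ℝ) ^ Real.logb 2 (l''/l₀) := h3.symm
        _ ≤ 2 ^ (k'' : ℝ) := Real.rpow_le_rpow_of_exponent_le (by norm_num) h2
    rw [Real.rpow_natCast] at h1
    calc l'' = l''/l₀ * l₀ := by field_simp
      _ ≤ 2 ^ k'' * l₀ := by gcongr
  -- the index type and covering cubes
  set P : ((i₀ : Fin n) × (Bool × ({i : Fin n // i ≠ i₀} → Fin m))) → (Fin n → ℝ) :=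
    fun w i => if h : i = w.1 then (if w.2.1 then A i else A i + l'' - l₀)
      else min (A i + (w.2.2 ⟨i, h⟩ : ℕ) * l₀) (A i + l'' - l₀) with hP
  have hKQ'' : ∀ w, cube (P w) l₀ ⊆ cube A l'' := by
    intro w
    apply Set.Icc_subset_Icc
    · intro i
      show A i ≤ P w i
      rw [hP]
      dsimp only
      split
      · split
        · exact le_refl _
        · linarith
      · exact le_min (le_add_of_nonneg_right (by positivity)) (by linarith)
    · intro i
      show P w i + l₀ ≤ A i + l''
      rw [hP]
      dsimp only
      split
      · split
        · linarith
        · linarith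
      · have := min_le_right (A i + (w.2.2 ⟨i, by assumption⟩ : ℕ) * l₀) (A i + l'' - l₀)
        linarith
  have hcov : S ⊆ ⋃ w, cube (P w) l₀ := by
    intro z hz
    obtain ⟨hz'', hzQ⟩ := hz
    have hzc : ∀ i, A i ≤ z i ∧ z i ≤ A i + l'' := fun i => ⟨hz''.1 i, hz''.2 i⟩
    have hex : ∃ i₀, z i₀ < a i₀ ∨ a i₀ + l < z i₀ := by
      by_contra hcon
      push_neg at hcon
      exact hzQ ⟨fun i => (hcon i).1, fun i => (hcon i).2⟩
    obtain ⟨i₀, hcase⟩ := hex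
    have hmm : m - 1 < m := Nat.sub_lt hm1 one_pos
    set j : {i : Fin n // i ≠ i₀} → Fin m :=
      fun i => ⟨min ⌊(z i.1 - A i.1)/l₀⌋₊ (m-1), lt_of_le_of_lt (min_le_right _ _) hmm⟩
      with hj
    have hgrid : ∀ (i : Fin n) (hi : i ≠ i₀),
        min (A i + ((j ⟨i, hi⟩ : ℕ) : ℝ) * l₀) (A i + l'' - l₀) ≤ z i ∧
        z i ≤ min (A i + ((j ⟨i, hi⟩ : ℕ) : ℝ) * l₀) (A i + l'' - l₀) + l₀ := by
      intro i hi
      set u := z i - A i with hu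
      have hu0 : 0 ≤ u := by rw [hu]; linarith [(hzc i).1]
      have huu : u ≤ l'' := by rw [hu]; linarith [(hzc i).2]
      have hjv : (j ⟨i, hi⟩ : ℕ) = min ⌊u/l₀⌋₊ (m-1) := rfl
      constructor
      · have h1 : ((min ⌊u/l₀⌋₊ (m-1) : ℕ) : ℝ) * l₀ ≤ u := by
          have h2 : ((min ⌊u/l₀⌋₊ (m-1) : ℕ) : ℝ) ≤ (⌊u/l₀⌋₊ : ℝ) := by
            exact_mod_cast Nat.cast_le.2 (min_le_left _ _)
          have h3 : (⌊u/l₀⌋₊ : ℝ) ≤ u/l₀ := Nat.floor_le (by positivity)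
          calc ((min ⌊u/l₀⌋₊ (m-1) : ℕ) : ℝ) * l₀ ≤ (u/l₀) * l₀ := by
                apply mul_le_mul_of_nonneg_right (h2.trans h3) hl₀.le
            _ = u := by field_simp
        have : A i + ((j ⟨i, hi⟩ : ℕ) : ℝ) * l₀ ≤ z i := by
          rw [hjv]; rw [hu] at h1; linarith
        exact le_trans (min_le_left _ _) this
      · rw [← min_add_add_right]
        apply le_min
        swap
        · linarith [(hzc i).2]
        · rw [hjv]
          rcases le_or_gt ⌊u/l₀⌋₊ (m-1) with hfl | hfl
          · rw [min_eq_left hfl]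
            have h4 : u/l₀ < ⌊u/l₀⌋₊ + 1 := Nat.lt_floor_add_one _
            have h5 : u < ((⌊u/l₀⌋₊ : ℝ) + 1) * l₀ := by
              calc u = u/l₀ * l₀ := by field_simp
                _ < ((⌊u/l₀⌋₊ : ℝ) + 1) * l₀ := by
                    apply mul_lt_mul_of_pos_right h4 hl₀
            rw [hu] at h5; linarith
          · rw [min_eq_right hfl.le]
            have h6 : ((m:ℝ) - 1) * l₀ + l₀ = (m:ℝ) * l₀ := by ring
            have h7 : ((m - 1 : ℕ) : ℝ) = (m:ℝ) - 1 := by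
              rw [Nat.cast_sub hm1]; norm_num
            rw [h7]
            have : z i ≤ A i + l'' := (hzc i).2
            linarith [hml]
    rcases hcase with hlow | hhigh
    · refine Set.mem_iUnion.2 ⟨⟨i₀, true, j⟩, ?_, ?_⟩
      · intro i
        show P ⟨i₀, true, j⟩ i ≤ z i
        rw [hP]; dsimp only
        split
        · rename_i hii
          subst hii
          simp only [if_pos]
          exact (hzc i).1
        · rename_i hii
          exact (hgrid i hii).1
      · intro i
        show z i ≤ P ⟨i₀, true, j⟩ i + l₀
        rw [hP]; dsimp only
        split
        · rename_i hii
          subst hii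
          simp only [if_pos]
          have haA : a i ≤ A i + l₀ := by
            rcases min_cases (a i) (a₀ i) with ⟨h1, _⟩ | ⟨h1, _⟩ <;>
              · show a i ≤ min (a i) (a₀ i) + l₀
                rw [h1]
                · linarith [haa₀ i]
          linarith
        · rename_i hii
          exact (hgrid i hii).2
    · refine Set.mem_iUnion.2 ⟨⟨i₀, false, j⟩, ?_, ?_⟩
      · intro i
        show P ⟨i₀, false, j⟩ i ≤ z i
        rw [hP]; dsimp only
        split
        · rename_i hii
          subst hii
          simp only [Bool.false_eq_true, if_neg, ite_false]
          have hAa : A i ≤ a i := min_le_left _ _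
          have : A i + l'' - l₀ = A i + l := by rw [hl'']; ring
          rw [this]
          linarith
        · rename_i hii
          exact (hgrid i hii).1
      · intro i
        show z i ≤ P ⟨i₀, false, j⟩ i + l₀
        rw [hP]; dsimp only
        split
        · rename_i hii
          subst hii
          simp only [Bool.false_eq_true, if_neg, ite_false]
          linarith [(hzc i).2]
        · rename_i hii
          exact (hgrid i hii).2
  -- cardinality
  have hcard : Fintype.card ((i₀ : Fin n) × (Bool × ({i : Fin n // i ≠ i₀} → Fin m)))
      = n * (2 * m ^ (n-1)) := by
    rw [Fintype.card_sigma]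
    have hsub : ∀ i₀ : Fin n, Fintype.card {i : Fin n // i ≠ i₀} = n - 1 := by
      intro i₀
      simp [Fintype.card_subtype_compl]
    have hone : ∀ i₀ : Fin n,
        Fintype.card (Bool × ({i : Fin n // i ≠ i₀} → Fin m)) = 2 * m ^ (n-1) := by
      intro i₀
      rw [Fintype.card_prod, Fintype.card_bool, Fintype.card_fun, hsub i₀, Fintype.card_fin]
    simp only [hone, Finset.sum_const, Finset.card_univ, Fintype.card_fin, smul_eq_mul]
  -- per-cube bound
  have hB0 : 0 ≤ B := by
    rw [hB]; positivity
  have hd1 : |fQ - fQ''| ≤ 2 ^ n := by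
    have h1 := avg_comparison hQQ'' (volume_cube_ne_zero a hl) (volume_cube_ne_top a l)
      (volume_cube_ne_zero A hl''0) (volume_cube_ne_top A l'') hintQ''
    rw [volume_cube_toReal A hl''0.le, volume_cube_toReal a hl.le] at h1
    have hr : l'' ^ n / l ^ n ≤ 2 ^ n := by
      rw [← div_pow]
      apply pow_le_pow_left₀ (by positivity)
      rw [div_le_iff₀ hl, hl'']
      linarith
    calc |fQ - fQ''| ≤ l'' ^ n / l ^ n * oscN f (cube A l'') := h1
      _ ≤ 2 ^ n * 1 := mul_le_mul hr (hosc A l'' hl''0) oscN_nonneg (by positivity)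
      _ = 2 ^ n := mul_one _
  have hKbound : ∀ w, (∫ z in cube (P w) l₀, |fQ - f z|) ≤ l₀^n * B := by
    intro w
    set fK := ⨍ t in cube (P w) l₀, f t with hfK
    have hchain : |fK - fQ''| ≤ 2 ^ n * ((k'':ℝ) + 1) :=
      chain_bound hosc hf k'' (P w) A l₀ l'' hl₀ hl₀l'' h2k'' (hKQ'' w)
    set D := 2 ^ n * ((k'':ℝ) + 1) + 2 ^ n with hD
    have hintK : IntegrableOn f (cube (P w) l₀) volume := integrableOn_cube hf
    have hptwise : ∀ z, |fQ - f z| ≤ |f z - fK| + D := by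
      intro z
      have h1 : |fQ - f z| ≤ |f z - fK| + |fK - fQ| := by
        rw [abs_sub_comm fQ (f z)]
        exact abs_sub_le _ _ _
      have h2 : |fK - fQ| ≤ |fK - fQ''| + |fQ'' - fQ| := abs_sub_le _ _ _
      rw [abs_sub_comm fQ'' fQ] at h2
      rw [hD]
      linarith [hchain, hd1]
    have hint1 : IntegrableOn (fun z => |fQ - f z|) (cube (P w) l₀) volume :=
      ((integrableOn_const (volume_cube_ne_top (P w) l₀)).sub hintK).abs
    have hint2 : IntegrableOn (fun z => |f z - fK| + D) (cube (P w) l₀) volume :=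
      ((hintK.sub (integrableOn_const (volume_cube_ne_top (P w) l₀))).abs).add
        (integrableOn_const (volume_cube_ne_top (P w) l₀))
    have hmono := integral_mono hint1 hint2 (fun z => hptwise z)
    have hoscK : (∫ z in cube (P w) l₀, |f z - fK|) = l₀^n * oscN f (cube (P w) l₀) := by
      rw [oscN, setAverage_eq, smul_eq_mul, measureReal_def, volume_cube_toReal (P w) hl₀.le, ← hfK,
        ← mul_assoc, mul_inv_cancel₀ (by positivity : (l₀:ℝ)^n ≠ 0), one_mul]
    have hint3 : IntegrableOn (fun z => |f z - fK|) (cube (P w) l₀) volume :=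
      (hintK.sub (integrableOn_const (volume_cube_ne_top (P w) l₀))).abs
    have hint4 : IntegrableOn (fun _ => D) (cube (P w) l₀) volume :=
      integrableOn_const (volume_cube_ne_top (P w) l₀)
    have hsum : (∫ z in cube (P w) l₀, (|f z - fK| + D)) =
        (∫ z in cube (P w) l₀, |f z - fK|) + l₀^n * D := by
      rw [integral_add hint3 hint4, setIntegral_const, smul_eq_mul, measureReal_def,
        volume_cube_toReal (P w) hl₀.le]
    have hosc1 : oscN f (cube (P w) l₀) ≤ 1 := hosc (P w) l₀ hl₀
    calc (∫ z in cube (P w) l₀, |fQ - f z|) ≤ ∫ z in cube (P w) l₀, (|f z - fK| + D) := hmono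
      _ = l₀^n * oscN f (cube (P w) l₀) + l₀^n * D := by rw [hsum, hoscK]
      _ ≤ l₀^n * 1 + l₀^n * D := by gcongr
      _ = l₀^n * B := by rw [hB, hD]; ring
  -- assembly via lintegral
  have hintSabs : IntegrableOn (fun z => |fQ - f z|) S volume :=
    ((integrableOn_const hvolSfin).sub hintS).abs
  have hintSsub : IntegrableOn (fun z => fQ - f z) S volume :=
    (integrableOn_const hvolSfin).sub hintS
  have hstep2a : (∫ z in S, (fQ - f z)) ≤ ∫ z in S, |fQ - f z| :=
    integral_mono hintSsub hintSabs (fun z => le_abs_self _)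
  have haesm : AEStronglyMeasurable (fun z => |fQ - f z|) (volume.restrict S) := by
    simpa [Real.norm_eq_abs] using
      (aestronglyMeasurable_const.sub (hf.aestronglyMeasurable.restrict)).norm
  have hlint : (∫ z in S, |fQ - f z|) = (∫⁻ z in S, ENNReal.ofReal |fQ - f z|).toReal := by
    rw [integral_eq_lintegral_of_nonneg_ae (Eventually.of_forall fun z => abs_nonneg _) haesm]
  have hlint2 : (∫⁻ z in S, ENNReal.ofReal |fQ - f z|) ≤
      (Fintype.card ((i₀ : Fin n) × (Bool × ({i : Fin n // i ≠ i₀} → Fin m)))) •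
        ENNReal.ofReal (l₀^n * B) := by
    calc (∫⁻ z in S, ENNReal.ofReal |fQ - f z|) ≤
        ∫⁻ z in ⋃ w, cube (P w) l₀, ENNReal.ofReal |fQ - f z| :=
          lintegral_mono_set hcov
      _ ≤ ∑' w, ∫⁻ z in cube (P w) l₀, ENNReal.ofReal |fQ - f z| :=
          lintegral_iUnion_le _ _
      _ = ∑ w, ∫⁻ z in cube (P w) l₀, ENNReal.ofReal |fQ - f z| := tsum_fintype _
      _ ≤ ∑ w : ((i₀ : Fin n) × (Bool × ({i : Fin n // i ≠ i₀} → Fin m))),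
            ENNReal.ofReal (l₀^n * B) := by
          apply Finset.sum_le_sum
          intro w _
          have hintKabs : IntegrableOn (fun z => |fQ - f z|) (cube (P w) l₀) volume :=
            ((integrableOn_const (volume_cube_ne_top (P w) l₀)).sub
              (integrableOn_cube hf)).abs
          rw [← ofReal_integral_eq_lintegral_ofReal hintKabs
            (Eventually.of_forall fun z => abs_nonneg _)]
          exact ENNReal.ofReal_le_ofReal (hKbound w)
      _ = _ := by rw [Finset.sum_const, Finset.card_univ]
  have step2 : (∫ z in S, (fQ - f z)) ≤ (2*n) * (m:ℝ)^(n-1) * l₀^n * B := by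
    have hfin : ((Fintype.card ((i₀ : Fin n) × (Bool × ({i : Fin n // i ≠ i₀} → Fin m)))) •
        ENNReal.ofReal (l₀^n * B)) ≠ ⊤ := by
      rw [nsmul_eq_mul]
      exact ENNReal.mul_ne_top (ENNReal.natCast_ne_top _) ENNReal.ofReal_ne_top
    have h5 : (∫ z in S, |fQ - f z|) ≤
        ((Fintype.card ((i₀ : Fin n) × (Bool × ({i : Fin n // i ≠ i₀} → Fin m)))) : ℝ)
          * (l₀^n * B) := by
      rw [hlint]
      calc (∫⁻ z in S, ENNReal.ofReal |fQ - f z|).toReal ≤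
          (((Fintype.card ((i₀ : Fin n) × (Bool × ({i : Fin n // i ≠ i₀} → Fin m)))) •
            ENNReal.ofReal (l₀^n * B))).toReal := ENNReal.toReal_mono hfin hlint2
        _ = _ := by
            rw [nsmul_eq_mul, ENNReal.toReal_mul, ENNReal.toReal_natCast,
              ENNReal.toReal_ofReal (mul_nonneg (by positivity) hB0)]
    calc (∫ z in S, (fQ - f z)) ≤ ∫ z in S, |fQ - f z| := hstep2a
      _ ≤ _ := h5
      _ = (2*n) * (m:ℝ)^(n-1) * l₀^n * B := by rw [hcard]; push_cast; ring
  -- Step 3 : numeric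
  have step3 : (2*(n:ℝ)) * (m:ℝ)^(n-1) * l₀^n * B / l''^n ≤
      (n * 2 ^ (2*n+3)) * c⁻¹ * Real.log c := by
    set t := l / l₀ with htdef
    have htc : c ≤ t := by rw [htdef, le_div_iff₀ hl₀]; linarith
    have hte : Real.exp 1 ≤ t := le_of_lt (lt_of_lt_of_le hc htc)
    have ht1 : 1 < t := lt_of_lt_of_le hc1 htc
    have ht0 : 0 < t := by linarith
    have hlt : l = t * l₀ := by rw [htdef]; field_simp
    have hl''t : l'' = (t+1) * l₀ := by rw [hl'', hlt]; ring
    have hratio : l''/l₀ = t + 1 := by rw [hl''t]; field_simp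
    have hlogt1 : 1 ≤ Real.log t := by
      rw [Real.le_log_iff_exp_le ht0]; exact hte
    have hlogt0 : 0 < Real.log t := by linarith
    have hlb0 : 0 ≤ Real.logb 2 (t+1) := Real.logb_nonneg (by norm_num) (by linarith)
    have hk''le : (k'':ℝ) ≤ Real.logb 2 (t+1) + 1 := by
      have h1 := Nat.ceil_lt_add_one hlb0
      rw [hk'', hratio]
      linarith
    have hlog2 : (1/2:ℝ) ≤ Real.log 2 := by
      have := Real.log_two_gt_d9; linarith
    have hlog2' : Real.log 2 ≤ 1 := by
      have := Real.log_two_lt_d9; linarith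
    have hlogb : Real.logb 2 (t+1) ≤ 2 * Real.log (t+1) := by
      rw [Real.logb]
      have h0 : 0 ≤ Real.log (t+1) := Real.log_nonneg (by linarith)
      calc Real.log (t+1) / Real.log 2 ≤ Real.log (t+1) / (1/2) :=
            div_le_div_of_nonneg_left h0 (by norm_num) hlog2
        _ = 2 * Real.log (t+1) := by ring
    have hlog_t1 : Real.log (t+1) ≤ Real.log t + 1 := by
      have h1 : Real.log (t+1) ≤ Real.log (2*t) := by
        apply Real.log_le_log (by linarith)
        linarith
      rw [Real.log_mul (by norm_num) (by linarith)] at h1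
      linarith
    have hk''2 : (k'':ℝ) + 1 ≤ 6 * Real.log t := by
      have : (k'':ℝ) + 1 ≤ 2 * (Real.log t + 1) + 2 := by linarith
      linarith
    have h2n1 : (1:ℝ) ≤ 2 ^ n := one_le_pow₀ (by norm_num)
    have hBb : B ≤ 2^(n+3) * Real.log t := by
      rw [hB]
      have h1 : (2:ℝ)^n * ((k'':ℝ) + 1) ≤ 2^n * (6 * Real.log t) :=
        mul_le_mul_of_nonneg_left hk''2 (by positivity)
      have h2 : (2:ℝ)^(n+3) = 8 * 2^n := by rw [pow_add]; ring
      rw [h2]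
      have h4 : 2*(2:ℝ)^n * 1 ≤ 2*2^n*Real.log t :=
        mul_le_mul_of_nonneg_left hlogt1 (by positivity)
      linarith
    have hnn : n - 1 + 1 = n := Nat.sub_add_cancel hn
    have hpl'' : l''^n = l''^(n-1) * l'' := by rw [← pow_succ, hnn]
    have hpl₀ : l₀^n = l₀^(n-1) * l₀ := by rw [← pow_succ, hnn]
    have hpowid : (2:ℝ)^(2*n+3) = 2 * (2^(n+3) * 2^(n-1)) := by
      rw [← pow_add, ← pow_succ']
      congr 1
      omega
    have hdenpos : (0:ℝ) < l''^(n-1) * l'' := by positivity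
    have hnum : (2*(n:ℝ)) * (m:ℝ)^(n-1) * l₀^n * B / l''^n =
        (2*(n:ℝ)*B) * (((m:ℝ)*l₀)^(n-1) * l₀) / (l''^(n-1) * l'') := by
      rw [hpl'', hpl₀, mul_pow]
      ring
    have hmB : (m:ℝ)*l₀ ≤ 2*l'' := by
      have h1 : (m:ℝ) ≤ t + 2 := by rw [hratio] at hmle; linarith
      have h2 : (m:ℝ)*l₀ ≤ (t+2)*l₀ := mul_le_mul_of_nonneg_right h1 hl₀.le
      rw [hl''t]
      have h3 : (t+2)*l₀ ≤ (2*(t+1))*l₀ :=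
        mul_le_mul_of_nonneg_right (by linarith) hl₀.le
      linarith
    have h2nB : (0:ℝ) ≤ 2*(n:ℝ)*B := mul_nonneg (by positivity) hB0
    have hml₀nn : (0:ℝ) ≤ (m:ℝ)*l₀ := by positivity
    have hstep : (2*(n:ℝ)*B) * (((m:ℝ)*l₀)^(n-1) * l₀) / (l''^(n-1) * l'') ≤
        (2*(n:ℝ)*B) * ((2*l'')^(n-1) * l₀) / (l''^(n-1) * l'') := by
      have hpw : ((m:ℝ)*l₀)^(n-1) ≤ (2*l'')^(n-1) := pow_le_pow_left₀ hml₀nn hmB _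
      gcongr
    have heq2 : (2*(n:ℝ)*B) * ((2*l'')^(n-1) * l₀) / (l''^(n-1) * l'') =
        (2*(n:ℝ)*B) * 2^(n-1) * (l₀ / l'') := by
      rw [mul_pow]
      field_simp
    have hstep2 : (2*(n:ℝ)*B) * 2^(n-1) * (l₀ / l'') ≤
        (2*(n:ℝ)*B) * 2^(n-1) * (l₀ / l) := by
      have hdd : l₀ / l'' ≤ l₀ / l := div_le_div_of_nonneg_left hl₀.le hl hll''
      exact mul_le_mul_of_nonneg_left hdd (mul_nonneg h2nB (by positivity))
    have hstep3 : (2*(n:ℝ)*B) * 2^(n-1) * (l₀ / l) ≤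
        (2*(n:ℝ)*(2^(n+3)*Real.log t)) * 2^(n-1) * (l₀ / l) := by
      have h1 : 2*(n:ℝ)*B ≤ 2*n*(2^(n+3)*Real.log t) :=
        mul_le_mul_of_nonneg_left hBb (by positivity)
      exact mul_le_mul_of_nonneg_right (mul_le_mul_of_nonneg_right h1 (by positivity))
        (by positivity)
    have hfinal : (2*(n:ℝ)*(2^(n+3)*Real.log t)) * 2^(n-1) * (l₀ / l) =
        (n * 2^(2*n+3)) * (Real.log t / t) := by
      have hrat : l₀ / l = 1 / t := by
        rw [hlt]; field_simp
      rw [hrat, hpowid]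
      ring
    have hanti : Real.log t / t ≤ Real.log c / c :=
      Real.log_div_self_antitoneOn (show c ∈ {x:ℝ | Real.exp 1 ≤ x} from hc.le)
        (show t ∈ {x:ℝ | Real.exp 1 ≤ x} from hte) htc
    calc (2*(n:ℝ)) * (m:ℝ)^(n-1) * l₀^n * B / l''^n
        = (2*(n:ℝ)*B) * (((m:ℝ)*l₀)^(n-1) * l₀) / (l''^(n-1) * l'') := hnum
      _ ≤ (2*(n:ℝ)*B) * ((2*l'')^(n-1) * l₀) / (l''^(n-1) * l'') := hstep
      _ = (2*(n:ℝ)*B) * 2^(n-1) * (l₀ / l'') := heq2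
      _ ≤ (2*(n:ℝ)*B) * 2^(n-1) * (l₀ / l) := hstep2
      _ ≤ (2*(n:ℝ)*(2^(n+3)*Real.log t)) * 2^(n-1) * (l₀ / l) := hstep3
      _ = (n * 2^(2*n+3)) * (Real.log t / t) := hfinal
      _ ≤ (n * 2^(2*n+3)) * (Real.log c / c) :=
          mul_le_mul_of_nonneg_left hanti (by positivity)
      _ = (n * 2^(2*n+3)) * c⁻¹ * Real.log c := by ring
  have hpow : (0:ℝ) < l'' ^ n := by positivity
  have : fQ - fQ'' ≤ (2*(n:ℝ)) * (m:ℝ)^(n-1) * l₀^n * B / l''^n := by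
    rw [le_div_iff₀ hpow]
    calc (fQ - fQ'') * l'' ^ n = l'' ^ n * (fQ - fQ'') := by ring
      _ = ∫ z in S, (fQ - f z) := step1
      _ ≤ _ := step2
  linarith [step3]

end basics

set_option maxHeartbeats 1000000 in
/-- there is a dimensional constant `C(n)` such that, for every nonnegative
locally integrable `f` with `‖f‖_{BMO(ℝⁿ)} ≤ 1`, every cube `Q₀` of side `l₀ > 0`,
every `c > e`, all `x, y ∈ Q₀`, and every cube `Q ∋ x` with side `l(Q) ≥ c·l₀`, one has
`f_Q − M₂f(y) ≤ C(n) c⁻¹ log c`; consequently, if `M₂f` is finite on `Q₀`, then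
`|M₂f(x) − M₂f(y)| ≤ C(n) c⁻¹ log c` for all `x, y ∈ Q₀`. -/
theorem nonlocal_maximal_oscillation (n : ℕ) (hn : 1 ≤ n) :
    ∃ C : ℝ, 0 < C ∧
      ∀ (f : (Fin n → ℝ) → ℝ), LocallyIntegrable f volume → (∀ x, 0 ≤ f x) →
        bmoN f ≤ 1 →
      ∀ (a₀ : Fin n → ℝ) (l₀ : ℝ), 0 < l₀ →
      ∀ c : ℝ, Real.exp 1 < c →
        ((∀ x ∈ cube a₀ l₀, ∀ y ∈ cube a₀ l₀,
          ∀ (a : Fin n → ℝ) (l : ℝ), c * l₀ ≤ l → x ∈ cube a l →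
            ENNReal.ofReal (⨍ t in cube a l, f t) ≤
              nonlocalMax f c l₀ y + ENNReal.ofReal (C * c⁻¹ * Real.log c)) ∧
        ((∀ z ∈ cube a₀ l₀, nonlocalMax f c l₀ z ≠ ⊤) →
          ∀ x ∈ cube a₀ l₀, ∀ y ∈ cube a₀ l₀,
            |(nonlocalMax f c l₀ x).toReal - (nonlocalMax f c l₀ y).toReal| ≤
              C * c⁻¹ * Real.log c)) := by
  have hn0 : (0:ℝ) < (n:ℝ) := by exact_mod_cast Nat.lt_of_lt_of_le Nat.zero_lt_one hn
  refine ⟨(n:ℝ) * 2 ^ (2*n+3), by positivity, ?_⟩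
  intro f hfl hfnn hbmo a₀ l₀ hl₀ c hc
  have he1 : (1:ℝ) < Real.exp 1 := by
    have h := Real.exp_one_gt_d9; linarith
  have hc1 : (1:ℝ) < c := he1.trans hc
  have hc0 : (0:ℝ) < c := by linarith
  have hlogc : 0 ≤ Real.log c := Real.log_nonneg hc1.le
  have hε0 : 0 ≤ (n:ℝ) * 2 ^ (2*n+3) * c⁻¹ * Real.log c := by positivity
  have hosc : ∀ (p : Fin n → ℝ) (s : ℝ), 0 < s → oscN f (cube p s) ≤ 1 := by
    intro p s hs
    have h1 : ENNReal.ofReal (oscN f (cube p s)) ≤ bmoN f :=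
      le_iSup_of_le p (le_iSup_of_le s (le_iSup_of_le hs le_rfl))
    exact ENNReal.ofReal_le_one.mp (h1.trans hbmo)
  have part1 : ∀ x ∈ cube a₀ l₀, ∀ y ∈ cube a₀ l₀,
      ∀ (a : Fin n → ℝ) (l : ℝ), c * l₀ ≤ l → x ∈ cube a l →
        ENNReal.ofReal (⨍ t in cube a l, f t) ≤
          nonlocalMax f c l₀ y + ENNReal.ofReal ((n:ℝ) * 2 ^ (2*n+3) * c⁻¹ * Real.log c) := by
    intro x hx y hy a l hcl hxa
    have hcore := core_estimate hn hosc hfl hl₀ hc hcl hx hxa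
    have hl : 0 < l := lt_of_lt_of_le (mul_pos hc0 hl₀) hcl
    have hyQ'' : y ∈ cube (fun i => min (a i) (a₀ i)) (l + l₀) := by
      constructor
      · intro i
        show min (a i) (a₀ i) ≤ y i
        exact le_trans (min_le_right _ _) (hy.1 i)
      · intro i
        show y i ≤ min (a i) (a₀ i) + (l + l₀)
        have h1 : y i ≤ a₀ i + l₀ := hy.2 i
        have h2 : a₀ i ≤ min (a i) (a₀ i) + l := by
          have hax1 : a₀ i ≤ x i := hx.1 i
          have hax2 : x i ≤ a i + l := hxa.2 i
          rcases min_cases (a i) (a₀ i) with ⟨h3, _⟩ | ⟨h3, _⟩ <;> rw [h3] <;> linarith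
        linarith
    have hl''c : c * l₀ ≤ l + l₀ := by linarith
    have hm : ENNReal.ofReal (⨍ t in cube (fun i => min (a i) (a₀ i)) (l + l₀), f t) ≤
        nonlocalMax f c l₀ y :=
      le_iSup_of_le (fun i => min (a i) (a₀ i)) (le_iSup_of_le (l + l₀)
        (le_iSup_of_le hl''c (le_iSup_of_le hyQ'' le_rfl)))
    calc ENNReal.ofReal (⨍ t in cube a l, f t) ≤
        ENNReal.ofReal ((⨍ t in cube (fun i => min (a i) (a₀ i)) (l + l₀), f t)
          + (n:ℝ) * 2 ^ (2*n+3) * c⁻¹ * Real.log c) := by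
          apply ENNReal.ofReal_le_ofReal
          calc (⨍ t in cube a l, f t) ≤ _ := hcore
            _ = _ := by ring_nf
      _ ≤ ENNReal.ofReal (⨍ t in cube (fun i => min (a i) (a₀ i)) (l + l₀), f t)
          + ENNReal.ofReal ((n:ℝ) * 2 ^ (2*n+3) * c⁻¹ * Real.log c) :=
          ENNReal.ofReal_add_le
      _ ≤ nonlocalMax f c l₀ y
          + ENNReal.ofReal ((n:ℝ) * 2 ^ (2*n+3) * c⁻¹ * Real.log c) := by
          exact add_le_add hm le_rfl
  refine ⟨part1, ?_⟩
  intro hfin x hx y hy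
  have key : ∀ x' ∈ cube a₀ l₀, ∀ y' ∈ cube a₀ l₀,
      (nonlocalMax f c l₀ x').toReal ≤ (nonlocalMax f c l₀ y').toReal
        + (n:ℝ) * 2 ^ (2*n+3) * c⁻¹ * Real.log c := by
    intro x' hx' y' hy'
    have h1 : nonlocalMax f c l₀ x' ≤ nonlocalMax f c l₀ y'
        + ENNReal.ofReal ((n:ℝ) * 2 ^ (2*n+3) * c⁻¹ * Real.log c) := by
      rw [nonlocalMax]
      apply iSup_le; intro a
      apply iSup_le; intro l
      apply iSup_le; intro hcl
      apply iSup_le; intro hmem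
      exact part1 x' hx' y' hy' a l hcl hmem
    have h2 : nonlocalMax f c l₀ y'
        + ENNReal.ofReal ((n:ℝ) * 2 ^ (2*n+3) * c⁻¹ * Real.log c) ≠ ⊤ :=
      ENNReal.add_ne_top.2 ⟨hfin y' hy', ENNReal.ofReal_ne_top⟩
    have h3 := ENNReal.toReal_mono h2 h1
    rwa [ENNReal.toReal_add (hfin y' hy') ENNReal.ofReal_ne_top,
      ENNReal.toReal_ofReal hε0] at h3
  rw [abs_sub_le_iff]
  constructor
  · linarith [key x hx y hy]
  · linarith [key y hy x hx]
end

section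
/- There exist absolute constants 0 < C₁ ≤ C₂ such that for all measurable sets A, B ⊂ ℝ with 0 < |A| < ∞ and 0 < |B| < ∞ and every measurable f : ℝ² → ℝ that is integrable on A × B, one has C₁ (S₁ + S₂) ≤ O(f, A×B) ≤ C₂ (S₁ + S₂), where S₁ = (1/|B|) ∫_B O(f(·,y), A) dy and S₂ = (1/|A|) ∫_A O(f(x,·), B) dx. -/
open MeasureTheory Set Filter
open scoped ENNReal Topology

set_option linter.unusedSectionVars false

lemma avg_abs_nonneg {α : Type*} [MeasurableSpace α] (μ : Measure α) (g : α → ℝ) :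
    0 ≤ ⨍ x, |g x| ∂μ := by
  rw [average_eq, smul_eq_mul]
  exact mul_nonneg (by positivity) (integral_nonneg fun x => abs_nonneg _)

lemma abs_int_le {α : Type*} [MeasurableSpace α] (μ : Measure α) (g : α → ℝ) :
    |∫ x, g x ∂μ| ≤ ∫ x, |g x| ∂μ := by
  simpa [Real.norm_eq_abs] using norm_integral_le_integral_norm (μ := μ) g

lemma osc_le_two_avg {α : Type*} [MeasurableSpace α] (μ : Measure α) [IsFiniteMeasure μ]
    {g : α → ℝ} (hg : AEStronglyMeasurable g μ) (c : ℝ) :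
    ⨍ x, |g x - ⨍ y, g y ∂μ| ∂μ ≤ 2 * ⨍ x, |g x - c| ∂μ := by
  rcases eq_or_ne μ 0 with rfl | hμ0
  · simp [average]
  by_cases hgi : Integrable g μ
  · set m := ⨍ y, g y ∂μ with hm
    set t := (μ univ).toReal with ht
    have ht0 : 0 < t := ENNReal.toReal_pos (Measure.measure_univ_ne_zero.mpr hμ0)
      (measure_ne_top μ _)
    have hgc : Integrable (fun x => |g x - c|) μ := (hgi.sub (integrable_const c)).abs
    have hgm : Integrable (fun x => |g x - m|) μ := (hgi.sub (integrable_const m)).abs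
    have hmc : |m - c| ≤ t⁻¹ * ∫ x, |g x - c| ∂μ := by
      have h1 : m - c = t⁻¹ * ∫ x, (g x - c) ∂μ := by
        rw [integral_sub hgi (integrable_const c), integral_const, smul_eq_mul, hm,
          average_eq, smul_eq_mul, measureReal_def, ← ht]
        field_simp
      rw [h1, abs_mul, abs_of_nonneg (by positivity : (0:ℝ) ≤ t⁻¹)]
      gcongr
      exact abs_int_le μ _
    have hint : ∫ x, |g x - m| ∂μ ≤ ∫ x, |g x - c| ∂μ + t * |m - c| := by
      calc ∫ x, |g x - m| ∂μ ≤ ∫ x, (|g x - c| + |m - c|) ∂μ := by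
            refine integral_mono hgm (hgc.add (integrable_const _)) fun x => ?_
            simpa [abs_sub_comm c m] using abs_sub_le (g x) c m
        _ = ∫ x, |g x - c| ∂μ + t * |m - c| := by
            rw [integral_add hgc (integrable_const _), integral_const, smul_eq_mul, measureReal_def, ← ht]
    have h2 : ∫ x, |g x - m| ∂μ ≤ 2 * ∫ x, |g x - c| ∂μ := by
      have h3 : t * |m - c| ≤ ∫ x, |g x - c| ∂μ := by
        have := mul_le_mul_of_nonneg_left hmc ht0.le
        rwa [← mul_assoc, mul_inv_cancel₀ ht0.ne', one_mul] at this
      linarith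
    rw [average_eq, average_eq, smul_eq_mul, smul_eq_mul, measureReal_def, ← ht]
    calc t⁻¹ * ∫ x, |g x - m| ∂μ ≤ t⁻¹ * (2 * ∫ x, |g x - c| ∂μ) := by
          gcongr
      _ = 2 * (t⁻¹ * ∫ x, |g x - c| ∂μ) := by ring
  · have hnot : ¬ Integrable (fun x => |g x - ⨍ y, g y ∂μ|) μ := by
      intro h
      apply hgi
      have hsm : AEStronglyMeasurable (fun x => g x - ⨍ y, g y ∂μ) μ :=
        hg.sub aestronglyMeasurable_const
      have h2 : Integrable (fun x => g x - ⨍ y, g y ∂μ) μ := by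
        rw [← integrable_norm_iff hsm]
        simpa [Real.norm_eq_abs] using h
      have h4 : Integrable (fun x => (g x - ⨍ y, g y ∂μ) + ⨍ y, g y ∂μ) μ :=
        h2.add (integrable_const _)
      have h5 : (fun x => (g x - ⨍ y, g y ∂μ) + ⨍ y, g y ∂μ) = g := by
        funext x; ring
      rwa [h5] at h4
    rw [average_eq, integral_undef hnot]
    simpa using mul_nonneg (by norm_num : (0:ℝ) ≤ 2) (avg_abs_nonneg μ (fun x => g x - c))

section
variable {α β : Type*} [MeasurableSpace α] [MeasurableSpace β]
  (μ : Measure α) (ν : Measure β) [IsFiniteMeasure μ] [IsFiniteMeasure ν]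

lemma int_comp_snd {g : β → ℝ} (h : Integrable g ν) :
    Integrable (fun p : α × β => g p.2) (μ.prod ν) := by
  have h1 : Integrable g ((μ univ) • ν) := h.smul_measure (measure_ne_top μ univ)
  rw [← Measure.map_snd_prod] at h1
  exact (integrable_map_measure h1.aestronglyMeasurable measurable_snd.aemeasurable).mp h1

lemma int_comp_fst {g : α → ℝ} (h : Integrable g μ) :
    Integrable (fun p : α × β => g p.1) (μ.prod ν) := by
  have h1 : Integrable g ((ν univ) • μ) := h.smul_measure (measure_ne_top ν univ)
  rw [← Measure.map_fst_prod] at h1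
  exact (integrable_map_measure h1.aestronglyMeasurable measurable_fst.aemeasurable).mp h1

lemma integral_comp_snd {g : β → ℝ} (h : Integrable g ν) :
    ∫ p : α × β, g p.2 ∂(μ.prod ν) = (μ univ).toReal * ∫ y, g y ∂ν := by
  have h1 : Integrable g ((μ univ) • ν) := h.smul_measure (measure_ne_top μ univ)
  rw [← Measure.map_snd_prod] at h1
  rw [← integral_map measurable_snd.aemeasurable h1.aestronglyMeasurable,
    Measure.map_snd_prod, integral_smul_measure, smul_eq_mul]

end

/-- Mean oscillation of `f : ℝ → ℝ` over `A ⊆ ℝ`. -/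
noncomputable def osc1 (f : ℝ → ℝ) (A : Set ℝ) : ℝ :=
  ⨍ x in A, |f x - ⨍ y in A, f y|

/-- Mean oscillation of `f : ℝ × ℝ → ℝ` over `E ⊆ ℝ²`. -/
noncomputable def osc2 (f : ℝ × ℝ → ℝ) (E : Set (ℝ × ℝ)) : ℝ :=
  ⨍ p in E, |f p - ⨍ q in E, f q|

/-- there are absolute constants `0 < C₁ ≤ C₂` such that for all measurable
`A, B ⊆ ℝ` of positive finite measure and every measurable `f : ℝ² → ℝ` integrable on
`A × B`, the mean oscillation `O(f, A × B)` is comparable to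
`(1/|B|)∫_B O(f(·,y), A) dy + (1/|A|)∫_A O(f(x,·), B) dx`. -/
theorem osc_product_slices :
    ∃ C₁ C₂ : ℝ, 0 < C₁ ∧ C₁ ≤ C₂ ∧
      ∀ (A B : Set ℝ), MeasurableSet A → MeasurableSet B →
        0 < volume A → volume A ≠ ⊤ → 0 < volume B → volume B ≠ ⊤ →
      ∀ f : ℝ × ℝ → ℝ, Measurable f → IntegrableOn f (A ×ˢ B) volume →
        C₁ * ((⨍ y in B, osc1 (fun t => f (t, y)) A) +
              (⨍ x in A, osc1 (fun t => f (x, t)) B)) ≤ osc2 f (A ×ˢ B) ∧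
        osc2 f (A ×ˢ B) ≤
          C₂ * ((⨍ y in B, osc1 (fun t => f (t, y)) A) +
                (⨍ x in A, osc1 (fun t => f (x, t)) B)) := by
  refine ⟨1/4, 1, by norm_num, by norm_num, ?_⟩
  intro A B hA hB hA0 hAt hB0 hBt f hf hfi
  simp only [osc1, osc2]
  set μ := volume.restrict A with hμdef
  set ν := volume.restrict B with hνdef
  haveI : IsFiniteMeasure μ := ⟨by rw [hμdef, Measure.restrict_apply_univ]; exact hAt.lt_top⟩
  haveI : IsFiniteMeasure ν := ⟨by rw [hνdef, Measure.restrict_apply_univ]; exact hBt.lt_top⟩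
  have hprod : (volume : Measure (ℝ × ℝ)).restrict (A ×ˢ B) = μ.prod ν := by
    rw [hμdef, hνdef, Measure.prod_restrict, ← Measure.volume_eq_prod]
  rw [hprod]
  have hμu : μ univ = volume A := by rw [hμdef, Measure.restrict_apply_univ]
  have hνu : ν univ = volume B := by rw [hνdef, Measure.restrict_apply_univ]
  set ta := (μ univ).toReal with hta
  set tb := (ν univ).toReal with htb
  have hta0 : 0 < ta := by
    rw [hta, hμu]; exact ENNReal.toReal_pos hA0.ne' hAt
  have htb0 : 0 < tb := by
    rw [htb, hνu]; exact ENNReal.toReal_pos hB0.ne' hBt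
  have hfi' : Integrable f (μ.prod ν) := by rw [← hprod]; exact hfi
  have htab : ((μ.prod ν) univ).toReal = ta * tb := by
    rw [← univ_prod_univ, Measure.prod_prod, ENNReal.toReal_mul]
  set M := ⨍ q, f q ∂(μ.prod ν) with hMdef
  have hg : Integrable (fun p => |f p - M|) (μ.prod ν) := (hfi'.sub (integrable_const M)).abs
  set J := ∫ p, |f p - M| ∂(μ.prod ν) with hJdef
  set m : ℝ → ℝ := fun y => ⨍ x, f (x, y) ∂μ with hmdef
  set n : ℝ → ℝ := fun x => ⨍ y, f (x, y) ∂ν with hndef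
  have hslicem : ∀ y : ℝ, AEStronglyMeasurable (fun x => f (x, y)) μ := fun y =>
    (hf.comp (measurable_id.prodMk measurable_const)).aestronglyMeasurable
  have hslicen : ∀ x : ℝ, AEStronglyMeasurable (fun y => f (x, y)) ν := fun x =>
    (hf.comp (measurable_const.prodMk measurable_id)).aestronglyMeasurable
  have hmy : ∀ y : ℝ, m y = ta⁻¹ * ∫ x, f (x, y) ∂μ := fun y => by
    simp only [hmdef]; rw [average_eq, smul_eq_mul, measureReal_def]
  have hnx : ∀ x : ℝ, n x = tb⁻¹ * ∫ y, f (x, y) ∂ν := fun x => by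
    simp only [hndef]; rw [average_eq, smul_eq_mul, measureReal_def]
  have hm : Integrable m ν := by
    have h1 : m = fun y => ta⁻¹ * ∫ x, f (x, y) ∂μ := funext hmy
    rw [h1]
    exact hfi'.integral_prod_right.const_mul _
  have hn : Integrable n μ := by
    have h1 : n = fun x => tb⁻¹ * ∫ y, f (x, y) ∂ν := funext hnx
    rw [h1]
    exact hfi'.integral_prod_left.const_mul _
  set Z := ⨍ p, |f p - M| ∂(μ.prod ν) with hZdef
  have hZJ : Z = (ta * tb)⁻¹ * J := by
    rw [hZdef, average_eq, smul_eq_mul, measureReal_def, htab, hJdef]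
  have hJsymm : J = ∫ y, ∫ x, |f (x, y) - M| ∂μ ∂ν := integral_prod_symm _ hg
  have hJprod : J = ∫ x, ∫ y, |f (x, y) - M| ∂ν ∂μ := integral_prod _ hg
  -- lower bound pieces
  have key1 : (⨍ y, ⨍ x, |f (x, y) - ⨍ x', f (x', y) ∂μ| ∂μ ∂ν) ≤ 2 * Z := by
    have hmono : ∫ y, (⨍ x, |f (x, y) - ⨍ x', f (x', y) ∂μ| ∂μ) ∂ν ≤
        ∫ y, 2 * (ta⁻¹ * ∫ x, |f (x, y) - M| ∂μ) ∂ν := by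
      refine integral_mono_of_nonneg (Eventually.of_forall fun y => avg_abs_nonneg μ _)
        ((hg.integral_prod_right.const_mul _).const_mul 2)
        (Eventually.of_forall fun y => ?_)
      have h := osc_le_two_avg μ (hslicem y) M
      have h2 : (⨍ x, |f (x, y) - M| ∂μ) = ta⁻¹ * ∫ x, |f (x, y) - M| ∂μ := by
        rw [average_eq, smul_eq_mul, measureReal_def]
      exact h.trans (le_of_eq (by rw [h2]))
    have hcalc : ∫ y, 2 * (ta⁻¹ * ∫ x, |f (x, y) - M| ∂μ) ∂ν = 2 * (ta⁻¹ * J) := by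
      rw [integral_const_mul, integral_const_mul, ← hJsymm]
    rw [average_eq, smul_eq_mul, hZJ]
    calc tb⁻¹ * ∫ y, (⨍ x, |f (x, y) - ⨍ x', f (x', y) ∂μ| ∂μ) ∂ν
        ≤ tb⁻¹ * (2 * (ta⁻¹ * J)) := by
          rw [← hcalc]; exact mul_le_mul_of_nonneg_left hmono (by positivity)
      _ = 2 * ((ta * tb)⁻¹ * J) := by rw [mul_inv]; ring
  have key2 : (⨍ x, ⨍ y, |f (x, y) - ⨍ y', f (x, y') ∂ν| ∂ν ∂μ) ≤ 2 * Z := by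
    have hmono : ∫ x, (⨍ y, |f (x, y) - ⨍ y', f (x, y') ∂ν| ∂ν) ∂μ ≤
        ∫ x, 2 * (tb⁻¹ * ∫ y, |f (x, y) - M| ∂ν) ∂μ := by
      refine integral_mono_of_nonneg (Eventually.of_forall fun x => avg_abs_nonneg ν _)
        ((hg.integral_prod_left.const_mul _).const_mul 2)
        (Eventually.of_forall fun x => ?_)
      have h := osc_le_two_avg ν (hslicen x) M
      have h2 : (⨍ y, |f (x, y) - M| ∂ν) = tb⁻¹ * ∫ y, |f (x, y) - M| ∂ν := by
        rw [average_eq, smul_eq_mul, measureReal_def]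
      exact h.trans (le_of_eq (by rw [h2]))
    have hcalc : ∫ x, 2 * (tb⁻¹ * ∫ y, |f (x, y) - M| ∂ν) ∂μ = 2 * (tb⁻¹ * J) := by
      rw [integral_const_mul, integral_const_mul, ← hJprod]
    rw [average_eq, smul_eq_mul, hZJ]
    calc ta⁻¹ * ∫ x, (⨍ y, |f (x, y) - ⨍ y', f (x, y') ∂ν| ∂ν) ∂μ
        ≤ ta⁻¹ * (2 * (tb⁻¹ * J)) := by
          rw [← hcalc]; exact mul_le_mul_of_nonneg_left hmono (by positivity)
      _ = 2 * ((ta * tb)⁻¹ * J) := by rw [mul_inv]; ring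
  -- upper bound
  have hmsnd : Integrable (fun p : ℝ × ℝ => m p.2) (μ.prod ν) := int_comp_snd μ ν hm
  have hnfst : Integrable (fun p : ℝ × ℝ => n p.1) (μ.prod ν) := int_comp_fst μ ν hn
  have hfm : Integrable (fun p : ℝ × ℝ => |f p - m p.2|) (μ.prod ν) := (hfi'.sub hmsnd).abs
  have hmM : Integrable (fun p : ℝ × ℝ => |m p.2 - M|) (μ.prod ν) :=
    int_comp_snd μ ν ((hm.sub (integrable_const M)).abs)
  have hfn : Integrable (fun p : ℝ × ℝ => |f p - n p.1|) (μ.prod ν) := (hfi'.sub hnfst).abs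
  have hJle : J ≤ (∫ p, |f p - m p.2| ∂(μ.prod ν)) + ∫ p, |m p.2 - M| ∂(μ.prod ν) := by
    rw [hJdef, ← integral_add hfm hmM]
    exact integral_mono hg (hfm.add hmM) fun p => abs_sub_le (f p) (m p.2) M
  have hJ1 : ∫ p, |f p - m p.2| ∂(μ.prod ν) =
      ta * ∫ y, (⨍ x, |f (x, y) - ⨍ x', f (x', y) ∂μ| ∂μ) ∂ν := by
    have h0 : ∫ p, |f p - m p.2| ∂(μ.prod ν) = ∫ y, ∫ x, |f (x, y) - m y| ∂μ ∂ν :=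
      integral_prod_symm _ hfm
    rw [h0, ← integral_const_mul]
    refine integral_congr_ae (Eventually.of_forall fun y => ?_)
    have h2 : (⨍ x, |f (x, y) - ⨍ x', f (x', y) ∂μ| ∂μ) =
        ta⁻¹ * ∫ x, |f (x, y) - m y| ∂μ := by
      rw [average_eq, smul_eq_mul, measureReal_def]
    show ∫ x, |f (x, y) - m y| ∂μ = ta * ⨍ x, |f (x, y) - ⨍ x', f (x', y) ∂μ| ∂μ
    rw [h2, ← mul_assoc, mul_inv_cancel₀ hta0.ne', one_mul]
  have hMn : M = ta⁻¹ * ∫ x, n x ∂μ := by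
    have h1 : ∫ x, n x ∂μ = tb⁻¹ * ∫ x, (∫ y, f (x, y) ∂ν) ∂μ := by
      rw [← integral_const_mul]
      exact integral_congr_ae (Eventually.of_forall fun x => hnx x)
    rw [hMdef, average_eq, smul_eq_mul, measureReal_def, htab, integral_prod _ hfi', h1, mul_inv]
    ring
  have hJ2 : ∫ p, |m p.2 - M| ∂(μ.prod ν) ≤
      tb * ∫ x, (⨍ y, |f (x, y) - ⨍ y', f (x, y') ∂ν| ∂ν) ∂μ := by
    have hae : ∀ᵐ y ∂ν, |m y - M| ≤ ta⁻¹ * ∫ x, |f (x, y) - n x| ∂μ := by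
      filter_upwards [hfi'.prod_left_ae] with y hy
      have h1 : m y - M = ta⁻¹ * ∫ x, (f (x, y) - n x) ∂μ := by
        rw [hmy y, hMn, integral_sub hy hn, mul_sub]
      rw [h1, abs_mul, abs_of_nonneg (by positivity : (0:ℝ) ≤ ta⁻¹)]
      exact mul_le_mul_of_nonneg_left (abs_int_le μ _) (by positivity)
    have hstep1 : ∫ p, |m p.2 - M| ∂(μ.prod ν) = ta * ∫ y, |m y - M| ∂ν :=
      integral_comp_snd μ ν ((hm.sub (integrable_const M)).abs)
    have hfnsymm : ∫ p, |f p - n p.1| ∂(μ.prod ν) = ∫ y, ∫ x, |f (x, y) - n x| ∂μ ∂ν :=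
      integral_prod_symm _ hfn
    have hstep2 : ∫ y, |m y - M| ∂ν ≤ ta⁻¹ * ∫ p, |f p - n p.1| ∂(μ.prod ν) := by
      have h2 : ∫ y, |m y - M| ∂ν ≤ ∫ y, ta⁻¹ * ∫ x, |f (x, y) - n x| ∂μ ∂ν :=
        integral_mono_of_nonneg (Eventually.of_forall fun y => abs_nonneg _)
          (hfn.integral_prod_right.const_mul _) hae
      rw [hfnsymm]
      rwa [integral_const_mul] at h2
    have hstep3 : ∫ p, |f p - n p.1| ∂(μ.prod ν) =
        tb * ∫ x, (⨍ y, |f (x, y) - ⨍ y', f (x, y') ∂ν| ∂ν) ∂μ := by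
      have h0 : ∫ p, |f p - n p.1| ∂(μ.prod ν) = ∫ x, ∫ y, |f (x, y) - n x| ∂ν ∂μ :=
        integral_prod _ hfn
      rw [h0, ← integral_const_mul]
      refine integral_congr_ae (Eventually.of_forall fun x => ?_)
      have h2 : (⨍ y, |f (x, y) - ⨍ y', f (x, y') ∂ν| ∂ν) =
          tb⁻¹ * ∫ y, |f (x, y) - n x| ∂ν := by
        rw [average_eq, smul_eq_mul, measureReal_def]
      show ∫ y, |f (x, y) - n x| ∂ν = tb * ⨍ y, |f (x, y) - ⨍ y', f (x, y') ∂ν| ∂ν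
      rw [h2, ← mul_assoc, mul_inv_cancel₀ htb0.ne', one_mul]
    calc ∫ p, |m p.2 - M| ∂(μ.prod ν) = ta * ∫ y, |m y - M| ∂ν := hstep1
      _ ≤ ta * (ta⁻¹ * ∫ p, |f p - n p.1| ∂(μ.prod ν)) :=
          mul_le_mul_of_nonneg_left hstep2 hta0.le
      _ = ∫ p, |f p - n p.1| ∂(μ.prod ν) := by
          rw [← mul_assoc, mul_inv_cancel₀ hta0.ne', one_mul]
      _ = tb * ∫ x, (⨍ y, |f (x, y) - ⨍ y', f (x, y') ∂ν| ∂ν) ∂μ := hstep3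
  have key3 : Z ≤ (⨍ y, ⨍ x, |f (x, y) - ⨍ x', f (x', y) ∂μ| ∂μ ∂ν) +
      (⨍ x, ⨍ y, |f (x, y) - ⨍ y', f (x, y') ∂ν| ∂ν ∂μ) := by
    have hfinal : J ≤ ta * ∫ y, (⨍ x, |f (x, y) - ⨍ x', f (x', y) ∂μ| ∂μ) ∂ν +
        tb * ∫ x, (⨍ y, |f (x, y) - ⨍ y', f (x, y') ∂ν| ∂ν) ∂μ := by
      calc J ≤ (∫ p, |f p - m p.2| ∂(μ.prod ν)) + ∫ p, |m p.2 - M| ∂(μ.prod ν) := hJle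
        _ ≤ ta * ∫ y, (⨍ x, |f (x, y) - ⨍ x', f (x', y) ∂μ| ∂μ) ∂ν +
            tb * ∫ x, (⨍ y, |f (x, y) - ⨍ y', f (x, y') ∂ν| ∂ν) ∂μ := by
          rw [hJ1]; exact add_le_add le_rfl hJ2
    have e1 : (⨍ y, (⨍ x, |f (x, y) - ⨍ x', f (x', y) ∂μ| ∂μ) ∂ν) =
        tb⁻¹ * ∫ y, (⨍ x, |f (x, y) - ⨍ x', f (x', y) ∂μ| ∂μ) ∂ν := by
      rw [average_eq, smul_eq_mul, measureReal_def]
    have e2 : (⨍ x, (⨍ y, |f (x, y) - ⨍ y', f (x, y') ∂ν| ∂ν) ∂μ) =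
        ta⁻¹ * ∫ x, (⨍ y, |f (x, y) - ⨍ y', f (x, y') ∂ν| ∂ν) ∂μ := by
      rw [average_eq, smul_eq_mul, measureReal_def]
    rw [hZJ, e1, e2]
    calc (ta * tb)⁻¹ * J
        ≤ (ta * tb)⁻¹ * (ta * ∫ y, (⨍ x, |f (x, y) - ⨍ x', f (x', y) ∂μ| ∂μ) ∂ν +
          tb * ∫ x, (⨍ y, |f (x, y) - ⨍ y', f (x, y') ∂ν| ∂ν) ∂μ) :=
          mul_le_mul_of_nonneg_left hfinal (by positivity)
      _ = tb⁻¹ * ∫ y, (⨍ x, |f (x, y) - ⨍ x', f (x', y) ∂μ| ∂μ) ∂ν +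
          ta⁻¹ * ∫ x, (⨍ y, |f (x, y) - ⨍ y', f (x, y') ∂ν| ∂ν) ∂μ := by
          field_simp
  constructor
  · linarith [key1, key2]
  · linarith [key3]
end

section
/- There exist absolute constants 0 < C₁ ≤ C₂ such that for all locally integrable φ, ψ : ℝ → ℝ, the function f(x,y) = φ(x)ψ(y) satisfies C₁·S ≤ ‖f‖_{BMO(ℝ²)} ≤ C₂·S (as an equality of values in [0,∞]), where S = sup_{δ>0} [ (sup_{|I|=δ} (1/|I|)∫_I |φ|) · (sup_{|J|=δ} O(ψ,J)) + (sup_{|I|=δ} O(φ,I)) · (sup_{|J|=δ} (1/|J|)∫_J |ψ|) ], the inner suprema being over closed intervals I, J of length δ. -/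
open MeasureTheory Set Filter
open scoped ENNReal Topology

/-- BMO(ℝ²) seminorm: supremum of mean oscillations over closed axis-parallel squares
of positive side length. -/
noncomputable def bmo2 (f : ℝ × ℝ → ℝ) : ℝ≥0∞ :=
  ⨆ (a : ℝ) (b : ℝ) (l : ℝ) (_ : 0 < l),
    ENNReal.ofReal (osc2 f (Icc a (a + l) ×ˢ Icc b (b + l)))

lemma volIcc (a δ : ℝ) (hδ : 0 ≤ δ) : volume (Icc a (a+δ)) = ENNReal.ofReal δ := by
  rw [Real.volume_Icc]; simp

lemma finIcc (a δ : ℝ) : IsFiniteMeasure (volume.restrict (Icc a (a+δ))) := by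
  constructor
  rw [Measure.restrict_apply_univ]
  exact isCompact_Icc.measure_lt_top

lemma avgIcc (a δ : ℝ) (hδ : 0 < δ) (f : ℝ → ℝ) :
    ⨍ x in Icc a (a+δ), f x = δ⁻¹ * ∫ x in Icc a (a+δ), f x := by
  rw [setAverage_eq, measureReal_def, volIcc a δ hδ.le, ENNReal.toReal_ofReal hδ.le, smul_eq_mul]

lemma avgProd (a b δ : ℝ) (hδ : 0 < δ) (F : ℝ × ℝ → ℝ) :
    ⨍ p in Icc a (a+δ) ×ˢ Icc b (b+δ), F p
      = δ⁻¹ * (δ⁻¹ * ∫ p, F p ∂((volume.restrict (Icc a (a+δ))).prod (volume.restrict (Icc b (b+δ))))) := by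
  rw [setAverage_eq, measureReal_def, Measure.volume_eq_prod, Measure.prod_prod, ← Measure.prod_restrict,
    volIcc a δ hδ.le, volIcc b δ hδ.le, ← ENNReal.ofReal_mul hδ.le,
    ENNReal.toReal_ofReal (by positivity), smul_eq_mul, mul_inv]
  ring

lemma avg_nonneg'' {α : Type*} [MeasurableSpace α] (μ : Measure α) (f : α → ℝ)
    (h : ∀ x, 0 ≤ f x) : 0 ≤ ⨍ x, f x ∂μ := by
  rw [average_eq']; exact integral_nonneg h

lemma osc1_nonneg (f : ℝ → ℝ) (A : Set ℝ) : 0 ≤ osc1 f A :=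
  avg_nonneg'' _ _ fun _ => abs_nonneg _

lemma osc2_nonneg (f : ℝ × ℝ → ℝ) (E : Set (ℝ × ℝ)) : 0 ≤ osc2 f E :=
  avg_nonneg'' _ _ fun _ => abs_nonneg _

lemma avgabs_nonneg (f : ℝ → ℝ) (A : Set ℝ) : 0 ≤ ⨍ t in A, |f t| :=
  avg_nonneg'' _ _ fun _ => abs_nonneg _

lemma point_ineq (b δ : ℝ) (hδ : 0 < δ) (ψ : ℝ → ℝ)
    (hψ : IntegrableOn ψ (Icc b (b+δ))) (c t : ℝ) :
    |t| * osc1 ψ (Icc b (b+δ)) ≤ 2 * (δ⁻¹ * ∫ y in Icc b (b+δ), |t * ψ y - c|) := by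
  set J := Icc b (b+δ) with hJ
  have hJfin : volume J < ⊤ := by rw [volIcc b δ hδ.le]; exact ENNReal.ofReal_lt_top
  have hnn : 0 ≤ ∫ y in J, |t * ψ y - c| := integral_nonneg fun y => abs_nonneg _
  rcases eq_or_ne t 0 with rfl | ht
  · simp only [abs_zero, zero_mul]
    positivity
  set cψ := ⨍ y in J, ψ y with hcψ
  set c' := c / t with hc'
  have hcint : ∀ r : ℝ, IntegrableOn (fun y => |ψ y - r|) J :=
    fun r => (hψ.sub (integrableOn_const (ne_of_lt hJfin))).abs
  -- δ * |c' - cψ| ≤ ∫ |ψ - c'|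
  have hconst : ∫ y in J, (c' : ℝ) = δ * c' := by
    rw [setIntegral_const, measureReal_def, volIcc b δ hδ.le, ENNReal.toReal_ofReal hδ.le, smul_eq_mul]
  have hsub : ∫ y in J, (c' - ψ y) = δ * (c' - cψ) := by
    rw [integral_sub (integrableOn_const (C := c') (ne_of_lt hJfin)) hψ, hconst, hcψ, avgIcc b δ hδ]
    field_simp
    ring
  have habs1 : δ * |c' - cψ| ≤ ∫ y in J, |ψ y - c'| := by
    have h1 : |∫ y in J, (c' - ψ y)| ≤ ∫ y in J, |c' - ψ y| := by
      simpa [Real.norm_eq_abs] using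
        norm_integral_le_integral_norm (μ := volume.restrict J) (fun y => c' - ψ y)
    rw [hsub, abs_mul, abs_of_pos hδ] at h1
    calc δ * |c' - cψ| ≤ ∫ y in J, |c' - ψ y| := h1
      _ = ∫ y in J, |ψ y - c'| := by simp_rw [abs_sub_comm]
  have h2 : ∫ y in J, |ψ y - cψ| ≤ 2 * ∫ y in J, |ψ y - c'| := by
    have hmono : ∫ y in J, |ψ y - cψ| ≤ ∫ y in J, (|ψ y - c'| + |c' - cψ|) := by
      refine integral_mono (hcint cψ) ((hcint c').add (integrableOn_const (ne_of_lt hJfin)))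
        fun y => ?_
      calc |ψ y - cψ| = |(ψ y - c') + (c' - cψ)| := by ring_nf
        _ ≤ |ψ y - c'| + |c' - cψ| := abs_add_le _ _
    have hadd : ∫ y in J, (|ψ y - c'| + |c' - cψ|)
        = (∫ y in J, |ψ y - c'|) + δ * |c' - cψ| := by
      rw [integral_add (hcint c') (integrableOn_const (ne_of_lt hJfin)), setIntegral_const, measureReal_def,
        volIcc b δ hδ.le, ENNReal.toReal_ofReal hδ.le, smul_eq_mul]
    linarith
  -- pull |t| inside
  have h3 : |t| * ∫ y in J, |ψ y - c'| = ∫ y in J, |t * ψ y - c| := by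
    rw [← integral_const_mul]
    refine integral_congr_ae (Filter.Eventually.of_forall fun y => ?_)
    show |t| * |ψ y - c'| = |t * ψ y - c|
    rw [← abs_mul, mul_sub, mul_div_cancel₀ c ht]
  have h4 : osc1 ψ J = δ⁻¹ * ∫ y in J, |ψ y - cψ| := by
    rw [osc1, avgIcc b δ hδ]
  rw [h4, ← h3]
  have := mul_le_mul_of_nonneg_left h2 (abs_nonneg t)
  have hδi : (0:ℝ) < δ⁻¹ := by positivity
  nlinarith [this, hδi]


section Core
variable {a b δ : ℝ} (hδ : 0 < δ) {φ ψ : ℝ → ℝ}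

lemma lower1 (hδ : 0 < δ) (hφ : IntegrableOn φ (Icc a (a+δ)))
    (hψ : IntegrableOn ψ (Icc b (b+δ))) :
    (⨍ t in Icc a (a+δ), |φ t|) * osc1 ψ (Icc b (b+δ))
      ≤ 2 * osc2 (fun p => φ p.1 * ψ p.2) (Icc a (a+δ) ×ˢ Icc b (b+δ)) := by
  set I := Icc a (a+δ) with hI
  set J := Icc b (b+δ) with hJb
  haveI := finIcc a δ
  haveI := finIcc b δ
  set π := (volume.restrict I).prod (volume.restrict J) with hπ
  set c : ℝ := ⨍ q in I ×ˢ J, φ q.1 * ψ q.2 with hc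
  have hF : Integrable (fun z : ℝ × ℝ => φ z.1 * ψ z.2) π := hφ.mul_prod hψ
  have hFt : Integrable (fun z : ℝ × ℝ => |φ z.1 * ψ z.2 - c|) π :=
    (hF.sub (integrable_const c)).abs
  have hosc : osc2 (fun p => φ p.1 * ψ p.2) (I ×ˢ J)
      = δ⁻¹ * (δ⁻¹ * ∫ z, |φ z.1 * ψ z.2 - c| ∂π) := by
    rw [osc2, ← hc, avgProd a b δ hδ (fun p => |φ p.1 * ψ p.2 - c|), ← hπ]
  have hfub : ∫ z, |φ z.1 * ψ z.2 - c| ∂π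
      = ∫ x in I, ∫ y in J, |φ x * ψ y - c| := by
    rw [hπ]
    exact integral_prod _ hFt
  have hgint : Integrable (fun x => ∫ y in J, |φ x * ψ y - c|) (volume.restrict I) :=
    hFt.integral_prod_left
  have hmono : ∫ x in I, (|φ x| * osc1 ψ J)
      ≤ ∫ x in I, (2 * (δ⁻¹ * ∫ y in J, |φ x * ψ y - c|)) := by
    refine integral_mono (hφ.abs.mul_const _) (((hgint.const_mul δ⁻¹)).const_mul 2)
      fun x => ?_
    exact point_ineq b δ hδ ψ hψ c (φ x)
  have hLHS : (⨍ t in I, |φ t|) * osc1 ψ J = δ⁻¹ * ∫ x in I, (|φ x| * osc1 ψ J) := by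
    rw [avgIcc a δ hδ, integral_mul_const]
    ring
  have hRHS : ∫ x in I, (2 * (δ⁻¹ * ∫ y in J, |φ x * ψ y - c|))
      = 2 * (δ⁻¹ * ∫ x in I, ∫ y in J, |φ x * ψ y - c|) := by
    rw [integral_const_mul, integral_const_mul]
  rw [hLHS, hosc, hfub]
  have hδi : (0:ℝ) ≤ δ⁻¹ := by positivity
  calc δ⁻¹ * ∫ x in I, (|φ x| * osc1 ψ J)
      ≤ δ⁻¹ * ∫ x in I, (2 * (δ⁻¹ * ∫ y in J, |φ x * ψ y - c|)) :=
        mul_le_mul_of_nonneg_left hmono hδi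
    _ = 2 * (δ⁻¹ * (δ⁻¹ * ∫ x in I, ∫ y in J, |φ x * ψ y - c|)) := by rw [hRHS]; ring

lemma lower2 (hδ : 0 < δ) (hφ : IntegrableOn φ (Icc a (a+δ)))
    (hψ : IntegrableOn ψ (Icc b (b+δ))) :
    osc1 φ (Icc a (a+δ)) * (⨍ t in Icc b (b+δ), |ψ t|)
      ≤ 2 * osc2 (fun p => φ p.1 * ψ p.2) (Icc a (a+δ) ×ˢ Icc b (b+δ)) := by
  set I := Icc a (a+δ) with hI
  set J := Icc b (b+δ) with hJb
  haveI := finIcc a δ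
  haveI := finIcc b δ
  set π := (volume.restrict I).prod (volume.restrict J) with hπ
  set c : ℝ := ⨍ q in I ×ˢ J, φ q.1 * ψ q.2 with hc
  have hF : Integrable (fun z : ℝ × ℝ => φ z.1 * ψ z.2) π := hφ.mul_prod hψ
  have hFt : Integrable (fun z : ℝ × ℝ => |φ z.1 * ψ z.2 - c|) π :=
    (hF.sub (integrable_const c)).abs
  have hosc : osc2 (fun p => φ p.1 * ψ p.2) (I ×ˢ J)
      = δ⁻¹ * (δ⁻¹ * ∫ z, |φ z.1 * ψ z.2 - c| ∂π) := by
    rw [osc2, ← hc, avgProd a b δ hδ (fun p => |φ p.1 * ψ p.2 - c|), ← hπ]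
  have hfub : ∫ z, |φ z.1 * ψ z.2 - c| ∂π
      = ∫ y in J, ∫ x in I, |φ x * ψ y - c| := by
    rw [hπ]
    exact integral_prod_symm _ hFt
  have hgint : Integrable (fun y => ∫ x in I, |φ x * ψ y - c|) (volume.restrict J) :=
    hFt.integral_prod_right
  have hmono : ∫ y in J, (|ψ y| * osc1 φ I)
      ≤ ∫ y in J, (2 * (δ⁻¹ * ∫ x in I, |φ x * ψ y - c|)) := by
    refine integral_mono (hψ.abs.mul_const _) (((hgint.const_mul δ⁻¹)).const_mul 2)
      fun y => ?_
    have := point_ineq a δ hδ φ hφ c (ψ y)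
    simpa [mul_comm] using this
  have hLHS : osc1 φ I * (⨍ t in J, |ψ t|) = δ⁻¹ * ∫ y in J, (|ψ y| * osc1 φ I) := by
    rw [avgIcc b δ hδ, integral_mul_const]
    ring
  have hRHS : ∫ y in J, (2 * (δ⁻¹ * ∫ x in I, |φ x * ψ y - c|))
      = 2 * (δ⁻¹ * ∫ y in J, ∫ x in I, |φ x * ψ y - c|) := by
    rw [integral_const_mul, integral_const_mul]
  rw [hLHS, hosc, hfub]
  have hδi : (0:ℝ) ≤ δ⁻¹ := by positivity
  calc δ⁻¹ * ∫ y in J, (|ψ y| * osc1 φ I)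
      ≤ δ⁻¹ * ∫ y in J, (2 * (δ⁻¹ * ∫ x in I, |φ x * ψ y - c|)) :=
        mul_le_mul_of_nonneg_left hmono hδi
    _ = 2 * (δ⁻¹ * (δ⁻¹ * ∫ y in J, ∫ x in I, |φ x * ψ y - c|)) := by rw [hRHS]; ring

end Core

lemma upper {a b δ : ℝ} {φ ψ : ℝ → ℝ} (hδ : 0 < δ) (hφ : IntegrableOn φ (Icc a (a+δ)))
    (hψ : IntegrableOn ψ (Icc b (b+δ))) :
    osc2 (fun p => φ p.1 * ψ p.2) (Icc a (a+δ) ×ˢ Icc b (b+δ))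
      ≤ (⨍ t in Icc a (a+δ), |φ t|) * osc1 ψ (Icc b (b+δ))
        + osc1 φ (Icc a (a+δ)) * (⨍ t in Icc b (b+δ), |ψ t|) := by
  set I := Icc a (a+δ) with hI
  set J := Icc b (b+δ) with hJb
  haveI := finIcc a δ
  haveI := finIcc b δ
  set π := (volume.restrict I).prod (volume.restrict J) with hπ
  set cφ : ℝ := ⨍ x in I, φ x with hcφ
  set cψ : ℝ := ⨍ y in J, ψ y with hcψ
  have hconstJ : IntegrableOn (fun _ : ℝ => cψ) J := integrableOn_const (ne_of_lt
    (by rw [hJb, volIcc b δ hδ.le]; exact ENNReal.ofReal_lt_top))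
  have hconstI : IntegrableOn (fun _ : ℝ => cφ) I := integrableOn_const (ne_of_lt
    (by rw [hI, volIcc a δ hδ.le]; exact ENNReal.ofReal_lt_top))
  -- the average over the square is cφ * cψ
  have hc : (⨍ q in I ×ˢ J, φ q.1 * ψ q.2) = cφ * cψ := by
    rw [hI, hJb, avgProd a b δ hδ (fun p => φ p.1 * ψ p.2), integral_prod_mul,
      hcφ, hcψ, avgIcc a δ hδ, avgIcc b δ hδ, ← hI, ← hJb]
    ring
  have hF : Integrable (fun z : ℝ × ℝ => φ z.1 * ψ z.2) π := hφ.mul_prod hψ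
  have hFt : Integrable (fun z : ℝ × ℝ => |φ z.1 * ψ z.2 - cφ * cψ|) π :=
    (hF.sub (integrable_const _)).abs
  have hF1 : Integrable (fun z : ℝ × ℝ => |φ z.1| * |ψ z.2 - cψ|) π :=
    hφ.abs.mul_prod (hψ.sub hconstJ).abs
  have hF2 : Integrable (fun z : ℝ × ℝ => (|cψ| * |φ z.1 - cφ|) * ((fun _ : ℝ => (1:ℝ)) z.2)) π :=
    ((hφ.sub hconstI).abs.const_mul |cψ|).mul_prod (integrable_const 1)
  have hosc : osc2 (fun p => φ p.1 * ψ p.2) (I ×ˢ J)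
      = δ⁻¹ * (δ⁻¹ * ∫ z, |φ z.1 * ψ z.2 - cφ * cψ| ∂π) := by
    rw [osc2, hc, hI, hJb, avgProd a b δ hδ (fun p => |φ p.1 * ψ p.2 - cφ * cψ|), ← hI, ← hJb, ← hπ]
  have hmono : ∫ z, |φ z.1 * ψ z.2 - cφ * cψ| ∂π
      ≤ ∫ z, (|φ z.1| * |ψ z.2 - cψ| + (|cψ| * |φ z.1 - cφ|) * 1) ∂π := by
    refine integral_mono hFt (hF1.add (by simpa using hF2)) fun z => ?_
    have h1 : φ z.1 * ψ z.2 - cφ * cψ = φ z.1 * (ψ z.2 - cψ) + cψ * (φ z.1 - cφ) := by ring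
    calc |φ z.1 * ψ z.2 - cφ * cψ| ≤ |φ z.1 * (ψ z.2 - cψ)| + |cψ * (φ z.1 - cφ)| := by
          rw [h1]; exact abs_add_le _ _
      _ = |φ z.1| * |ψ z.2 - cψ| + (|cψ| * |φ z.1 - cφ|) * 1 := by
          rw [abs_mul, abs_mul]; ring
  have hsplit : ∫ z, (|φ z.1| * |ψ z.2 - cψ| + (|cψ| * |φ z.1 - cφ|) * 1) ∂π
      = (∫ x in I, |φ x|) * (∫ y in J, |ψ y - cψ|)
        + |cψ| * (∫ x in I, |φ x - cφ|) * δ := by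
    have e1 : ∫ z : ℝ × ℝ, |φ z.1| * |ψ z.2 - cψ| ∂π
        = (∫ x in I, |φ x|) * (∫ y in J, |ψ y - cψ|) :=
      integral_prod_mul (μ := volume.restrict I) (ν := volume.restrict J)
        (fun x => |φ x|) (fun y => |ψ y - cψ|)
    have e2 : ∫ z : ℝ × ℝ, (|cψ| * |φ z.1 - cφ|) * ((fun _ : ℝ => (1:ℝ)) z.2) ∂π
        = (∫ x in I, |cψ| * |φ x - cφ|) * (∫ y in J, (1:ℝ)) :=
      integral_prod_mul (μ := volume.restrict I) (ν := volume.restrict J)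
        (fun x => |cψ| * |φ x - cφ|) (fun _ => (1:ℝ))
    have e3 : ∫ y in J, (1:ℝ) = δ := by
      rw [setIntegral_const, measureReal_def, hJb, volIcc b δ hδ.le, ENNReal.toReal_ofReal hδ.le, smul_eq_mul,
        mul_one]
    rw [integral_add hF1 (by simpa using hF2)]
    rw [e1, show (∫ z : ℝ × ℝ, (|cψ| * |φ z.1 - cφ|) * (1:ℝ) ∂π) = (∫ x in I, |cψ| * |φ x - cφ|) * δ from by
      rw [← e3]; simpa using e2]
    rw [integral_const_mul]
  have hcψ_le : |cψ| ≤ δ⁻¹ * ∫ y in J, |ψ y| := by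
    rw [hcψ, hJb, avgIcc b δ hδ, abs_mul, abs_of_pos (by positivity : (0:ℝ) < δ⁻¹), ← hJb]
    refine mul_le_mul_of_nonneg_left ?_ (by positivity)
    simpa [Real.norm_eq_abs] using norm_integral_le_integral_norm (μ := volume.restrict J) ψ
  have hA : (0:ℝ) ≤ ∫ x in I, |φ x| := integral_nonneg fun _ => abs_nonneg _
  have hB1 : (0:ℝ) ≤ ∫ y in J, |ψ y - cψ| := integral_nonneg fun _ => abs_nonneg _
  have hA2 : (0:ℝ) ≤ ∫ x in I, |φ x - cφ| := integral_nonneg fun _ => abs_nonneg _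
  have hB : (0:ℝ) ≤ ∫ y in J, |ψ y| := integral_nonneg fun _ => abs_nonneg _
  have hO1 : osc1 ψ J = δ⁻¹ * ∫ y in J, |ψ y - cψ| := by
    rw [osc1, ← hcψ, hJb, avgIcc b δ hδ, ← hJb]
  have hO2 : osc1 φ I = δ⁻¹ * ∫ x in I, |φ x - cφ| := by
    rw [osc1, ← hcφ, hI, avgIcc a δ hδ, ← hI]
  have hAφ : (⨍ t in I, |φ t|) = δ⁻¹ * ∫ x in I, |φ x| := by rw [hI, avgIcc a δ hδ, ← hI]
  have hAψ : (⨍ t in J, |ψ t|) = δ⁻¹ * ∫ y in J, |ψ y| := by rw [hJb, avgIcc b δ hδ, ← hJb]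
  rw [hosc, hO1, hO2, hAφ, hAψ]
  have hδi : (0:ℝ) < δ⁻¹ := by positivity
  have hδδ : δ⁻¹ * δ = 1 := inv_mul_cancel₀ hδ.ne'
  have key : ∫ z, |φ z.1 * ψ z.2 - cφ * cψ| ∂π
      ≤ (∫ x in I, |φ x|) * (∫ y in J, |ψ y - cψ|)
        + (δ⁻¹ * ∫ y in J, |ψ y|) * (∫ x in I, |φ x - cφ|) * δ := by
    refine hmono.trans (hsplit.le.trans ?_)
    have := mul_le_mul_of_nonneg_right (mul_le_mul_of_nonneg_right hcψ_le hA2) hδ.le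
    linarith
  calc δ⁻¹ * (δ⁻¹ * ∫ z, |φ z.1 * ψ z.2 - cφ * cψ| ∂π)
      ≤ δ⁻¹ * (δ⁻¹ * ((∫ x in I, |φ x|) * (∫ y in J, |ψ y - cψ|)
        + (δ⁻¹ * ∫ y in J, |ψ y|) * (∫ x in I, |φ x - cφ|) * δ)) := by
        exact mul_le_mul_of_nonneg_left (mul_le_mul_of_nonneg_left key hδi.le) hδi.le
    _ = δ⁻¹ * (∫ x in I, |φ x|) * (δ⁻¹ * ∫ y in J, |ψ y - cψ|)
        + δ⁻¹ * (∫ x in I, |φ x - cφ|) * (δ⁻¹ * ∫ y in J, |ψ y|) := by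
        field_simp

/-- there are absolute constants `0 < C₁ ≤ C₂` such that for all locally
integrable `φ, ψ : ℝ → ℝ`, the function `f(x,y) = φ(x)ψ(y)` satisfies
`C₁·S ≤ ‖f‖_{BMO(ℝ²)} ≤ C₂·S` in `[0,∞]`, where
`S = sup_{δ>0} [ (sup_{|I|=δ} ⨍_I|φ|)(sup_{|J|=δ} O(ψ,J)) + (sup_{|I|=δ} O(φ,I))(sup_{|J|=δ} ⨍_J|ψ|) ]`. -/
theorem bmo_product_characterization :
    ∃ C₁ C₂ : ℝ, 0 < C₁ ∧ C₁ ≤ C₂ ∧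
      ∀ φ ψ : ℝ → ℝ, LocallyIntegrable φ volume → LocallyIntegrable ψ volume →
        (ENNReal.ofReal C₁ *
          (⨆ (δ : ℝ) (_ : 0 < δ),
            ((⨆ a : ℝ, ENNReal.ofReal (⨍ t in Icc a (a + δ), |φ t|)) *
              (⨆ b : ℝ, ENNReal.ofReal (osc1 ψ (Icc b (b + δ)))) +
             (⨆ a : ℝ, ENNReal.ofReal (osc1 φ (Icc a (a + δ)))) *
              (⨆ b : ℝ, ENNReal.ofReal (⨍ t in Icc b (b + δ), |ψ t|)))) ≤
          bmo2 (fun p => φ p.1 * ψ p.2)) ∧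
        (bmo2 (fun p => φ p.1 * ψ p.2) ≤
          ENNReal.ofReal C₂ *
          (⨆ (δ : ℝ) (_ : 0 < δ),
            ((⨆ a : ℝ, ENNReal.ofReal (⨍ t in Icc a (a + δ), |φ t|)) *
              (⨆ b : ℝ, ENNReal.ofReal (osc1 ψ (Icc b (b + δ)))) +
             (⨆ a : ℝ, ENNReal.ofReal (osc1 φ (Icc a (a + δ)))) *
              (⨆ b : ℝ, ENNReal.ofReal (⨍ t in Icc b (b + δ), |ψ t|))))) := by
  refine ⟨1/4, 1, by norm_num, by norm_num, fun φ ψ hφ hψ => ?_⟩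
  have hφI : ∀ a δ : ℝ, IntegrableOn φ (Icc a (a+δ)) :=
    fun a δ => hφ.integrableOn_isCompact isCompact_Icc
  have hψJ : ∀ b δ : ℝ, IntegrableOn ψ (Icc b (b+δ)) :=
    fun b δ => hψ.integrableOn_isCompact isCompact_Icc
  set f : ℝ × ℝ → ℝ := fun p => φ p.1 * ψ p.2 with hf
  have hbmo : ∀ (a b δ : ℝ), 0 < δ →
      ENNReal.ofReal (osc2 f (Icc a (a+δ) ×ˢ Icc b (b+δ))) ≤ bmo2 f := by
    intro a b δ hδ
    rw [bmo2]
    exact le_iSup_of_le a (le_iSup_of_le b (le_iSup_of_le δ (le_iSup_of_le hδ le_rfl)))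
  constructor
  · -- lower bound
    have hS4 : (⨆ (δ : ℝ) (_ : 0 < δ),
        ((⨆ a : ℝ, ENNReal.ofReal (⨍ t in Icc a (a + δ), |φ t|)) *
          (⨆ b : ℝ, ENNReal.ofReal (osc1 ψ (Icc b (b + δ)))) +
         (⨆ a : ℝ, ENNReal.ofReal (osc1 φ (Icc a (a + δ)))) *
          (⨆ b : ℝ, ENNReal.ofReal (⨍ t in Icc b (b + δ), |ψ t|)))) ≤ 4 * bmo2 f := by
      refine iSup_le fun δ => iSup_le fun hδ => ?_
      have h1 : (⨆ a : ℝ, ENNReal.ofReal (⨍ t in Icc a (a + δ), |φ t|)) *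
          (⨆ b : ℝ, ENNReal.ofReal (osc1 ψ (Icc b (b + δ)))) ≤ 2 * bmo2 f := by
        rw [ENNReal.iSup_mul]
        refine iSup_le fun a => ?_
        rw [ENNReal.mul_iSup]
        refine iSup_le fun b => ?_
        rw [← ENNReal.ofReal_mul (avgabs_nonneg φ _)]
        calc ENNReal.ofReal ((⨍ t in Icc a (a + δ), |φ t|) * osc1 ψ (Icc b (b + δ)))
            ≤ ENNReal.ofReal (2 * osc2 f (Icc a (a+δ) ×ˢ Icc b (b+δ))) :=
              ENNReal.ofReal_le_ofReal (lower1 hδ (hφI a δ) (hψJ b δ))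
          _ = 2 * ENNReal.ofReal (osc2 f (Icc a (a+δ) ×ˢ Icc b (b+δ))) := by
              rw [ENNReal.ofReal_mul (by norm_num : (0:ℝ) ≤ 2)]
              norm_num
          _ ≤ 2 * bmo2 f := mul_le_mul_right (hbmo a b δ hδ) 2
      have h2 : (⨆ a : ℝ, ENNReal.ofReal (osc1 φ (Icc a (a + δ)))) *
          (⨆ b : ℝ, ENNReal.ofReal (⨍ t in Icc b (b + δ), |ψ t|)) ≤ 2 * bmo2 f := by
        rw [ENNReal.iSup_mul]
        refine iSup_le fun a => ?_
        rw [ENNReal.mul_iSup]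
        refine iSup_le fun b => ?_
        rw [← ENNReal.ofReal_mul (osc1_nonneg φ _)]
        calc ENNReal.ofReal (osc1 φ (Icc a (a + δ)) * ⨍ t in Icc b (b + δ), |ψ t|)
            ≤ ENNReal.ofReal (2 * osc2 f (Icc a (a+δ) ×ˢ Icc b (b+δ))) :=
              ENNReal.ofReal_le_ofReal (lower2 hδ (hφI a δ) (hψJ b δ))
          _ = 2 * ENNReal.ofReal (osc2 f (Icc a (a+δ) ×ˢ Icc b (b+δ))) := by
              rw [ENNReal.ofReal_mul (by norm_num : (0:ℝ) ≤ 2)]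
              norm_num
          _ ≤ 2 * bmo2 f := mul_le_mul_right (hbmo a b δ hδ) 2
      calc _ ≤ 2 * bmo2 f + 2 * bmo2 f := add_le_add h1 h2
        _ = 4 * bmo2 f := by ring
    calc ENNReal.ofReal (1/4) * _ ≤ ENNReal.ofReal (1/4) * (4 * bmo2 f) :=
          mul_le_mul_right hS4 _
      _ = (ENNReal.ofReal (1/4) * 4) * bmo2 f := by rw [mul_assoc]
      _ = bmo2 f := by
          rw [show (4:ℝ≥0∞) = ENNReal.ofReal 4 by simp,
            ← ENNReal.ofReal_mul (by norm_num : (0:ℝ) ≤ 1/4)]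
          norm_num
  · -- upper bound
    rw [ENNReal.ofReal_one, one_mul, bmo2]
    refine iSup_le fun a => iSup_le fun b => iSup_le fun l => iSup_le fun hl => ?_
    calc ENNReal.ofReal (osc2 f (Icc a (a+l) ×ˢ Icc b (b+l)))
        ≤ ENNReal.ofReal ((⨍ t in Icc a (a+l), |φ t|) * osc1 ψ (Icc b (b+l))
            + osc1 φ (Icc a (a+l)) * ⨍ t in Icc b (b+l), |ψ t|) :=
          ENNReal.ofReal_le_ofReal (upper hl (hφI a l) (hψJ b l))
      _ = ENNReal.ofReal ((⨍ t in Icc a (a+l), |φ t|) * osc1 ψ (Icc b (b+l)))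
            + ENNReal.ofReal (osc1 φ (Icc a (a+l)) * ⨍ t in Icc b (b+l), |ψ t|) :=
          ENNReal.ofReal_add (mul_nonneg (avgabs_nonneg φ _) (osc1_nonneg ψ _))
            (mul_nonneg (osc1_nonneg φ _) (avgabs_nonneg ψ _))
      _ = ENNReal.ofReal (⨍ t in Icc a (a+l), |φ t|) * ENNReal.ofReal (osc1 ψ (Icc b (b+l)))
            + ENNReal.ofReal (osc1 φ (Icc a (a+l))) * ENNReal.ofReal (⨍ t in Icc b (b+l), |ψ t|) := by
          rw [ENNReal.ofReal_mul (avgabs_nonneg φ _), ENNReal.ofReal_mul (osc1_nonneg φ _)]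
      _ ≤ (⨆ a' : ℝ, ENNReal.ofReal (⨍ t in Icc a' (a' + l), |φ t|)) *
            (⨆ b' : ℝ, ENNReal.ofReal (osc1 ψ (Icc b' (b' + l)))) +
          (⨆ a' : ℝ, ENNReal.ofReal (osc1 φ (Icc a' (a' + l)))) *
            (⨆ b' : ℝ, ENNReal.ofReal (⨍ t in Icc b' (b' + l), |ψ t|)) :=
          add_le_add
            (mul_le_mul'
              (le_iSup (fun a' : ℝ => ENNReal.ofReal (⨍ t in Icc a' (a' + l), |φ t|)) a)
              (le_iSup (fun b' : ℝ => ENNReal.ofReal (osc1 ψ (Icc b' (b' + l)))) b))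
            (mul_le_mul'
              (le_iSup (fun a' : ℝ => ENNReal.ofReal (osc1 φ (Icc a' (a' + l)))) a)
              (le_iSup (fun b' : ℝ => ENNReal.ofReal (⨍ t in Icc b' (b' + l), |ψ t|)) b))
      _ ≤ _ := le_iSup_of_le l (le_iSup (fun _ : 0 < l => _) hl)
end

section
/- Let φ, ψ : ℝ → ℝ be locally integrable and suppose f(x,y) = φ(x)ψ(y) belongs to BMO(ℝ²) (i.e. ‖f‖_{BMO(ℝ²)} < ∞) and f is nonzero on a set of positive Lebesgue measure in ℝ². Then φ ∈ BMO(ℝ) and ψ ∈ BMO(ℝ). -/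
open MeasureTheory Set Filter
open scoped ENNReal Topology

/-- BMO(ℝ) seminorm. -/
noncomputable def bmo1 (f : ℝ → ℝ) : ℝ≥0∞ :=
  ⨆ (a : ℝ) (b : ℝ) (_ : a < b), ENNReal.ofReal (osc1 f (Icc a b))

/-! ### Auxiliary lemmas -/

section Aux

lemma avg_Icc (g : ℝ → ℝ) {a b : ℝ} (hab : a ≤ b) :
    ⨍ x in Icc a b, g x = (b - a)⁻¹ * ∫ x in Icc a b, g x := by
  rw [setAverage_eq, measureReal_def, Real.volume_Icc, ENNReal.toReal_ofReal (by linarith), smul_eq_mul]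

lemma sub_const_int {g : ℝ → ℝ} {a b : ℝ} (hg : IntegrableOn g (Icc a b) volume) (c : ℝ) :
    IntegrableOn (fun x => |g x - c|) (Icc a b) volume := by
  refine (hg.sub (integrableOn_const ?_)).abs
  rw [Real.volume_Icc]; exact ENNReal.ofReal_ne_top

lemma osc_le_two_const {g : ℝ → ℝ} {a b : ℝ} (hab : a < b)
    (hg : IntegrableOn g (Icc a b) volume) (c : ℝ) :
    ∫ x in Icc a b, |g x - ⨍ y in Icc a b, g y| ≤ 2 * ∫ x in Icc a b, |g x - c| := by
  set m := ⨍ y in Icc a b, g y with hm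
  have hvol : (volume (Icc a b)).toReal = b - a := by
    rw [Real.volume_Icc, ENNReal.toReal_ofReal (by linarith)]
  have hkey : (b - a) * |c - m| ≤ ∫ x in Icc a b, |g x - c| := by
    have h1 : ∫ x in Icc a b, (c - g x) = (b - a) * c - ∫ x in Icc a b, g x := by
      rw [integral_sub (integrableOn_const (C := c) (by rw [Real.volume_Icc]; exact ENNReal.ofReal_ne_top)) hg,
        setIntegral_const, measureReal_def, hvol, smul_eq_mul]
    have h2 : (b - a) * (c - m) = ∫ x in Icc a b, (c - g x) := by
      have hba : b - a ≠ 0 := by linarith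
      rw [h1, hm, avg_Icc g hab.le]; field_simp
    calc (b - a) * |c - m| = |(b - a) * (c - m)| := by
            rw [abs_mul, abs_of_nonneg (by linarith : (0:ℝ) ≤ b - a)]
      _ = |∫ x in Icc a b, (c - g x)| := by rw [h2]
      _ ≤ ∫ x in Icc a b, |c - g x| := by
            simpa [Real.norm_eq_abs] using
              norm_integral_le_integral_norm (f := fun x => c - g x) (μ := volume.restrict (Icc a b))
      _ = ∫ x in Icc a b, |g x - c| := by simp_rw [abs_sub_comm]
  have hmono : ∫ x in Icc a b, |g x - m| ≤ ∫ x in Icc a b, (|g x - c| + |c - m|) := by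
    refine integral_mono (sub_const_int hg m) ((sub_const_int hg c).add (integrableOn_const (by rw [Real.volume_Icc]; exact ENNReal.ofReal_ne_top))) ?_
    intro x; exact abs_sub_le _ _ _
  have hadd : ∫ x in Icc a b, (|g x - c| + |c - m|) = (∫ x in Icc a b, |g x - c|) + (b - a) * |c - m| := by
    rw [integral_add (sub_const_int hg c) (integrableOn_const (by rw [Real.volume_Icc]; exact ENNReal.ofReal_ne_top)), setIntegral_const, measureReal_def, hvol, smul_eq_mul]
  linarith

lemma abs_avg_le (g : ℝ → ℝ) {a b : ℝ} (hab : a ≤ b) :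
    |⨍ x in Icc a b, g x| ≤ ⨍ x in Icc a b, |g x| := by
  have hba : (0:ℝ) ≤ (b - a)⁻¹ := inv_nonneg.2 (by linarith)
  rw [avg_Icc g hab, avg_Icc _ hab, abs_mul, abs_of_nonneg hba]
  refine mul_le_mul_of_nonneg_left ?_ hba
  simpa [Real.norm_eq_abs] using
    norm_integral_le_integral_norm (f := g) (μ := volume.restrict (Icc a b))

lemma osc_le_two_avg_s12 {g : ℝ → ℝ} {a b : ℝ} (hab : a < b)
    (hg : IntegrableOn g (Icc a b) volume) :
    osc1 g (Icc a b) ≤ 2 * ⨍ x in Icc a b, |g x| := by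
  have h := osc_le_two_const hab hg 0
  simp only [sub_zero] at h
  have hba : (0:ℝ) ≤ (b - a)⁻¹ := inv_nonneg.2 (by linarith)
  set m := ⨍ y in Icc a b, g y with hm
  rw [osc1, avg_Icc (fun x => |g x - m|) hab.le, avg_Icc (fun x => |g x|) hab.le]
  calc (b-a)⁻¹ * ∫ x in Icc a b, |g x - m|
      ≤ (b-a)⁻¹ * (2 * ∫ x in Icc a b, |g x|) :=
        mul_le_mul_of_nonneg_left h hba
    _ = 2 * ((b-a)⁻¹ * ∫ x in Icc a b, |g x|) := by ring

lemma mass_lower {g : ℝ → ℝ} (hg : LocallyIntegrable g volume) {u v l : ℝ} (huv : u < v)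
    (hvl : v - u ≤ l) :
    ∫ x in Icc u v, |g x|
      ≤ (∫ x in Icc u (u + l), |g x - ⨍ y in Icc u (u + l), g y|)
        + (v - u) * |⨍ y in Icc u (u + l), g y| := by
  set m := ⨍ y in Icc u (u + l), g y
  have hsub : Icc u v ⊆ Icc u (u + l) := Icc_subset_Icc le_rfl (by linarith)
  have hint : IntegrableOn g (Icc u (u + l)) volume := hg.integrableOn_isCompact isCompact_Icc
  have h1 : ∫ x in Icc u v, |g x| ≤ ∫ x in Icc u v, (|g x - m| + |m|) := by
    refine integral_mono ((hg.integrableOn_isCompact isCompact_Icc).abs)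
      (((sub_const_int (hint.mono_set hsub) m)).add (integrableOn_const (by
        rw [Real.volume_Icc]; exact ENNReal.ofReal_ne_top))) ?_
    intro x
    calc |g x| = |g x - m + m| := by ring_nf
      _ ≤ |g x - m| + |m| := abs_add_le _ _
  have h2 : ∫ x in Icc u v, (|g x - m| + |m|)
      = (∫ x in Icc u v, |g x - m|) + (v - u) * |m| := by
    rw [integral_add (sub_const_int (hint.mono_set hsub) m) (integrableOn_const (by
      rw [Real.volume_Icc]; exact ENNReal.ofReal_ne_top)), setIntegral_const,
      measureReal_def, Real.volume_Icc, ENNReal.toReal_ofReal (by linarith), smul_eq_mul]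
  have h3 : ∫ x in Icc u v, |g x - m| ≤ ∫ x in Icc u (u + l), |g x - m| :=
    setIntegral_mono_set (sub_const_int hint m)
      (Filter.Eventually.of_forall fun x => abs_nonneg _)
      (Filter.Eventually.of_forall hsub)
  linarith

end Aux

/-! ### Key Fubini inequalities -/

section Key
variable {φ ψ : ℝ → ℝ} {a b l : ℝ}

lemma key_psi_avg (hφ : LocallyIntegrable φ volume) (hψ : LocallyIntegrable ψ volume)
    (hl : 0 < l) :
    (⨍ y in Icc b (b + l), |ψ y|) * osc1 φ (Icc a (a + l)) ≤
      2 * osc2 (fun p => φ p.1 * ψ p.2) (Icc a (a + l) ×ˢ Icc b (b + l)) := by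
  set I := Icc a (a + l)
  set J := Icc b (b + l)
  have hal : a < a + l := by linarith
  have hbl : b < b + l := by linarith
  have hφI : IntegrableOn φ I volume := hφ.integrableOn_isCompact isCompact_Icc
  have hψJ : IntegrableOn ψ J volume := hψ.integrableOn_isCompact isCompact_Icc
  set P := (volume.restrict I).prod (volume.restrict J) with hP
  have hres : (volume : Measure (ℝ × ℝ)).restrict (I ×ˢ J) = P := (Measure.prod_restrict I J).symm
  have hPfin : P univ < ⊤ := by
    rw [← univ_prod_univ, Measure.prod_prod]
    simp only [Measure.restrict_apply MeasurableSet.univ, univ_inter, I, J, Real.volume_Icc]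
    exact ENNReal.mul_lt_top ENNReal.ofReal_lt_top ENNReal.ofReal_lt_top
  have hfint : Integrable (fun p : ℝ × ℝ => φ p.1 * ψ p.2) P := Integrable.mul_prod hφI hψJ
  set c := ⨍ q in I ×ˢ J, (fun p : ℝ × ℝ => φ p.1 * ψ p.2) q with hc
  have habs : Integrable (fun p : ℝ × ℝ => |φ p.1 * ψ p.2 - c|) P :=
    (hfint.sub (integrable_const_iff.2 (Or.inr ⟨hPfin⟩))).abs
  set K := ∫ x in I, |φ x - ⨍ y in I, φ y| with hK
  have hK0 : 0 ≤ K := integral_nonneg fun x => abs_nonneg _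
  have h_inner : ∀ y : ℝ, |ψ y| * K ≤ 2 * ∫ x in I, |φ x * ψ y - c| := by
    intro y
    have hg : IntegrableOn (fun x => φ x * ψ y) I volume := hφI.mul_const (ψ y)
    have h1 := osc_le_two_const hal hg c
    have havg : ⨍ x in I, φ x * ψ y = (⨍ x in I, φ x) * ψ y := by
      rw [avg_Icc _ hal.le, avg_Icc _ hal.le, integral_mul_const]; ring
    calc |ψ y| * K = ∫ x in I, |φ x * ψ y - (⨍ x in I, φ x) * ψ y| := by
          rw [← integral_const_mul]
          congr 1 with x
          rw [← abs_mul]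
          congr 1; ring
      _ ≤ 2 * ∫ x in I, |φ x * ψ y - c| := by rw [← havg]; exact h1
  have hFub : ∫ p, |φ p.1 * ψ p.2 - c| ∂P
      = ∫ y in J, ∫ x in I, |φ x * ψ y - c| := integral_prod_symm _ habs
  have houter : (∫ y in J, |ψ y|) * K ≤ 2 * ∫ p, |φ p.1 * ψ p.2 - c| ∂P := by
    rw [hFub, ← integral_mul_const, ← integral_const_mul]
    refine integral_mono ((hψJ.abs).mul_const K) ?_ h_inner
    exact (habs.integral_prod_right).const_mul 2
  have hT0 : 0 ≤ ∫ p, |φ p.1 * ψ p.2 - c| ∂P := integral_nonneg fun p => abs_nonneg _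
  have hosc2 : osc2 (fun p => φ p.1 * ψ p.2) (I ×ˢ J)
      = (l * l)⁻¹ * ∫ p, |φ p.1 * ψ p.2 - c| ∂P := by
    rw [osc2, setAverage_eq, smul_eq_mul, ← hc]
    congr 2
    · rw [show (volume : Measure (ℝ × ℝ)) = (volume : Measure ℝ).prod volume from rfl,
        measureReal_def, Measure.prod_prod]
      simp only [I, J, Real.volume_Icc]
      rw [ENNReal.toReal_mul, ENNReal.toReal_ofReal (by linarith), ENNReal.toReal_ofReal (by linarith)]
      ring
  have hSψ : ⨍ y in J, |ψ y| = l⁻¹ * ∫ y in J, |ψ y| := by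
    rw [avg_Icc _ hbl.le]; congr 2; ring
  have hKavg : osc1 φ I = l⁻¹ * K := by
    rw [osc1, avg_Icc _ hal.le, hK]; congr 2; ring
  rw [hSψ, hKavg, hosc2]
  calc l⁻¹ * (∫ y in J, |ψ y|) * (l⁻¹ * K)
      = (l * l)⁻¹ * ((∫ y in J, |ψ y|) * K) := by rw [mul_inv]; ring
    _ ≤ (l * l)⁻¹ * (2 * ∫ p, |φ p.1 * ψ p.2 - c| ∂P) :=
        mul_le_mul_of_nonneg_left houter (by positivity)
    _ = 2 * ((l * l)⁻¹ * ∫ p, |φ p.1 * ψ p.2 - c| ∂P) := by ring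

lemma key_phi_avg (hφ : LocallyIntegrable φ volume) (hψ : LocallyIntegrable ψ volume)
    (hl : 0 < l) :
    (⨍ x in Icc a (a + l), |φ x|) * osc1 ψ (Icc b (b + l)) ≤
      2 * osc2 (fun p => φ p.1 * ψ p.2) (Icc a (a + l) ×ˢ Icc b (b + l)) := by
  set I := Icc a (a + l)
  set J := Icc b (b + l)
  have hal : a < a + l := by linarith
  have hbl : b < b + l := by linarith
  have hφI : IntegrableOn φ I volume := hφ.integrableOn_isCompact isCompact_Icc
  have hψJ : IntegrableOn ψ J volume := hψ.integrableOn_isCompact isCompact_Icc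
  set P := (volume.restrict I).prod (volume.restrict J) with hP
  have hPfin : P univ < ⊤ := by
    rw [← univ_prod_univ, Measure.prod_prod]
    simp only [Measure.restrict_apply MeasurableSet.univ, univ_inter, I, J, Real.volume_Icc]
    exact ENNReal.mul_lt_top ENNReal.ofReal_lt_top ENNReal.ofReal_lt_top
  have hfint : Integrable (fun p : ℝ × ℝ => φ p.1 * ψ p.2) P := Integrable.mul_prod hφI hψJ
  set c := ⨍ q in I ×ˢ J, (fun p : ℝ × ℝ => φ p.1 * ψ p.2) q with hc
  have habs : Integrable (fun p : ℝ × ℝ => |φ p.1 * ψ p.2 - c|) P :=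
    (hfint.sub (integrable_const_iff.2 (Or.inr ⟨hPfin⟩))).abs
  set K := ∫ y in J, |ψ y - ⨍ z in J, ψ z| with hK
  have hK0 : 0 ≤ K := integral_nonneg fun x => abs_nonneg _
  have h_inner : ∀ x : ℝ, |φ x| * K ≤ 2 * ∫ y in J, |φ x * ψ y - c| := by
    intro x
    have hg : IntegrableOn (fun y => φ x * ψ y) J volume := hψJ.const_mul (φ x)
    have h1 := osc_le_two_const hbl hg c
    have havg : ⨍ y in J, φ x * ψ y = φ x * ⨍ y in J, ψ y := by
      rw [avg_Icc _ hbl.le, avg_Icc _ hbl.le, integral_const_mul]; ring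
    calc |φ x| * K = ∫ y in J, |φ x * ψ y - φ x * ⨍ z in J, ψ z| := by
          rw [← integral_const_mul]
          congr 1 with y
          rw [← abs_mul]
          congr 1; ring
      _ ≤ 2 * ∫ y in J, |φ x * ψ y - c| := by rw [← havg]; exact h1
  have hFub : ∫ p, |φ p.1 * ψ p.2 - c| ∂P
      = ∫ x in I, ∫ y in J, |φ x * ψ y - c| := integral_prod _ habs
  have houter : (∫ x in I, |φ x|) * K ≤ 2 * ∫ p, |φ p.1 * ψ p.2 - c| ∂P := by
    rw [hFub, ← integral_mul_const, ← integral_const_mul]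
    refine integral_mono ((hφI.abs).mul_const K) ?_ h_inner
    exact (habs.integral_prod_left).const_mul 2
  have hT0 : 0 ≤ ∫ p, |φ p.1 * ψ p.2 - c| ∂P := integral_nonneg fun p => abs_nonneg _
  have hosc2 : osc2 (fun p => φ p.1 * ψ p.2) (I ×ˢ J)
      = (l * l)⁻¹ * ∫ p, |φ p.1 * ψ p.2 - c| ∂P := by
    rw [osc2, setAverage_eq, smul_eq_mul, ← hc]
    congr 2
    · rw [show (volume : Measure (ℝ × ℝ)) = (volume : Measure ℝ).prod volume from rfl,
        measureReal_def, Measure.prod_prod]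
      simp only [I, J, Real.volume_Icc]
      rw [ENNReal.toReal_mul, ENNReal.toReal_ofReal (by linarith), ENNReal.toReal_ofReal (by linarith)]
      ring
    · exact (Measure.prod_restrict I J).symm
  have hSφ : ⨍ x in I, |φ x| = l⁻¹ * ∫ x in I, |φ x| := by
    rw [avg_Icc _ hal.le]; congr 2; ring
  have hKavg : osc1 ψ J = l⁻¹ * K := by
    rw [osc1, avg_Icc _ hbl.le, hK]; congr 2; ring
  rw [hSφ, hKavg, hosc2]
  calc l⁻¹ * (∫ x in I, |φ x|) * (l⁻¹ * K)
      = (l * l)⁻¹ * ((∫ x in I, |φ x|) * K) := by rw [mul_inv]; ring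
    _ ≤ (l * l)⁻¹ * (2 * ∫ p, |φ p.1 * ψ p.2 - c| ∂P) :=
        mul_le_mul_of_nonneg_left houter (by positivity)
    _ = 2 * ((l * l)⁻¹ * ∫ p, |φ p.1 * ψ p.2 - c| ∂P) := by ring

end Key

/-! ### Partition, pigeonhole and covering lemmas -/

section Part
variable {g : ℝ → ℝ}

lemma sum_Icc_abs (hg : LocallyIntegrable g volume) (u : ℝ) {l : ℝ} (hl : 0 < l) (n : ℕ) :
    ∫ x in Icc u (u + n * l), |g x|
      = ∑ k ∈ Finset.range n, ∫ x in Icc (u + k * l) (u + (k + 1) * l), |g x| := by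
  have hmono : ∀ k m : ℕ, k ≤ m → u + k * l ≤ u + m * l := by
    intro k m hkm
    have : (k : ℝ) ≤ m := Nat.cast_le.2 hkm
    nlinarith
  have key := intervalIntegral.sum_integral_adjacent_intervals
    (f := fun x => |g x|) (μ := volume) (a := fun k => u + k * l) (n := n) ?_
  · have conv : ∀ p q : ℝ, p ≤ q → ∫ x in p..q, |g x| = ∫ x in Icc p q, |g x| := by
      intro p q hpq
      rw [intervalIntegral.integral_of_le hpq, integral_Icc_eq_integral_Ioc]
    rw [Nat.cast_zero, zero_mul, add_zero] at key
    rw [← conv _ _ (hmono 0 n (Nat.zero_le n) |>.trans_eq' (by push_cast; ring)), ← key]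
    refine Finset.sum_congr rfl fun k _ => ?_
    rw [conv _ _ (hmono k (k+1) (Nat.le_succ k))]
    push_cast; ring_nf
  · intro k hk
    have : IntegrableOn (fun x => |g x|) (uIcc (u + k * l) (u + (k + 1 : ℕ) * l)) volume :=
      (hg.integrableOn_isCompact isCompact_uIcc).abs
    exact this.intervalIntegrable

lemma pigeon (hg : LocallyIntegrable g volume) {u v l : ℝ} (huv : u < v) (hl : 0 < l)
    (hlv : l ≤ v - u) :
    ∃ p : ℝ, (∫ x in Icc u v, |g x|) * l / (2 * (v - u)) ≤ ∫ x in Icc p (p + l), |g x| := by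
  set m := ∫ x in Icc u v, |g x| with hm
  have hm0 : 0 ≤ m := integral_nonneg fun x => abs_nonneg _
  set n : ℕ := ⌈(v - u) / l⌉₊ with hn
  have hx0 : (0:ℝ) < (v - u) / l := div_pos (by linarith) hl
  have hn1 : 1 ≤ n := Nat.one_le_iff_ne_zero.2 (by
    simp only [hn, ne_eq, Nat.ceil_eq_zero, not_le]; exact hx0)
  have hnge : (v - u) / l ≤ (n : ℝ) := Nat.le_ceil _
  have hnlt : (n : ℝ) < (v - u) / l + 1 := Nat.ceil_lt_add_one hx0.le
  have hvn : v ≤ u + n * l := by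
    have : v - u ≤ n * l := by
      rw [div_le_iff₀ hl] at hnge; linarith
    linarith
  have hsum : m ≤ ∑ k ∈ Finset.range n, ∫ x in Icc (u + k * l) (u + (k + 1) * l), |g x| := by
    rw [← sum_Icc_abs hg u hl n]
    refine setIntegral_mono_set ((hg.integrableOn_isCompact isCompact_Icc).abs)
      (Filter.Eventually.of_forall fun x => abs_nonneg _) (Filter.Eventually.of_forall ?_)
    exact fun x hx => ⟨hx.1, hx.2.trans hvn⟩
  by_contra hcon
  push_neg at hcon
  have hall : ∀ k ∈ Finset.range n, ∫ x in Icc (u + k * l) (u + (k + 1) * l), |g x| < m * l / (2 * (v - u)) := by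
    intro k _
    exact (hcon (u + k * l)).trans_eq' (by ring_nf)
  have hlt : ∑ k ∈ Finset.range n, ∫ x in Icc (u + k * l) (u + (k + 1) * l), |g x|
      < n * (m * l / (2 * (v - u))) := by
    have := Finset.sum_lt_sum_of_nonempty (by simp [Finset.nonempty_range_iff]; omega) hall
    simpa [Finset.sum_const, Finset.card_range, nsmul_eq_mul] using this
  have h2 : (n:ℝ) * l ≤ 2 * (v - u) := by
    have h := mul_lt_mul_of_pos_right hnlt hl
    rw [add_mul, div_mul_cancel₀ _ hl.ne', one_mul] at h
    linarith
  have hfin : (n : ℝ) * (m * l / (2 * (v - u))) ≤ m := by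
    have heq : (n:ℝ) * (m * l / (2 * (v - u))) = m * ((n:ℝ) * l) / (2 * (v - u)) := by ring
    rw [heq, div_le_iff₀ (by linarith : (0:ℝ) < 2 * (v - u))]
    nlinarith [mul_le_mul_of_nonneg_left h2 hm0]
  linarith

lemma cover (hg : LocallyIntegrable g volume) {L C : ℝ} (hL : 0 < L)
    (hC : ∀ p : ℝ, ∫ x in Icc p (p + L), |g x| ≤ C) :
    ∀ (a : ℝ) {l : ℝ}, L ≤ l → ∫ x in Icc a (a + l), |g x| ≤ (l / L + 1) * C := by
  intro a l hLl
  have hC0 : 0 ≤ C := le_trans (integral_nonneg fun x => abs_nonneg _) (hC 0)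
  set n : ℕ := ⌈l / L⌉₊ with hn
  have hnge : l / L ≤ (n : ℝ) := Nat.le_ceil _
  have hnlt : (n : ℝ) < l / L + 1 := Nat.ceil_lt_add_one (div_pos (hL.trans_le hLl) hL).le
  have hln : a + l ≤ a + n * L := by
    rw [div_le_iff₀ hL] at hnge; linarith
  have h1 : ∫ x in Icc a (a + l), |g x| ≤ ∫ x in Icc a (a + n * L), |g x| := by
    refine setIntegral_mono_set ((hg.integrableOn_isCompact isCompact_Icc).abs)
      (Filter.Eventually.of_forall fun x => abs_nonneg _) (Filter.Eventually.of_forall ?_)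
    exact fun x hx => ⟨hx.1, hx.2.trans hln⟩
  have h2 : ∫ x in Icc a (a + n * L), |g x| ≤ n * C := by
    rw [sum_Icc_abs hg a hL n]
    calc ∑ k ∈ Finset.range n, ∫ x in Icc (a + k * L) (a + (k + 1) * L), |g x|
        ≤ ∑ _k ∈ Finset.range n, C := Finset.sum_le_sum fun k _ => by
          have := hC (a + k * L); rw [show a + k * L + L = a + (k+1) * L by ring] at this
          exact this
      _ = n * C := by simp [Finset.sum_const, Finset.card_range, nsmul_eq_mul]
  calc ∫ x in Icc a (a + l), |g x| ≤ (n : ℝ) * C := h1.trans h2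
    _ ≤ (l / L + 1) * C := mul_le_mul_of_nonneg_right hnlt.le hC0

end Part

/-! ### Swap and positivity lemmas -/

lemma setIntegral_swap (H : ℝ × ℝ → ℝ) (s t : Set ℝ) :
    ∫ p in t ×ˢ s, H (Prod.swap p) = ∫ p in s ×ˢ t, H p := by
  rw [show (volume : Measure (ℝ × ℝ)).restrict (t ×ˢ s)
      = ((volume : Measure ℝ).restrict t).prod ((volume : Measure ℝ).restrict s) from
      (Measure.prod_restrict t s).symm,
    show (volume : Measure (ℝ × ℝ)).restrict (s ×ˢ t)
      = ((volume : Measure ℝ).restrict s).prod ((volume : Measure ℝ).restrict t) from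
      (Measure.prod_restrict s t).symm]
  exact integral_prod_swap H

lemma osc2_swap (φ ψ : ℝ → ℝ) (s t : Set ℝ) :
    osc2 (fun p => ψ p.1 * φ p.2) (t ×ˢ s) = osc2 (fun p => φ p.1 * ψ p.2) (s ×ˢ t) := by
  have hvol : volume (t ×ˢ s) = volume (s ×ˢ t) := by
    rw [show (volume : Measure (ℝ × ℝ)) = (volume : Measure ℝ).prod volume from rfl,
      Measure.prod_prod, Measure.prod_prod, mul_comm]
  have h1 : ∫ p in t ×ˢ s, ψ p.1 * φ p.2 = ∫ p in s ×ˢ t, φ p.1 * ψ p.2 := by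
    rw [← setIntegral_swap (fun q => φ q.1 * ψ q.2) s t]
    congr 1; funext p; simp only [Prod.fst_swap, Prod.snd_swap]; ring
  have h2 : ∀ c : ℝ, ∫ p in t ×ˢ s, |ψ p.1 * φ p.2 - c| = ∫ p in s ×ˢ t, |φ p.1 * ψ p.2 - c| := by
    intro c
    rw [← setIntegral_swap (fun q => |φ q.1 * ψ q.2 - c|) s t]
    congr 1; funext p; simp only [Prod.fst_swap, Prod.snd_swap]; rw [mul_comm]
  rw [osc2, osc2, setAverage_eq, setAverage_eq, setAverage_eq, setAverage_eq, measureReal_def, measureReal_def, hvol, h1, h2]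

lemma sections_pos {φ ψ : ℝ → ℝ} (hnz : 0 < volume {p : ℝ × ℝ | φ p.1 * ψ p.2 ≠ 0}) :
    0 < volume {x | φ x ≠ 0} ∧ 0 < volume {y | ψ y ≠ 0} := by
  constructor
  · rw [pos_iff_ne_zero]
    intro h0
    obtain ⟨N, hNsub, hNmeas, hN0⟩ := exists_measurable_superset_of_null h0
    have hsub : {p : ℝ × ℝ | φ p.1 * ψ p.2 ≠ 0} ⊆ N ×ˢ (univ : Set ℝ) := by
      intro p hp
      exact ⟨hNsub (fun h => hp (by simp [Set.mem_setOf_eq] at h ⊢; simp [h])), trivial⟩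
    have : volume (N ×ˢ (univ : Set ℝ)) = 0 := by
      rw [show (volume : Measure (ℝ × ℝ)) = (volume : Measure ℝ).prod volume from rfl,
        Measure.prod_prod, hN0, zero_mul]
    exact absurd (le_antisymm (this ▸ measure_mono hsub) zero_le) (ne_of_gt hnz)
  · rw [pos_iff_ne_zero]
    intro h0
    obtain ⟨N, hNsub, hNmeas, hN0⟩ := exists_measurable_superset_of_null h0
    have hsub : {p : ℝ × ℝ | φ p.1 * ψ p.2 ≠ 0} ⊆ (univ : Set ℝ) ×ˢ N := by
      intro p hp
      exact ⟨trivial, hNsub (fun h => hp (by simp [Set.mem_setOf_eq] at h ⊢; simp [h]))⟩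
    have : volume ((univ : Set ℝ) ×ˢ N) = 0 := by
      rw [show (volume : Measure (ℝ × ℝ)) = (volume : Measure ℝ).prod volume from rfl,
        Measure.prod_prod, hN0, mul_zero]
    exact absurd (le_antisymm (this ▸ measure_mono hsub) zero_le) (ne_of_gt hnz)

lemma exists_interval_mass {g : ℝ → ℝ} (hg : LocallyIntegrable g volume)
    (hpos : 0 < volume {x | g x ≠ 0}) :
    ∃ u v : ℝ, u < v ∧ 0 < ∫ x in Icc u v, |g x| := by
  have hcover : {x | g x ≠ 0} ⊆ ⋃ n : ℕ, ({x | g x ≠ 0} ∩ Icc (-(n:ℝ)) n) := by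
    intro x hx
    refine mem_iUnion.2 ⟨⌈|x|⌉₊, hx, ?_, ?_⟩
    · have h1 : |x| ≤ (⌈|x|⌉₊ : ℝ) := Nat.le_ceil _
      linarith [neg_abs_le x]
    · have h1 : |x| ≤ (⌈|x|⌉₊ : ℝ) := Nat.le_ceil _
      linarith [le_abs_self x]
  have : ∃ n : ℕ, volume ({x | g x ≠ 0} ∩ Icc (-(n:ℝ)) n) ≠ 0 := by
    by_contra hall
    push_neg at hall
    have : volume (⋃ n : ℕ, ({x | g x ≠ 0} ∩ Icc (-(n:ℝ)) n)) = 0 :=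
      measure_iUnion_null hall
    exact absurd (le_antisymm (this ▸ measure_mono hcover) zero_le) (ne_of_gt hpos)
  obtain ⟨n, hn⟩ := this
  refine ⟨-(n:ℝ) - 1, (n:ℝ) + 1, by linarith [Nat.cast_nonneg (α := ℝ) n], ?_⟩
  rw [setIntegral_pos_iff_support_of_nonneg_ae
    (Filter.Eventually.of_forall fun x => abs_nonneg _)
    ((hg.integrableOn_isCompact isCompact_Icc).abs)]
  have hsupp : Function.support (fun x => |g x|) = {x | g x ≠ 0} := by
    ext x; simp [Function.mem_support]
  rw [hsupp, pos_iff_ne_zero]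
  intro h0
  apply hn
  refine le_antisymm (le_trans (measure_mono ?_) h0.le) zero_le
  exact inter_subset_inter_right _ (Icc_subset_Icc (by linarith) (by linarith))

/-! ### bmo helpers -/

lemma bmo1_ne_top_of_bound {f : ℝ → ℝ} {K : ℝ}
    (h : ∀ a b : ℝ, a < b → osc1 f (Icc a b) ≤ K) : bmo1 f ≠ ⊤ := by
  have hle : bmo1 f ≤ ENNReal.ofReal K := by
    rw [bmo1]
    exact iSup_le fun a => iSup_le fun b => iSup_le fun hab =>
      ENNReal.ofReal_le_ofReal (h a b hab)
  exact ne_top_of_le_ne_top ENNReal.ofReal_ne_top hle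

lemma osc2_le_bmo2 {f : ℝ × ℝ → ℝ} (h : bmo2 f ≠ ⊤) :
    ∀ a b l : ℝ, 0 < l →
      osc2 f (Icc a (a + l) ×ˢ Icc b (b + l)) ≤ (bmo2 f).toReal := by
  intro a b l hl
  have h1 : ENNReal.ofReal (osc2 f (Icc a (a + l) ×ˢ Icc b (b + l))) ≤ bmo2 f := by
    rw [bmo2]
    exact le_iSup_of_le a (le_iSup_of_le b (le_iSup_of_le l (le_iSup_of_le hl le_rfl)))
  exact (ENNReal.ofReal_le_iff_le_toReal h).1 h1

lemma osc_from_key {c X O B : ℝ} (hc : 0 < c) (hcX : c ≤ X) (hO : 0 ≤ O)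
    (h : X * O ≤ 2 * B) : O ≤ 2 * B / c := by
  rw [le_div_iff₀ hc]; nlinarith

/-! ### Main lemma -/

lemma main_half {φ ψ : ℝ → ℝ} (hφ : LocallyIntegrable φ volume)
    (hψ : LocallyIntegrable ψ volume) {B : ℝ}
    (hB : ∀ a b l : ℝ, 0 < l →
      osc2 (fun p => φ p.1 * ψ p.2) (Icc a (a + l) ×ˢ Icc b (b + l)) ≤ B)
    {u v : ℝ} (huv : u < v) (hmass : 0 < ∫ y in Icc u v, |ψ y|) :
    bmo1 φ ≠ ⊤ := by
  set δ := v - u with hδ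
  have hδ0 : 0 < δ := by simp only [hδ]; linarith
  set m := ∫ y in Icc u v, |ψ y| with hmdef
  -- small scales: for l ≤ δ there is an interval J of length l with ⨍_J |ψ| ≥ m/(2δ)
  have small : ∀ (a : ℝ) {l : ℝ}, 0 < l → l ≤ δ →
      osc1 φ (Icc a (a + l)) ≤ 2 * B / (m / (2 * δ)) := by
    intro a l hl hld
    obtain ⟨p, hp⟩ := pigeon hψ huv hl (by linarith)
    have havg : m / (2 * δ) ≤ ⨍ y in Icc p (p + l), |ψ y| := by
      rw [avg_Icc _ (by linarith : p ≤ p + l), show p + l - p = l by ring]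
      have h1 := mul_le_mul_of_nonneg_left hp (inv_nonneg.2 hl.le)
      calc m / (2 * δ) = l⁻¹ * (m * l / (2 * (v - u))) := by
            rw [hδ]
            have hlne : l ≠ 0 := hl.ne'
            have h2δ : (2:ℝ) * (v - u) ≠ 0 := by
              have : (0:ℝ) < v - u := by linarith
              positivity
            field_simp
        _ ≤ l⁻¹ * ∫ x in Icc p (p + l), |ψ x| := h1
    refine osc_from_key (div_pos hmass (by linarith)) havg (osc1_nonneg _ _) ?_
    calc (⨍ y in Icc p (p + l), |ψ y|) * osc1 φ (Icc a (a + l))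
        ≤ 2 * osc2 (fun q : ℝ × ℝ => φ q.1 * ψ q.2) (Icc a (a + l) ×ˢ Icc p (p + l)) :=
          key_psi_avg hφ hψ hl
      _ ≤ 2 * B := by linarith [hB a p l hl]
  by_cases hconst : ∀ p q : ℝ, p < q → osc1 ψ (Icc p q) ≤ 0
  · -- ψ essentially constant: all scales are fine
    refine bmo1_ne_top_of_bound (K := max (2 * B / (m / (2 * δ))) (2 * B / (m / δ))) ?_
    intro a b hab
    set l := b - a with hldef
    have hl : 0 < l := by simp only [hldef]; linarith
    have hIcc : Icc a b = Icc a (a + l) := by rw [hldef]; congr 1; ring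
    rw [hIcc]
    rcases le_or_gt l δ with hld | hld
    · exact le_trans (small a hl hld) (le_max_left _ _)
    · -- use J = Icc u (u + l); osc1 ψ J = 0 forces |⨍ ψ| ≥ m/δ
      refine le_trans ?_ (le_max_right _ _)
      have hul : u < u + l := by linarith
      have hoscJ : osc1 ψ (Icc u (u + l)) = 0 :=
        le_antisymm (hconst u (u + l) hul) (osc1_nonneg _ _)
      have hintzero : ∫ x in Icc u (u + l), |ψ x - ⨍ y in Icc u (u + l), ψ y| = 0 := by
        have h1 : osc1 ψ (Icc u (u + l))
            = (u + l - u)⁻¹ * ∫ x in Icc u (u + l), |ψ x - ⨍ y in Icc u (u + l), ψ y| := by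
          rw [osc1, avg_Icc _ hul.le]
        have h2 : 0 ≤ ∫ x in Icc u (u + l), |ψ x - ⨍ y in Icc u (u + l), ψ y| :=
          integral_nonneg fun x => abs_nonneg _
        have h3 : (0:ℝ) < (u + l - u)⁻¹ := by
          rw [show u + l - u = l by ring]; exact inv_pos.2 hl
        nlinarith [h1 ▸ hoscJ]
      have hml : m ≤ δ * |⨍ y in Icc u (u + l), ψ y| := by
        have := mass_lower hψ huv (by linarith : v - u ≤ l)
        rw [hintzero] at this
        calc m ≤ 0 + (v - u) * |⨍ y in Icc u (u + l), ψ y| := by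
              simpa using this
          _ = δ * |⨍ y in Icc u (u + l), ψ y| := by rw [hδ]; ring
      have havg : m / δ ≤ ⨍ y in Icc u (u + l), |ψ y| := by
        refine le_trans ?_ (abs_avg_le ψ hul.le)
        rw [div_le_iff₀ hδ0]
        linarith [hml]
      refine osc_from_key (div_pos hmass hδ0) havg (osc1_nonneg _ _) ?_
      calc (⨍ y in Icc u (u + l), |ψ y|) * osc1 φ (Icc a (a + l))
          ≤ 2 * osc2 (fun q : ℝ × ℝ => φ q.1 * ψ q.2) (Icc a (a + l) ×ˢ Icc u (u + l)) :=
            key_psi_avg hφ hψ hl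
        _ ≤ 2 * B := by linarith [hB a u l hl]
  · -- ψ has an interval of positive oscillation: gives large-scale control of φ
    push_neg at hconst
    obtain ⟨p, q, hpq, hb0⟩ := hconst
    set L := q - p with hLdef
    have hL0 : 0 < L := by simp only [hLdef]; linarith
    set b₀ := osc1 ψ (Icc p q) with hb₀def
    have hb₀ : 0 < b₀ := hb0
    have hB0 : 0 ≤ B := le_trans (osc2_nonneg _ _) (hB 0 0 1 one_pos)
    set C := 2 * B / b₀ * L with hCdef
    have hC0 : 0 ≤ C := by
      have : 0 ≤ 2 * B / b₀ := div_nonneg (by linarith) hb₀.le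
      exact mul_nonneg this hL0.le
    -- fixed-scale bound on averages of |φ|
    have hA : ∀ x : ℝ, ∫ t in Icc x (x + L), |φ t| ≤ C := by
      intro x
      have hIccpq : Icc p (p + L) = Icc p q := by congr 1; simp only [hLdef]; ring
      have hkey := key_phi_avg (a := x) (b := p) hφ hψ hL0
      rw [hIccpq] at hkey
      have hkey2 : (⨍ t in Icc x (x + L), |φ t|) * b₀ ≤ 2 * B := by
        calc (⨍ t in Icc x (x + L), |φ t|) * b₀
            ≤ 2 * osc2 (fun r : ℝ × ℝ => φ r.1 * ψ r.2) (Icc x (x + L) ×ˢ Icc p (p + L)) := by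
              rw [hIccpq]; exact hkey
          _ ≤ 2 * B := by linarith [hB x p L hL0]
      have havgle : ⨍ t in Icc x (x + L), |φ t| ≤ 2 * B / b₀ := by
        rw [le_div_iff₀ hb₀]; exact hkey2
      have hint : ∫ t in Icc x (x + L), |φ t| = L * ⨍ t in Icc x (x + L), |φ t| := by
        rw [avg_Icc _ (by linarith : x ≤ x + L)]
        rw [show x + L - x = L by ring]
        field_simp
      rw [hint, hCdef]
      calc L * ⨍ t in Icc x (x + L), |φ t| ≤ L * (2 * B / b₀) :=
            mul_le_mul_of_nonneg_left havgle hL0.le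
        _ = 2 * B / b₀ * L := by ring
    refine bmo1_ne_top_of_bound
      (K := max (2 * B / (m / (2 * δ))) (max (2 * B / (m / L)) (4 * C / L))) ?_
    intro a b hab
    set l := b - a with hldef
    have hl : 0 < l := by simp only [hldef]; linarith
    have hIcc : Icc a b = Icc a (a + l) := by rw [hldef]; congr 1; ring
    rw [hIcc]
    rcases le_or_gt l δ with hld | hld
    · exact le_trans (small a hl hld) (le_max_left _ _)
    rcases lt_or_ge l L with hlL | hlL
    · -- δ < l < L : use J = Icc u (u+l) ⊇ Icc u v
      refine le_trans ?_ (le_trans (le_max_left _ _) (le_max_right _ _))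
      have hul : u < u + l := by linarith
      have hmono : m ≤ ∫ y in Icc u (u + l), |ψ y| := by
        refine setIntegral_mono_set ((hψ.integrableOn_isCompact isCompact_Icc).abs)
          (Filter.Eventually.of_forall fun x => abs_nonneg _)
          (Filter.Eventually.of_forall ?_)
        exact fun x hx => ⟨hx.1, by simp only [hδ] at hld; linarith [hx.2]⟩
      have havg : m / L ≤ ⨍ y in Icc u (u + l), |ψ y| := by
        rw [avg_Icc _ hul.le, show u + l - u = l by ring]
        have h1 : m / L ≤ m / l := by
          apply div_le_div_of_nonneg_left hmass.le hl hlL.le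
        calc m / L ≤ m / l := h1
          _ ≤ l⁻¹ * ∫ y in Icc u (u + l), |ψ y| := by
              rw [div_eq_inv_mul]
              exact mul_le_mul_of_nonneg_left hmono (inv_nonneg.2 hl.le)
      refine osc_from_key (div_pos hmass hL0) havg (osc1_nonneg _ _) ?_
      calc (⨍ y in Icc u (u + l), |ψ y|) * osc1 φ (Icc a (a + l))
          ≤ 2 * osc2 (fun r : ℝ × ℝ => φ r.1 * ψ r.2) (Icc a (a + l) ×ˢ Icc u (u + l)) :=
            key_psi_avg hφ hψ hl
        _ ≤ 2 * B := by linarith [hB a u l hl]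
    · -- l ≥ L : covering argument
      refine le_trans ?_ (le_trans (le_max_right _ _) (le_max_right _ _))
      have hcov := cover hφ hL0 hA a hlL
      have hal : a < a + l := by linarith
      have havgφ : ⨍ t in Icc a (a + l), |φ t| ≤ 2 * C / L := by
        rw [avg_Icc _ hal.le, show a + l - a = l by ring]
        have h1 : l⁻¹ * ∫ x in Icc a (a + l), |φ x| ≤ l⁻¹ * ((l / L + 1) * C) :=
          mul_le_mul_of_nonneg_left hcov (inv_nonneg.2 hl.le)
        refine h1.trans ?_
        have hgen : ∀ x y C' : ℝ, x ≠ 0 → y ≠ 0 →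
            x⁻¹ * ((x / y + 1) * C') = (1 / y + 1 / x) * C' := by
          intro x y C' hx hy
          field_simp
        rw [hgen l L C hl.ne' hL0.ne']
        have h3 : (1:ℝ) / l ≤ 1 / L := one_div_le_one_div_of_le hL0 hlL
        have h4 : (1:ℝ) / L + 1 / l ≤ 2 * (1 / L) := by linarith
        calc (1 / L + 1 / l) * C ≤ 2 * (1 / L) * C := mul_le_mul_of_nonneg_right h4 hC0
          _ = 2 * C / L := by ring
      have hosc := osc_le_two_avg_s12 hal (hφ.integrableOn_isCompact isCompact_Icc)
      calc osc1 φ (Icc a (a + l)) ≤ 2 * ⨍ t in Icc a (a + l), |φ t| := hosc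
        _ ≤ 2 * (2 * C / L) := by linarith
        _ = 4 * C / L := by ring

/-- if `φ, ψ` are locally integrable, `f(x,y) = φ(x)ψ(y)` belongs to
`BMO(ℝ²)`, and `f` is nonzero on a set of positive measure, then `φ ∈ BMO(ℝ)` and
`ψ ∈ BMO(ℝ)`. -/
theorem product_in_bmo_implies_factors_in_bmo
    (φ ψ : ℝ → ℝ) (hφ : LocallyIntegrable φ volume) (hψ : LocallyIntegrable ψ volume)
    (hbmo : bmo2 (fun p => φ p.1 * ψ p.2) ≠ ⊤)
    (hnz : 0 < volume {p : ℝ × ℝ | φ p.1 * ψ p.2 ≠ 0}) :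
    bmo1 φ ≠ ⊤ ∧ bmo1 ψ ≠ ⊤ := by
  obtain ⟨hφpos, hψpos⟩ := sections_pos hnz
  obtain ⟨u₁, v₁, huv₁, hmφ⟩ := exists_interval_mass hφ hφpos
  obtain ⟨u₂, v₂, huv₂, hmψ⟩ := exists_interval_mass hψ hψpos
  have hBf := osc2_le_bmo2 hbmo
  have hBg : ∀ a b l : ℝ, 0 < l →
      osc2 (fun p => ψ p.1 * φ p.2) (Icc a (a + l) ×ˢ Icc b (b + l))
        ≤ (bmo2 (fun p => φ p.1 * ψ p.2)).toReal := by
    intro a b l hl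
    rw [osc2_swap φ ψ (Icc b (b + l)) (Icc a (a + l))]
    exact hBf b a l hl
  exact ⟨main_half hφ hψ hBf huv₂ hmψ, main_half hψ hφ hBg huv₁ hmφ⟩
end

section
/- Let p, q > 0 with p + q ≤ 1 and f(x,y) = (log⁻|x|)^p (log⁻|y|)^q, where log⁻|x| = max{0, −log|x|}. Then f does not have bounded mean oscillation on rectangles: sup{ O(f,R) : R ⊂ ℝ² a closed axis-parallel rectangle of positive area } = ∞. -/
open MeasureTheory Set Filter
open scoped ENNReal Topology

/-- The negative part of the logarithm: `log⁻|x| = max {0, −log|x|}`. -/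
noncomputable def logMinus (x : ℝ) : ℝ := max 0 (-Real.log |x|)

lemma logMinus_nonneg (x : ℝ) : 0 ≤ logMinus x := le_max_left _ _

lemma measurable_logMinus : Measurable logMinus :=
  measurable_const.max ((Real.measurable_log.comp measurable_abs).neg)

/-- On `(0, e^{-c}]` with `c ≥ 0`, we have `logMinus x ≥ c`. -/
lemma le_logMinus {c x : ℝ} (hx : 0 < x) (hxc : x ≤ Real.exp (-c)) :
    c ≤ logMinus x := by
  have h1 : Real.log x ≤ -c := by
    have := Real.log_le_log hx hxc
    rwa [Real.log_exp] at this
  calc c ≤ -Real.log x := by linarith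
  _ ≤ logMinus x := by rw [logMinus, abs_of_pos hx]; exact le_max_right _ _

/-- For `x ≥ e^{-c} > 0` with `c ≥ 0`, we have `logMinus x ≤ c`. -/
lemma logMinus_le {c x : ℝ} (hc : 0 ≤ c) (hxc : Real.exp (-c) ≤ x) :
    logMinus x ≤ c := by
  have hx : 0 < x := lt_of_lt_of_le (Real.exp_pos _) hxc
  have h1 : -c ≤ Real.log x := by
    have := Real.log_le_log (Real.exp_pos _) hxc
    rwa [Real.log_exp] at this
  rw [logMinus, abs_of_pos hx]
  exact max_le hc (by linarith)

/-- Pointwise bound `logMinus x ^ r ≤ 1 + 2 x^{-1/2}` for `0 ≤ x`, `0 < r ≤ 1`. -/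
lemma logMinus_rpow_le {r : ℝ} (hr0 : 0 < r) (hr1 : r ≤ 1) {x : ℝ} (hx : 0 ≤ x) :
    logMinus x ^ r ≤ 1 + 2 * x ^ (-(1/2) : ℝ) := by
  have htn : 0 ≤ logMinus x := logMinus_nonneg x
  have h1 : logMinus x ^ r ≤ 1 + logMinus x := by
    rcases le_total (logMinus x) 1 with h | h
    · have := Real.rpow_le_one htn h hr0.le
      linarith
    · have h2 := Real.rpow_le_rpow_of_exponent_le h hr1
      rw [Real.rpow_one] at h2
      linarith
  have h2 : logMinus x ≤ 2 * x ^ (-(1/2) : ℝ) := by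
    rcases eq_or_lt_of_le hx with h | hxp
    · have h0 : logMinus x = 0 := by simp [logMinus, ← h]
      have h1 : x ^ (-(1/2) : ℝ) = 0 := by
        rw [← h, Real.zero_rpow (by norm_num : (-(1/2):ℝ) ≠ 0)]
      rw [h0, h1]
      norm_num
    · have hxr : 0 < x ^ (-(1/2) : ℝ) := Real.rpow_pos_of_pos hxp _
      have hlog : Real.log (x ^ (-(1/2) : ℝ)) = (-(1/2)) * Real.log x :=
        Real.log_rpow hxp _
      have h3 := Real.log_le_sub_one_of_pos hxr
      rw [hlog] at h3
      rw [logMinus, abs_of_pos hxp]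
      exact max_le (by positivity) (by linarith)
  linarith

/-- `logMinus ^ r` is integrable on `[0,1]` for `0 < r ≤ 1`. -/
lemma integrableOn_logMinus_rpow {r : ℝ} (hr0 : 0 < r) (hr1 : r ≤ 1) :
    IntegrableOn (fun x => logMinus x ^ r) (Icc (0:ℝ) 1) volume := by
  have hmeas : Measurable fun x : ℝ => logMinus x ^ r :=
    (Real.continuous_rpow_const hr0.le).measurable.comp measurable_logMinus
  have hdom : IntegrableOn (fun x : ℝ => 1 + 2 * x ^ (-(1/2) : ℝ)) (Icc (0:ℝ) 1) volume := by
    have h1 : IntervalIntegrable (fun x : ℝ => x ^ (-(1/2) : ℝ)) volume 0 1 :=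
      intervalIntegral.intervalIntegrable_rpow' (by norm_num)
    have h2 : IntegrableOn (fun x : ℝ => x ^ (-(1/2) : ℝ)) (Ioc (0:ℝ) 1) volume :=
      (intervalIntegrable_iff_integrableOn_Ioc_of_le (by norm_num)).1 h1
    have h3 : IntegrableOn (fun x : ℝ => x ^ (-(1/2) : ℝ)) (Icc (0:ℝ) 1) volume :=
      (integrableOn_Icc_iff_integrableOn_Ioc (by simp)).2 h2
    exact (integrableOn_const (C := (1:ℝ)) (by rw [Real.volume_Icc]; exact ENNReal.ofReal_ne_top)).add
      (h3.const_mul 2)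
  refine Integrable.mono' hdom hmeas.aestronglyMeasurable ?_
  refine (ae_restrict_iff' measurableSet_Icc).2 (Filter.Eventually.of_forall fun x hx => ?_)
  rw [Real.norm_eq_abs, abs_of_nonneg (Real.rpow_nonneg (logMinus_nonneg x) r)]
  exact logMinus_rpow_le hr0 hr1 hx.1

/-- Lower bound for a set integral over `Ioc a b` by a pointwise lower bound. -/
lemma int_lb {f : ℝ → ℝ} {a b c : ℝ} (hab : a ≤ b) (hf : IntegrableOn f (Ioc a b) volume)
    (hfc : ∀ x ∈ Ioc a b, c ≤ f x) : (b - a) * c ≤ ∫ x in Ioc a b, f x := by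
  have h := setIntegral_mono_on
    (integrableOn_const (C := c) (by rw [Real.volume_Ioc]; exact ENNReal.ofReal_ne_top))
    hf measurableSet_Ioc hfc
  rwa [setIntegral_const, Real.volume_real_Ioc_of_le hab, smul_eq_mul] at h

/-- Upper bound for a set integral over `Ioc a b` by a pointwise upper bound. -/
lemma int_ub {f : ℝ → ℝ} {a b c : ℝ} (hab : a ≤ b) (hf : IntegrableOn f (Ioc a b) volume)
    (hfc : ∀ x ∈ Ioc a b, f x ≤ c) : ∫ x in Ioc a b, f x ≤ (b - a) * c := by
  have h := setIntegral_mono_on hf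
    (integrableOn_const (C := c) (by rw [Real.volume_Ioc]; exact ENNReal.ofReal_ne_top))
    measurableSet_Ioc hfc
  rwa [setIntegral_const, Real.volume_real_Ioc_of_le hab, smul_eq_mul] at h

/-- for `p, q > 0` with `p + q ≤ 1`, the function
`f(x,y) = (log⁻|x|)^p (log⁻|y|)^q` does not have bounded mean oscillation on
rectangles: the supremum of `O(f,R)` over closed axis-parallel rectangles of positive
area is infinite. -/
theorem logp_logq_not_strong_bmo (p q : ℝ) (hp : 0 < p) (hq : 0 < q) (hpq : p + q ≤ 1) :
    ∀ C : ℝ, ∃ a₁ b₁ a₂ b₂ : ℝ, a₁ < b₁ ∧ a₂ < b₂ ∧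
      C < osc2 (fun z : ℝ × ℝ => logMinus z.1 ^ p * logMinus z.2 ^ q)
            (Icc a₁ b₁ ×ˢ Icc a₂ b₂) := by
  intro C
  have hp1 : p ≤ 1 := by linarith
  have hq1 : q ≤ 1 := by linarith
  have hlog2 : (0:ℝ) < Real.log 2 := Real.log_pos (by norm_num)
  have hlog4 : Real.log 2 < Real.log 4 := Real.log_lt_log (by norm_num) (by norm_num)
  have hrpow24 : Real.log 2 ^ q < Real.log 4 ^ q := Real.rpow_lt_rpow hlog2.le hlog4 hq
  set c₀ : ℝ := ((Real.log 4) ^ q - (Real.log 2) ^ q) / 4 with hc₀def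
  have hc₀ : 0 < c₀ := by rw [hc₀def]; apply div_pos (by linarith) (by norm_num)
  set K : ℝ := (2 * max C 0 + c₀) / c₀ with hKdef
  have hmax0 : 0 ≤ max C 0 := le_max_right C 0
  have hK1 : 1 ≤ K := by
    rw [hKdef, le_div_iff₀ hc₀]; linarith
  have hK0 : (0:ℝ) ≤ K := le_trans zero_le_one hK1
  set M : ℝ := K ^ (p⁻¹) with hMdef
  have hM1 : 1 ≤ M := Real.one_le_rpow hK1 (inv_nonneg.2 hp.le)
  have hM0 : (0:ℝ) ≤ M := le_trans zero_le_one hM1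
  have hMp : M ^ p = K := by
    rw [hMdef, ← Real.rpow_mul hK0, inv_mul_cancel₀ hp.ne', Real.rpow_one]
  set δ : ℝ := Real.exp (-M) with hδdef
  have hδ0 : 0 < δ := Real.exp_pos _
  have hδ1 : δ ≤ 1 := by
    rw [hδdef]
    calc Real.exp (-M) ≤ Real.exp 0 := Real.exp_le_exp.2 (by linarith)
    _ = 1 := Real.exp_zero
  refine ⟨0, δ, 0, 1, hδ0, by norm_num, ?_⟩
  set f : ℝ × ℝ → ℝ := fun z => logMinus z.1 ^ p * logMinus z.2 ^ q with hfdef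
  set g : ℝ → ℝ := fun x => logMinus x ^ p with hgdef
  set h : ℝ → ℝ := fun y => logMinus y ^ q with hhdef
  -- integrability
  have hgint : IntegrableOn g (Icc (0:ℝ) δ) volume :=
    (integrableOn_logMinus_rpow hp hp1).mono_set (Icc_subset_Icc le_rfl hδ1)
  have hhint : IntegrableOn h (Icc (0:ℝ) 1) volume := integrableOn_logMinus_rpow hq hq1
  set E := Icc (0:ℝ) δ ×ˢ Icc (0:ℝ) 1 with hEdef
  set A := Icc (0:ℝ) δ ×ˢ Icc (0:ℝ) (1/2) with hAdef
  have hAE : A ⊆ E := prod_mono_right (Icc_subset_Icc le_rfl (by norm_num))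
  have hrestE : (volume : Measure (ℝ × ℝ)).restrict E
      = (volume.restrict (Icc (0:ℝ) δ)).prod (volume.restrict (Icc (0:ℝ) 1)) := by
    rw [Measure.prod_restrict, ← Measure.volume_eq_prod]
  have hrestA : (volume : Measure (ℝ × ℝ)).restrict A
      = (volume.restrict (Icc (0:ℝ) δ)).prod (volume.restrict (Icc (0:ℝ) (1/2))) := by
    rw [Measure.prod_restrict, ← Measure.volume_eq_prod]
  have hfE : IntegrableOn f E := by
    rw [IntegrableOn, hrestE]
    exact hgint.mul_prod hhint
  have hfA : IntegrableOn f A := hfE.mono_set hAE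
  have hvolE : (volume E).toReal = δ := by
    rw [hEdef, Measure.volume_eq_prod, Measure.prod_prod, Real.volume_Icc, Real.volume_Icc]
    rw [← ENNReal.ofReal_mul (by linarith)]
    rw [ENNReal.toReal_ofReal (by nlinarith)]
    ring
  have hvolA : (volume A).toReal = δ / 2 := by
    rw [hAdef, Measure.volume_eq_prod, Measure.prod_prod, Real.volume_Icc, Real.volume_Icc]
    rw [← ENNReal.ofReal_mul (by linarith)]
    rw [ENNReal.toReal_ofReal (by nlinarith)]
    ring
  set G := ∫ x in Icc (0:ℝ) δ, g x with hGdef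
  set H1 := ∫ y in Icc (0:ℝ) (1/2), h y with hH1def
  set Hf := ∫ y in Icc (0:ℝ) 1, h y with hHfdef
  have hEint : ∫ z in E, f z = G * Hf := by
    rw [hGdef, hHfdef]
    show ∫ z, f z ∂((volume : Measure (ℝ × ℝ)).restrict E) = _
    rw [hrestE, hfdef]
    exact integral_prod_mul (fun x => logMinus x ^ p) (fun y => logMinus y ^ q)
  have hAint : ∫ z in A, f z = G * H1 := by
    rw [hGdef, hH1def]
    show ∫ z, f z ∂((volume : Measure (ℝ × ℝ)).restrict A) = _
    rw [hrestA, hfdef]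
    exact integral_prod_mul (fun x => logMinus x ^ p) (fun y => logMinus y ^ q)
  set m := ⨍ z in E, f z with hmdef
  have hmval : m = δ⁻¹ * (G * Hf) := by
    rw [hmdef, setAverage_eq, measureReal_def, hvolE, smul_eq_mul, hEint]
  -- lower bound for G
  have hGlb : δ * K ≤ G := by
    have hptw : ∀ x ∈ Ioc (0:ℝ) δ, K ≤ g x := by
      intro x hx
      have h1 : M ≤ logMinus x := le_logMinus hx.1 (by rw [← hδdef]; exact hx.2)
      have h2 : M ^ p ≤ logMinus x ^ p := Real.rpow_le_rpow hM0 h1 hp.le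
      rw [hMp] at h2
      exact h2
    have h3 := int_lb hδ0.le (hgint.mono_set Ioc_subset_Icc_self) hptw
    rw [hGdef, integral_Icc_eq_integral_Ioc]
    calc δ * K = (δ - 0) * K := by ring
    _ ≤ _ := h3
  have hGnonneg : 0 ≤ G := le_trans (by positivity) hGlb
  -- exponential expressions for 1/4 and 1/2
  have e4 : Real.exp (-(Real.log 4)) = 1/4 := by
    rw [← Real.log_inv, Real.exp_log (by norm_num)]
    norm_num
  have e2 : Real.exp (-(Real.log 2)) = 1/2 := by
    rw [← Real.log_inv, Real.exp_log (by norm_num)]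
    norm_num
  -- lower bound for H1
  have hhint2 : IntegrableOn h (Ioc (0:ℝ) (1/4)) volume :=
    hhint.mono_set (subset_trans Ioc_subset_Icc_self (Icc_subset_Icc le_rfl (by norm_num)))
  have hhint3 : IntegrableOn h (Ioc (1/4:ℝ) (1/2)) volume :=
    hhint.mono_set (subset_trans Ioc_subset_Icc_self (Icc_subset_Icc (by norm_num) (by norm_num)))
  have hhint4 : IntegrableOn h (Ioc (1/2:ℝ) 1) volume :=
    hhint.mono_set (subset_trans Ioc_subset_Icc_self (Icc_subset_Icc (by norm_num) le_rfl))
  have hH1split : H1 = (∫ y in Ioc (0:ℝ) (1/4), h y) + ∫ y in Ioc (1/4:ℝ) (1/2), h y := by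
    rw [hH1def, integral_Icc_eq_integral_Ioc,
      ← Ioc_union_Ioc_eq_Ioc (by norm_num : (0:ℝ) ≤ 1/4) (by norm_num : (1/4:ℝ) ≤ 1/2),
      setIntegral_union (Ioc_disjoint_Ioc_of_le le_rfl) measurableSet_Ioc hhint2 hhint3]
  have hH1lb : (1/4) * Real.log 4 ^ q + (1/4) * Real.log 2 ^ q ≤ H1 := by
    have hb1 : ∀ y ∈ Ioc (0:ℝ) (1/4), Real.log 4 ^ q ≤ h y := by
      intro y hy
      have h1 : Real.log 4 ≤ logMinus y := le_logMinus hy.1 (by rw [e4]; exact hy.2)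
      exact Real.rpow_le_rpow (le_of_lt (lt_trans hlog2 hlog4)) h1 hq.le
    have hb2 : ∀ y ∈ Ioc (1/4:ℝ) (1/2), Real.log 2 ^ q ≤ h y := by
      intro y hy
      have h1 : Real.log 2 ≤ logMinus y :=
        le_logMinus (lt_trans (by norm_num) hy.1) (by rw [e2]; exact hy.2)
      exact Real.rpow_le_rpow hlog2.le h1 hq.le
    have l1 := int_lb (by norm_num : (0:ℝ) ≤ 1/4) hhint2 hb1
    have l2 := int_lb (by norm_num : (1/4:ℝ) ≤ 1/2) hhint3 hb2
    rw [hH1split]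
    norm_num at l1 l2 ⊢
    linarith
  -- upper bound for Hf - H1
  have hHfsplit : Hf = H1 + ∫ y in Ioc (1/2:ℝ) 1, h y := by
    have hhint5 : IntegrableOn h (Ioc (0:ℝ) (1/2)) volume :=
      hhint.mono_set (subset_trans Ioc_subset_Icc_self (Icc_subset_Icc le_rfl (by norm_num)))
    rw [hHfdef, hH1def, integral_Icc_eq_integral_Ioc, integral_Icc_eq_integral_Ioc,
      ← Ioc_union_Ioc_eq_Ioc (by norm_num : (0:ℝ) ≤ 1/2) (by norm_num : (1/2:ℝ) ≤ 1),
      setIntegral_union (Ioc_disjoint_Ioc_of_le le_rfl) measurableSet_Ioc hhint5 hhint4]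
  have hH2ub : Hf - H1 ≤ (1/2) * Real.log 2 ^ q := by
    have hb3 : ∀ y ∈ Ioc (1/2:ℝ) 1, h y ≤ Real.log 2 ^ q := by
      intro y hy
      have h1 : logMinus y ≤ Real.log 2 := logMinus_le hlog2.le (by rw [e2]; exact hy.1.le)
      exact Real.rpow_le_rpow (logMinus_nonneg y) h1 hq.le
    have l3 := int_ub (by norm_num : (1/2:ℝ) ≤ 1) hhint4 hb3
    rw [hHfsplit]
    norm_num at l3 ⊢
    linarith
  have hHc : c₀ / 2 ≤ H1 - Hf / 2 := by
    rw [hc₀def]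
    linarith
  -- the main chain of inequalities
  have hvEfin : volume E < ⊤ := (isCompact_Icc.prod isCompact_Icc).measure_lt_top
  have hconstE : IntegrableOn (fun _ : ℝ × ℝ => m) E volume :=
    integrableOn_const hvEfin.ne
  have hsubE : IntegrableOn (fun z => f z - m) E volume := hfE.sub hconstE
  have hsubA : IntegrableOn (fun z => f z - m) A volume := hsubE.mono_set hAE
  have habsE : IntegrableOn (fun z => |f z - m|) E volume := hsubE.abs
  have habsA : IntegrableOn (fun z => |f z - m|) A volume := habsE.mono_set hAE
  have step1 : ∫ z in A, (f z - m) ≤ ∫ z in A, |f z - m| :=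
    setIntegral_mono hsubA habsA fun z => le_abs_self _
  have step2 : ∫ z in A, |f z - m| ≤ ∫ z in E, |f z - m| :=
    setIntegral_mono_set habsE (Filter.Eventually.of_forall fun z => abs_nonneg _)
      (HasSubset.Subset.eventuallyLE hAE)
  have hAcalc : ∫ z in A, (f z - m) = G * H1 - (δ / 2) * m := by
    have hconstA : IntegrableOn (fun _ : ℝ × ℝ => m) A volume :=
      hconstE.mono_set hAE
    rw [integral_sub hfA hconstA, hAint, setIntegral_const, measureReal_def, hvolA, smul_eq_mul]
  have hchain : K * c₀ / 2 ≤ osc2 f E := by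
    have hosc : osc2 f E = δ⁻¹ * ∫ z in E, |f z - m| := by
      rw [osc2, ← hmdef, setAverage_eq, measureReal_def, hvolE, smul_eq_mul]
    have h1 : G * H1 - (δ / 2) * m = G * (H1 - Hf / 2) := by
      rw [hmval]
      field_simp
    have h2 : δ * K * (c₀ / 2) ≤ G * (H1 - Hf / 2) := by
      apply mul_le_mul hGlb hHc (by positivity) hGnonneg
    have h3 : δ * K * (c₀ / 2) ≤ ∫ z in E, |f z - m| := by
      calc δ * K * (c₀ / 2) ≤ G * (H1 - Hf / 2) := h2
      _ = ∫ z in A, (f z - m) := by rw [hAcalc, h1]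
      _ ≤ ∫ z in A, |f z - m| := step1
      _ ≤ ∫ z in E, |f z - m| := step2
    rw [hosc]
    calc K * c₀ / 2 = δ⁻¹ * (δ * K * (c₀ / 2)) := by field_simp
    _ ≤ δ⁻¹ * ∫ z in E, |f z - m| := by
        apply mul_le_mul_of_nonneg_left h3 (by positivity)
  have hfinal : C < K * c₀ / 2 := by
    have hKc : K * c₀ = 2 * max C 0 + c₀ := by
      rw [hKdef, div_mul_cancel₀ _ hc₀.ne']
    have hCmax : C ≤ max C 0 := le_max_left C 0
    linarith
  exact lt_of_lt_of_le hfinal hchain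
end

section
/- There exists a dimensional constant C(n) such that: if f ∈ BMO(ℝⁿ) is supported in Q₀ = [−1,1]ⁿ, and (x_k)_{k∈ℕ} is a sequence of points in ℝⁿ with |x_k − x_m| ≥ 3√n for all k ≠ m, then the function g(x) = Σ_k f(x − x_k) (the sum is locally finite, since the translated supports are pairwise disjoint) belongs to BMO(ℝⁿ) and ‖g‖_{BMO(ℝⁿ)} ≤ C(n) ‖f‖_{BMO(ℝⁿ)}. -/
open MeasureTheory Set Filter
open scoped ENNReal Topology

namespace BMOaux

variable {n : ℕ}

lemma measurableSet_cube (a : Fin n → ℝ) (l : ℝ) : MeasurableSet (cube a l) :=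
  measurableSet_Icc

lemma volume_cube (a : Fin n → ℝ) {l : ℝ} (hl : 0 ≤ l) :
    volume (cube a l) = ENNReal.ofReal (l ^ n) := by
  rw [cube, Real.volume_Icc_pi]
  simp only [add_sub_cancel_left, Finset.prod_const, Finset.card_univ, Fintype.card_fin]
  rw [ENNReal.ofReal_pow hl]

lemma volume_cube_toReal (a : Fin n → ℝ) {l : ℝ} (hl : 0 ≤ l) :
    (volume (cube a l)).toReal = l ^ n := by
  rw [volume_cube a hl, ENNReal.toReal_ofReal (by positivity)]

lemma oscN_eq (f : (Fin n → ℝ) → ℝ) (A : Set (Fin n → ℝ)) :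
    oscN f A = (volume A).toReal⁻¹ * ∫ x in A, |f x - ⨍ y in A, f y| := by
  rw [oscN, setAverage_eq, smul_eq_mul, measureReal_def]

lemma oscN_nonneg (f : (Fin n → ℝ) → ℝ) (A : Set (Fin n → ℝ)) : 0 ≤ oscN f A := by
  rw [oscN_eq]
  exact mul_nonneg (by positivity) (integral_nonneg fun x => abs_nonneg _)

lemma setAverage_congr_fun' {f g : (Fin n → ℝ) → ℝ} {A : Set (Fin n → ℝ)}
    (hA : MeasurableSet A) (h : EqOn f g A) : (⨍ x in A, f x) = ⨍ x in A, g x :=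
  average_congr ((ae_restrict_iff' hA).2 (ae_of_all _ fun _ hx => h hx))

lemma oscN_congr {f g : (Fin n → ℝ) → ℝ} {A : Set (Fin n → ℝ)}
    (hA : MeasurableSet A) (h : EqOn f g A) : oscN f A = oscN g A := by
  have h1 : (⨍ y in A, f y) = ⨍ y in A, g y := setAverage_congr_fun' hA h
  rw [oscN, oscN, h1]
  exact setAverage_congr_fun' hA (fun y hy => by rw [h hy])

lemma preimage_add_cube (v a : Fin n → ℝ) (l : ℝ) :
    (fun z : Fin n → ℝ => z + v) ⁻¹' cube a l = cube (a - v) l := by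
  ext z
  simp only [cube, mem_preimage, mem_Icc, Pi.le_def, Pi.add_apply, Pi.sub_apply]
  constructor
  · rintro ⟨h1, h2⟩
    exact ⟨fun i => by linarith [h1 i], fun i => by linarith [h2 i]⟩
  · rintro ⟨h1, h2⟩
    exact ⟨fun i => by linarith [h1 i], fun i => by linarith [h2 i]⟩

lemma setIntegral_translate (h : (Fin n → ℝ) → ℝ) (v a : Fin n → ℝ) (l : ℝ) :
    ∫ y in cube a l, h (y - v) = ∫ z in cube (a - v) l, h z := by
  have mp : MeasurePreserving (fun z : Fin n → ℝ => z + v) volume volume :=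
    measurePreserving_add_right volume v
  have emb : MeasurableEmbedding (fun z : Fin n → ℝ => z + v) :=
    (MeasurableEquiv.addRight v).measurableEmbedding
  have := mp.setIntegral_preimage_emb emb (fun y => h (y - v)) (cube a l)
  rw [preimage_add_cube] at this
  rw [← this]
  exact setIntegral_congr_fun (measurableSet_cube _ _) (fun z _ => by
    simp [add_sub_cancel_right])

lemma oscN_translate (f : (Fin n → ℝ) → ℝ) (v a : Fin n → ℝ) {l : ℝ} (hl : 0 ≤ l) :
    oscN (fun y => f (y - v)) (cube a l) = oscN f (cube (a - v) l) := by
  have hvol : volume (cube a l) = volume (cube (a - v) l) := by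
    rw [volume_cube _ hl, volume_cube _ hl]
  have havg : (⨍ y in cube a l, f (y - v)) = ⨍ z in cube (a - v) l, f z := by
    rw [setAverage_eq, setAverage_eq, measureReal_def, measureReal_def, hvol, setIntegral_translate]
  rw [oscN, oscN, havg]
  set C : ℝ := ⨍ y in cube (a - v) l, f y with hC
  rw [setAverage_eq, setAverage_eq, measureReal_def, measureReal_def, hvol]
  congr 1
  exact setIntegral_translate (fun z => |f z - C|) v a l

lemma osc_le_bmo (f : (Fin n → ℝ) → ℝ) (a : Fin n → ℝ) {l : ℝ} (hl : 0 < l) :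
    ENNReal.ofReal (oscN f (cube a l)) ≤ bmoN f :=
  le_iSup_of_le a (le_iSup_of_le l (le_iSup_of_le hl le_rfl))

lemma osc_le_toReal_bmo {f : (Fin n → ℝ) → ℝ} (hb : bmoN f ≠ ⊤) (a : Fin n → ℝ)
    {l : ℝ} (hl : 0 < l) : oscN f (cube a l) ≤ (bmoN f).toReal := by
  have h1 := ENNReal.toReal_mono hb (osc_le_bmo f a hl)
  rwa [ENNReal.toReal_ofReal (oscN_nonneg f _)] at h1

lemma abs_setIntegral_le {h : (Fin n → ℝ) → ℝ} {A : Set (Fin n → ℝ)} :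
    |∫ x in A, h x| ≤ ∫ x in A, |h x| := by
  simpa [Real.norm_eq_abs] using
    norm_integral_le_integral_norm (μ := volume.restrict A) h

/-- osc over A is at most twice the average of |f| over A. -/
lemma oscN_le_two_avg {f : (Fin n → ℝ) → ℝ} {A : Set (Fin n → ℝ)}
    (hA : MeasurableSet A) (h0 : volume A ≠ 0) (hfin : volume A ≠ ⊤)
    (hf : IntegrableOn f A) :
    oscN f A ≤ 2 * ((volume A).toReal⁻¹ * ∫ x in A, |f x|) := by
  set c : ℝ := ⨍ y in A, f y with hc
  set vA : ℝ := (volume A).toReal with hvA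
  have hvA0 : 0 < vA := ENNReal.toReal_pos h0 hfin
  have hcint : IntegrableOn (fun _ : Fin n → ℝ => c) A :=
    integrableOn_const hfin
  have hcabs : |c| ≤ vA⁻¹ * ∫ x in A, |f x| := by
    rw [hc, setAverage_eq, smul_eq_mul, abs_mul, abs_inv, abs_of_nonneg measureReal_nonneg]
    exact mul_le_mul_of_nonneg_left abs_setIntegral_le (by positivity)
  have h1 : ∫ x in A, |f x - c| ≤ (∫ x in A, |f x|) + vA * |c| := by
    have : ∫ x in A, |f x - c| ≤ ∫ x in A, (|f x| + |c|) := by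
      apply setIntegral_mono_on ((hf.sub hcint).abs) (hf.abs.add (integrableOn_const
        hfin)) hA
      intro x _
      exact abs_sub _ _
    calc ∫ x in A, |f x - c| ≤ ∫ x in A, (|f x| + |c|) := this
      _ = (∫ x in A, |f x|) + vA * |c| := by
          rw [integral_add hf.abs (integrableOn_const hfin),
            setIntegral_const, smul_eq_mul, measureReal_def]
  rw [oscN_eq, ← hc, ← hvA]
  have h2 : vA⁻¹ * ∫ x in A, |f x - c| ≤ vA⁻¹ * ((∫ x in A, |f x|) + vA * |c|) :=
    mul_le_mul_of_nonneg_left h1 (by positivity)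
  have h3 : vA⁻¹ * ((∫ x in A, |f x|) + vA * |c|) =
      vA⁻¹ * (∫ x in A, |f x|) + |c| := by field_simp
  have := hcabs
  nlinarith [hcabs, h2, h3]

/-- average difference comparison for A ⊆ Q. -/
lemma abs_avg_sub_avg_le {f : (Fin n → ℝ) → ℝ} {A Q : Set (Fin n → ℝ)}
    (hA : MeasurableSet A) (hAQ : A ⊆ Q) (h0 : volume A ≠ 0) (hfin : volume Q ≠ ⊤)
    (hf : IntegrableOn f Q) :
    |(⨍ x in A, f x) - ⨍ x in Q, f x| ≤
      (volume Q).toReal / (volume A).toReal * oscN f Q := by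
  set c : ℝ := ⨍ y in Q, f y with hc
  have hAfin : volume A ≠ ⊤ := fun h => hfin (top_le_iff.1 (h ▸ measure_mono hAQ))
  set vA : ℝ := (volume A).toReal with hvA
  set vQ : ℝ := (volume Q).toReal with hvQ
  have hvA0 : 0 < vA := ENNReal.toReal_pos h0 hAfin
  have hfA : IntegrableOn f A := hf.mono_set hAQ
  have hcA : IntegrableOn (fun _ : Fin n → ℝ => c) A :=
    integrableOn_const hAfin
  have key : (⨍ x in A, f x) - c = ⨍ x in A, (f x - c) := by
    rw [setAverage_eq, setAverage_eq, smul_eq_mul, smul_eq_mul,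
      integral_sub hfA hcA, setIntegral_const, smul_eq_mul]
    have hA' : volume.real A ≠ 0 := hvA0.ne'
    field_simp
  have habs : |⨍ x in A, (f x - c)| ≤ vA⁻¹ * ∫ x in A, |f x - c| := by
    rw [setAverage_eq, smul_eq_mul, abs_mul, abs_inv, abs_of_nonneg measureReal_nonneg]
    exact mul_le_mul_of_nonneg_left abs_setIntegral_le (by positivity)
  have hmono : ∫ x in A, |f x - c| ≤ ∫ x in Q, |f x - c| := by
    apply setIntegral_mono_set ((hf.sub (integrableOn_const hfin)).abs)
      (ae_of_all _ fun x => abs_nonneg _) (HasSubset.Subset.eventuallyLE hAQ)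
  have hosc : ∫ x in Q, |f x - c| = vQ * oscN f Q := by
    rw [oscN_eq, ← hc, ← hvQ]
    rcases eq_or_ne vQ 0 with h | h
    · rw [h]
      simp only [zero_mul]
      rw [hvQ] at h
      have : volume Q = 0 := by
        rcases (ENNReal.toReal_eq_zero_iff _).1 h with h' | h'
        · exact h'
        · exact absurd h' hfin
      rw [show (volume.restrict Q : Measure (Fin n → ℝ)) = 0 from
        Measure.restrict_eq_zero.2 this, integral_zero_measure]
    · field_simp
  rw [key]
  calc |⨍ x in A, (f x - c)| ≤ vA⁻¹ * ∫ x in A, |f x - c| := habs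
    _ ≤ vA⁻¹ * ∫ x in Q, |f x - c| := mul_le_mul_of_nonneg_left hmono (by positivity)
    _ = vA⁻¹ * (vQ * oscN f Q) := by rw [hosc]
    _ = vQ / vA * oscN f Q := by field_simp

lemma sep_coord (hn : 1 ≤ n) (x : ℕ → Fin n → ℝ)
    (hsep : ∀ k m : ℕ, k ≠ m →
      3 * Real.sqrt n ≤ Real.sqrt (∑ i : Fin n, (x k i - x m i) ^ 2)) :
    ∀ k m, k ≠ m → ¬ (∀ i, |x k i - x m i| ≤ 5/2) := by
  intro k m hkm hall
  have h1 : ∑ i : Fin n, (x k i - x m i) ^ 2 ≤ n * (5/2 : ℝ) ^ 2 := by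
    calc ∑ i : Fin n, (x k i - x m i) ^ 2 ≤ ∑ _i : Fin n, (5/2 : ℝ) ^ 2 :=
          Finset.sum_le_sum fun i _ => by
            have h := abs_le.1 (hall i); nlinarith [h.1, h.2]
      _ = n * (5/2 : ℝ) ^ 2 := by
          simp [Finset.sum_const, Finset.card_univ, nsmul_eq_mul]
  have h2 : Real.sqrt (∑ i : Fin n, (x k i - x m i) ^ 2) ≤
      Real.sqrt (n * (5/2 : ℝ) ^ 2) := Real.sqrt_le_sqrt h1
  have h3 : Real.sqrt (n * (5/2 : ℝ) ^ 2) = Real.sqrt n * (5/2) := by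
    rw [Real.sqrt_mul (Nat.cast_nonneg n), Real.sqrt_sq (by norm_num : (0:ℝ) ≤ 5/2)]
  have h4 : 0 < Real.sqrt n :=
    Real.sqrt_pos.2 (by exact_mod_cast Nat.pos_of_ne_zero (by omega))
  have h5 := hsep k m hkm
  nlinarith

lemma count_lemma (x : ℕ → Fin n → ℝ)
    (hsep25 : ∀ k m, k ≠ m → ¬ (∀ i, |x k i - x m i| ≤ 5/2))
    (u : Fin n → ℝ) {r : ℝ} (hr : 0 ≤ r) (F' : Finset ℕ)
    (hmem : ∀ k ∈ F', x k ∈ Icc u (fun i => u i + r)) :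
    (F'.card : ℝ) * (5/2) ^ n ≤ (r + 5/2) ^ n := by
  set B : ℕ → Set (Fin n → ℝ) :=
    fun k => Icc (fun i => x k i - 5/4) (fun i => x k i + 5/4) with hB
  have hdisj : Set.PairwiseDisjoint (↑F' : Set ℕ) B := by
    intro k _ m _ hkm
    rw [Function.onFun, Set.disjoint_left]
    intro z hzk hzm
    refine hsep25 k m hkm fun i => ?_
    have h1 := hzk.1 i; have h2 := hzk.2 i
    have h3 := hzm.1 i; have h4 := hzm.2 i
    simp only at h1 h2 h3 h4
    rw [abs_le]; constructor <;> linarith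
  have hvolB : ∀ k, volume (B k) = ENNReal.ofReal ((5/2 : ℝ) ^ n) := by
    intro k
    rw [hB]
    rw [Real.volume_Icc_pi]
    have : ∀ i : Fin n, (x k i + 5/4) - (x k i - 5/4) = (5/2 : ℝ) := fun i => by ring
    simp only [this, Finset.prod_const, Finset.card_univ, Fintype.card_fin]
    rw [ENNReal.ofReal_pow (by norm_num)]
  have hsubB : ∀ k ∈ F', B k ⊆ Icc (fun i => u i - 5/4) (fun i => u i + r + 5/4) := by
    intro k hk z hz
    have hx := hmem k hk
    exact ⟨fun i => by have := hz.1 i; have := hx.1 i; simp only at *; linarith,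
      fun i => by have := hz.2 i; have := hx.2 i; simp only at *; linarith⟩
  have key : (F'.card : ℝ≥0∞) * ENNReal.ofReal ((5/2 : ℝ) ^ n) ≤
      ENNReal.ofReal ((r + 5/2) ^ n) := by
    calc (F'.card : ℝ≥0∞) * ENNReal.ofReal ((5/2 : ℝ) ^ n)
        = ∑ k ∈ F', volume (B k) := by
          simp [hvolB, Finset.sum_const, nsmul_eq_mul]
      _ = volume (⋃ k ∈ F', B k) :=
          (measure_biUnion_finset hdisj (fun k _ => measurableSet_Icc)).symm
      _ ≤ volume (Icc (fun i => u i - 5/4) (fun i => u i + r + 5/4)) :=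
          measure_mono (Set.iUnion₂_subset hsubB)
      _ = ENNReal.ofReal ((r + 5/2) ^ n) := by
          rw [Real.volume_Icc_pi]
          have : ∀ i : Fin n, (u i + r + 5/4) - (u i - 5/4) = r + 5/2 := fun i => by ring
          simp only [this, Finset.prod_const, Finset.card_univ, Fintype.card_fin]
          rw [ENNReal.ofReal_pow (by linarith)]
  rw [← ENNReal.ofReal_natCast, ← ENNReal.ofReal_mul (Nat.cast_nonneg _)] at key
  exact (ENNReal.ofReal_le_ofReal_iff (by positivity)).1 key

lemma finite_in_box (hn : 1 ≤ n) (x : ℕ → Fin n → ℝ)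
    (hsep25 : ∀ k m, k ≠ m → ¬ (∀ i, |x k i - x m i| ≤ 5/2))
    (u : Fin n → ℝ) (r : ℝ) :
    {k : ℕ | x k ∈ Icc u (fun i => u i + r)}.Finite := by
  rcases lt_or_ge r 0 with hr | hr
  · convert Set.finite_empty
    ext k
    simp only [mem_setOf_eq, mem_empty_iff_false, iff_false]
    intro hk
    have h1 := hk.1 ⟨0, hn⟩
    have h2 := hk.2 ⟨0, hn⟩
    simp only at h1 h2
    linarith
  · by_contra hinf
    have hI : {k : ℕ | x k ∈ Icc u (fun i => u i + r)}.Infinite := hinf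
    obtain ⟨F', hsub, hcard⟩ :=
      hI.exists_subset_card_eq (⌈((r + 5/2) ^ n / (5/2 : ℝ) ^ n)⌉₊ + 1)
    have hcl := count_lemma x hsep25 u hr F' (fun k hk => hsub hk)
    have hpow : (0:ℝ) < (5/2 : ℝ) ^ n := by positivity
    have hle : (F'.card : ℝ) ≤ (r + 5/2) ^ n / (5/2 : ℝ) ^ n := (le_div_iff₀ hpow).2 hcl
    rw [hcard] at hle
    have hceil := Nat.le_ceil ((r + 5/2) ^ n / (5/2 : ℝ) ^ n)
    push_cast at hle
    linarith

end BMOaux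

/-- there is a dimensional constant `C(n)` such that: if `f ∈ BMO(ℝⁿ)`
is supported in `Q₀ = [−1,1]ⁿ` and `(x_k)` is a sequence of points of ℝⁿ whose mutual
Euclidean distances are at least `3√n`, then `g = Σ_k f(· − x_k)` belongs to `BMO(ℝⁿ)`
with `‖g‖_{BMO(ℝⁿ)} ≤ C(n) ‖f‖_{BMO(ℝⁿ)}`. -/
theorem bmo_of_separated_translates (n : ℕ) (hn : 1 ≤ n) :
    ∃ C : ℝ, 0 < C ∧
      ∀ f : (Fin n → ℝ) → ℝ, LocallyIntegrable f volume → bmoN f ≠ ⊤ →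
        (∀ y ∉ Set.Icc (fun _ : Fin n => (-1 : ℝ)) (fun _ => 1), f y = 0) →
      ∀ x : ℕ → (Fin n → ℝ),
        (∀ k m : ℕ, k ≠ m →
          3 * Real.sqrt n ≤ Real.sqrt (∑ i : Fin n, (x k i - x m i) ^ 2)) →
        LocallyIntegrable (fun y => ∑' k : ℕ, f (y - x k)) volume ∧
        bmoN (fun y => ∑' k : ℕ, f (y - x k)) ≤ ENNReal.ofReal C * bmoN f := by
  classical
  refine ⟨2 * 4^n * 2^n * (2^(n+1) + 1) + 1, by positivity, ?_⟩
  set C : ℝ := 2 * 4^n * 2^n * (2^(n+1) + 1) + 1 with hCdef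
  have hC1 : 1 ≤ C := by
    have : (0:ℝ) ≤ 2 * 4^n * 2^n * (2^(n+1) + 1) := by positivity
    rw [hCdef]; linarith
  intro f hf hfb hsupp x hsep
  have hsep25 := BMOaux.sep_coord hn x hsep
  set Q0 : Set (Fin n → ℝ) := Set.Icc (fun _ => (-1:ℝ)) (fun _ => 1) with hQ0def
  have hsuppd : ∀ (y : Fin n → ℝ) (k : ℕ), f (y - x k) ≠ 0 → ∀ i, |y i - x k i| ≤ 1 := by
    intro y k hne i
    have hmem : y - x k ∈ Q0 := by
      by_contra hmem
      exact hne (hsupp _ hmem)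
    have h1 := hmem.1 i
    have h2 := hmem.2 i
    simp only [Pi.sub_apply] at h1 h2
    rw [abs_le]; exact ⟨h1, h2⟩
  -- global integrability of f
  have hfQ0 : IntegrableOn f Q0 := hf.integrableOn_isCompact isCompact_Icc
  have hfint : Integrable f := by
    have hfind : f = Q0.indicator f := funext fun y => by
      by_cases h : y ∈ Q0
      · rw [indicator_of_mem h]
      · rw [indicator_of_notMem h, hsupp y h]
    rw [hfind]
    exact (integrable_indicator_iff measurableSet_Icc).2 hfQ0
  -- local integrability of g
  have hloc : LocallyIntegrable (fun y => ∑' k : ℕ, f (y - x k)) volume := by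
    rw [locallyIntegrable_iff]
    intro K hK
    rcases K.eq_empty_or_nonempty with rfl | hne
    · exact integrableOn_empty
    obtain ⟨R, hR⟩ := hK.isBounded.subset_closedBall (0 : Fin n → ℝ)
    have hcoord : ∀ y ∈ K, ∀ i, |y i| ≤ R := by
      intro y hy i
      have h2 : dist (y i) ((0 : Fin n → ℝ) i) ≤ dist y (0 : Fin n → ℝ) :=
        dist_le_pi_dist y (0 : Fin n → ℝ) i
      simpa [Real.dist_eq] using h2.trans (Metric.mem_closedBall.1 (hR hy))
    have hfin := BMOaux.finite_in_box hn x hsep25 (fun _ => -(R+1)) (2*(R+1))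
    set Fs := hfin.toFinset with hFs
    have hEq : EqOn (fun y => ∑ k ∈ Fs, f (y - x k)) (fun y => ∑' k : ℕ, f (y - x k)) K := by
      intro y hy
      refine (tsum_eq_sum ?_).symm
      intro k hk
      by_contra hne2
      apply hk
      rw [hFs, Set.Finite.mem_toFinset]
      have h1 := hsuppd y k hne2
      refine ⟨fun i => ?_, fun i => ?_⟩ <;>
        [skip; skip] <;>
      · have h3 := abs_le.1 (h1 i)
        have h4 := abs_le.1 (hcoord y hy i)
        simp only
        linarith [h3.1, h3.2, h4.1, h4.2]
    have hint : IntegrableOn (fun y => ∑ k ∈ Fs, f (y - x k)) K :=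
      (integrable_finset_sum Fs fun k _ => hfint.comp_sub_right (x k)).integrableOn
    exact hint.congr_fun hEq hK.measurableSet
  refine ⟨hloc, ?_⟩
  -- BMO data
  set M : ℝ := (bmoN f).toReal with hMdef
  have hM0 : 0 ≤ M := ENNReal.toReal_nonneg
  have hoscf : ∀ (b : Fin n → ℝ) {l : ℝ}, 0 < l → oscN f (cube b l) ≤ M :=
    fun b l hl => BMOaux.osc_le_toReal_bmo hfb b hl
  have hQ0cube : Q0 = cube (fun _ => -1) 2 := by
    rw [hQ0def, cube]; congr 1; funext i; norm_num
  -- the average of f over Q0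
  set c0 : ℝ := ⨍ y in Q0, f y with hc0def
  set Qb : Set (Fin n → ℝ) := cube (fun _ => (-1:ℝ)) 4 with hQbdef
  set Bq : Set (Fin n → ℝ) := cube (fun _ => (1:ℝ)) 2 with hBqdef
  have hfQb : IntegrableOn f Qb := hf.integrableOn_isCompact isCompact_Icc
  have hQbvol : volume Qb = ENNReal.ofReal ((4:ℝ)^n) := BMOaux.volume_cube _ (by norm_num)
  have hQbfin : volume Qb ≠ ⊤ := by rw [hQbvol]; exact ENNReal.ofReal_ne_top
  have hQ0vol : volume Q0 = ENNReal.ofReal ((2:ℝ)^n) := by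
    rw [hQ0cube]; exact BMOaux.volume_cube _ (by norm_num)
  have hQ0ne : volume Q0 ≠ 0 := by
    rw [hQ0vol]; exact (ENNReal.ofReal_pos.2 (by positivity)).ne'
  have hBqvol : volume Bq = ENNReal.ofReal ((2:ℝ)^n) := BMOaux.volume_cube _ (by norm_num)
  have hBqne : volume Bq ≠ 0 := by
    rw [hBqvol]; exact (ENNReal.ofReal_pos.2 (by positivity)).ne'
  have hQ0Qb : Q0 ⊆ Qb := by
    intro y hy
    exact ⟨fun i => hy.1 i, fun i => by have := hy.2 i; simp only at this ⊢; linarith⟩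
  have hBqQb : Bq ⊆ Qb := by
    intro y hy
    refine ⟨fun i => ?_, fun i => ?_⟩
    · have := hy.1 i; simp only at this ⊢; linarith
    · have := hy.2 i; simp only at this ⊢; linarith
  have hratio : ((4:ℝ)^n) / ((2:ℝ)^n) = 2^n := by
    rw [show (4:ℝ) = 2*2 by norm_num, mul_pow, mul_div_assoc,
      div_self (by positivity : ((2:ℝ)^n) ≠ 0), mul_one]
  have hoscQb : oscN f Qb ≤ M := hoscf _ (by norm_num)
  have ht1 : |c0 - ⨍ y in Qb, f y| ≤ 2^n * M := by
    have h := BMOaux.abs_avg_sub_avg_le (show MeasurableSet Q0 from measurableSet_Icc)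
      hQ0Qb hQ0ne hQbfin hfQb
    rw [← hc0def] at h
    refine h.trans ?_
    rw [hQbvol, hQ0vol, ENNReal.toReal_ofReal (by positivity),
      ENNReal.toReal_ofReal (by positivity), hratio]
    exact mul_le_mul_of_nonneg_left hoscQb (by positivity)
  have havgB : (⨍ y in Bq, f y) = 0 := by
    have hnull : volume {y : Fin n → ℝ | y ∈ Bq ∧ f y ≠ 0} = 0 := by
      refine measure_mono_null
        (?_ : _ ⊆ Set.Icc (fun _ : Fin n => (1:ℝ)) (fun _ => 1)) ?_
      · rintro y ⟨hy, hfy⟩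
        have hyQ0 : y ∈ Q0 := by by_contra h; exact hfy (hsupp y h)
        exact ⟨fun i => hy.1 i, fun i => hyQ0.2 i⟩
      · rw [Real.volume_Icc_pi]
        apply Finset.prod_eq_zero (Finset.mem_univ (⟨0, hn⟩ : Fin n))
        simp
    have hz : ∫ y in Bq, f y = 0 := by
      apply integral_eq_zero_of_ae
      rw [EventuallyEq, ae_restrict_iff' (BMOaux.measurableSet_cube _ _), ae_iff]
      convert hnull using 2
      ext y
      simp [Classical.not_imp, hBqdef]
    rw [setAverage_eq, hz, smul_zero]
  have ht2 : |(0:ℝ) - ⨍ y in Qb, f y| ≤ 2^n * M := by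
    rw [← havgB]
    have h := BMOaux.abs_avg_sub_avg_le (show MeasurableSet Bq from measurableSet_Icc)
      hBqQb hBqne hQbfin hfQb
    refine h.trans ?_
    rw [hQbvol, hBqvol, ENNReal.toReal_ofReal (by positivity),
      ENNReal.toReal_ofReal (by positivity), hratio]
    exact mul_le_mul_of_nonneg_left hoscQb (by positivity)
  have hc0 : |c0| ≤ 2^(n+1) * M := by
    have h1 : |c0| ≤ |c0 - ⨍ y in Qb, f y| + |⨍ y in Qb, f y| := by
      have := abs_add_le (c0 - ⨍ y in Qb, f y) (⨍ y in Qb, f y)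
      simpa using this
    have h2 : |⨍ y in Qb, f y| = |(0:ℝ) - ⨍ y in Qb, f y| := by rw [zero_sub, abs_neg]
    have : (2:ℝ)^(n+1) = 2^n + 2^n := by rw [pow_succ]; ring
    rw [this]
    rw [h2] at h1
    linarith
  -- L¹ bound
  have hL1 : ∫ y, |f y| ≤ 2^n * (M + 2^(n+1) * M) := by
    have e0 : ∫ y, |f y| = ∫ y in Q0, |f y| := by
      calc ∫ y, |f y| = ∫ y, Q0.indicator (fun z => |f z|) y := by
            congr 1; funext y
            by_cases h : y ∈ Q0
            · rw [indicator_of_mem h]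
            · rw [indicator_of_notMem h, hsupp y h, abs_zero]
        _ = ∫ y in Q0, |f y| := integral_indicator measurableSet_Icc
    have hcint : IntegrableOn (fun _ : Fin n → ℝ => c0) Q0 :=
      integrableOn_const (by rw [hQ0vol]; exact ENNReal.ofReal_ne_top)
    have habs1 : IntegrableOn (fun y => |f y - c0|) Q0 := (hfQ0.sub hcint).abs
    have habs2 : IntegrableOn (fun y => |f y - c0| + |c0|) Q0 := habs1.add hcint.abs
    have hfabs : IntegrableOn (fun y => |f y|) Q0 := hfQ0.abs
    have e1 : ∫ y in Q0, |f y| ≤ (∫ y in Q0, |f y - c0|) + (volume Q0).toReal * |c0| := by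
      have hm := setIntegral_mono_on hfabs habs2 measurableSet_Icc
        (fun y _ => by
          have h2 := abs_add_le (f y - c0) c0
          simp only [sub_add_cancel] at h2
          exact h2)
      rw [integral_add habs1 hcint.abs, setIntegral_const, smul_eq_mul] at hm
      exact hm
    have e2 : ∫ y in Q0, |f y - c0| = (volume Q0).toReal * oscN f Q0 := by
      rw [BMOaux.oscN_eq, ← hc0def]
      have hv : (volume Q0).toReal = 2^n := by
        rw [hQ0vol, ENNReal.toReal_ofReal (by positivity)]
      rw [hv]
      field_simp
    have hoQ0 : oscN f Q0 ≤ M := by rw [hQ0cube]; exact hoscf _ (by norm_num)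
    have hv : (volume Q0).toReal = 2^n := by
      rw [hQ0vol, ENNReal.toReal_ofReal (by positivity)]
    rw [e0]
    rw [e2, hv] at e1
    have h3 : (2:ℝ)^n * oscN f Q0 ≤ 2^n * M := by
      exact mul_le_mul_of_nonneg_left hoQ0 (by positivity)
    have h4 : (2:ℝ)^n * |c0| ≤ 2^n * (2^(n+1) * M) :=
      mul_le_mul_of_nonneg_left hc0 (by positivity)
    calc ∫ y in Q0, |f y| ≤ 2^n * oscN f Q0 + 2^n * |c0| := e1
      _ ≤ 2^n * M + 2^n * (2^(n+1) * M) := add_le_add h3 h4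
      _ = 2^n * (M + 2^(n+1) * M) := by ring
  -- now the supremum bound
  have hMrw : bmoN f = ENNReal.ofReal M := (ENNReal.ofReal_toReal hfb).symm
  rw [hMrw, ← ENNReal.ofReal_mul (by linarith : (0:ℝ) ≤ C)]
  have main : ∀ (a : Fin n → ℝ) (l : ℝ), 0 < l →
      oscN (fun y => ∑' k : ℕ, f (y - x k)) (cube a l) ≤ C * M := by
    intro a l hl
    rcases le_or_gt l (1/2) with hhalf | hhalf
    · -- small cubes
      by_cases hex : ∃ k, ∃ y ∈ cube a l, f (y - x k) ≠ 0
      · obtain ⟨k, y₀, hy₀, hfy₀⟩ := hex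
        have hEq : EqOn (fun y => ∑' m : ℕ, f (y - x m))
            (fun y => f (y - x k)) (cube a l) := by
          intro y hy
          apply tsum_eq_single
          intro m hm
          by_contra hne2
          have h1 := hsuppd y₀ k hfy₀
          have h2 := hsuppd y m hne2
          refine hsep25 m k hm fun i => ?_
          have h3 := abs_le.1 (h1 i)
          have h4 := abs_le.1 (h2 i)
          have h5 : a i ≤ y i := hy.1 i
          have h6 : y i ≤ a i + l := hy.2 i
          have h7 : a i ≤ y₀ i := hy₀.1 i
          have h8 : y₀ i ≤ a i + l := hy₀.2 i
          rw [abs_le]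
          constructor <;> linarith [h3.1, h3.2, h4.1, h4.2]
        rw [BMOaux.oscN_congr (BMOaux.measurableSet_cube a l) hEq,
          BMOaux.oscN_translate f (x k) a hl.le]
        calc oscN f (cube (a - x k) l) ≤ M := hoscf _ hl
          _ ≤ C * M := le_mul_of_one_le_left hM0 hC1
      · push_neg at hex
        have hEq : EqOn (fun y => ∑' m : ℕ, f (y - x m))
            (fun _ => (0:ℝ)) (cube a l) := by
          intro y hy
          simp only
          rw [show (fun m : ℕ => f (y - x m)) = fun _ => (0:ℝ) from
            funext fun m => hex m y hy, tsum_zero]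
        rw [BMOaux.oscN_congr (BMOaux.measurableSet_cube a l) hEq]
        have hz : oscN (fun _ : Fin n → ℝ => (0:ℝ)) (cube a l) = 0 := by
          simp [oscN]
        rw [hz]
        positivity
    · -- large cubes
      have hln : (0:ℝ) < l^n := by positivity
      have hvolQ : volume (cube a l) = ENNReal.ofReal (l^n) := BMOaux.volume_cube _ hl.le
      have hvolQne : volume (cube a l) ≠ 0 := by
        rw [hvolQ]; exact (ENNReal.ofReal_pos.2 (by positivity)).ne'
      have hvolQfin : volume (cube a l) ≠ ⊤ := by rw [hvolQ]; exact ENNReal.ofReal_ne_top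
      have hgQ : IntegrableOn (fun y => ∑' k : ℕ, f (y - x k)) (cube a l) :=
        hloc.integrableOn_isCompact isCompact_Icc
      have hosc2 := BMOaux.oscN_le_two_avg (BMOaux.measurableSet_cube a l)
        hvolQne hvolQfin hgQ
      set Fs := (BMOaux.finite_in_box hn x hsep25 (fun i => a i - 1) (l+2)).toFinset
        with hFsdef
      have hmemF : ∀ y ∈ cube a l, ∀ k, f (y - x k) ≠ 0 → k ∈ Fs := by
        intro y hy k hne2
        rw [hFsdef, Set.Finite.mem_toFinset]
        have h1 := hsuppd y k hne2
        refine ⟨fun i => ?_, fun i => ?_⟩ <;>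
        · have h3 := abs_le.1 (h1 i)
          have h5 : a i ≤ y i := hy.1 i
          have h6 : y i ≤ a i + l := hy.2 i
          simp only
          linarith [h3.1, h3.2]
      have hcard : (Fs.card : ℝ) ≤ 4^n * l^n := by
        have hcl := BMOaux.count_lemma x hsep25 (fun i => a i - 1)
          (by linarith : (0:ℝ) ≤ l + 2) Fs
          (fun k hk => by rw [hFsdef, Set.Finite.mem_toFinset] at hk; exact hk)
        have h1 : ((l + 2) + 5/2 : ℝ)^n ≤ (10*l)^n :=
          pow_le_pow_left₀ (by linarith) (by linarith) n
        have h2 : ((10:ℝ)*l)^n = 4^n * l^n * (5/2)^n := by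
          rw [show (10:ℝ)*l = (4*l)*(5/2) by ring, mul_pow, mul_pow]
        have hpow : (0:ℝ) < (5/2:ℝ)^n := by positivity
        have := hcl.trans (h1.trans_eq h2)
        exact le_of_mul_le_mul_right this hpow
      have hEqQ : EqOn (fun y => ∑' k : ℕ, f (y - x k))
          (fun y => ∑ k ∈ Fs, f (y - x k)) (cube a l) := by
        intro y hy
        apply tsum_eq_sum
        intro k hk
        by_contra hne2
        exact hk (hmemF y hy k hne2)
      have hFint : (0:ℝ) ≤ ∫ y, |f y| := integral_nonneg fun y => abs_nonneg _
      have hI : ∫ y in cube a l, |∑' k : ℕ, f (y - x k)| ≤ (Fs.card : ℝ) * ∫ y, |f y| := by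
        have e1 : ∫ y in cube a l, |∑' k : ℕ, f (y - x k)| =
            ∫ y in cube a l, |∑ k ∈ Fs, f (y - x k)| :=
          setIntegral_congr_fun (BMOaux.measurableSet_cube a l)
            (fun y hy => congrArg (fun t => |t|) (hEqQ hy))
        have intsum : IntegrableOn (fun y => ∑ k ∈ Fs, f (y - x k)) (cube a l) :=
          (integrable_finset_sum Fs fun k _ => hfint.comp_sub_right (x k)).integrableOn
        have intabs : IntegrableOn (fun y => ∑ k ∈ Fs, |f (y - x k)|) (cube a l) :=
          (integrable_finset_sum Fs fun k _ =>
            (hfint.comp_sub_right (x k)).abs).integrableOn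
        have e2 : ∫ y in cube a l, |∑ k ∈ Fs, f (y - x k)| ≤
            ∫ y in cube a l, ∑ k ∈ Fs, |f (y - x k)| :=
          setIntegral_mono_on intsum.abs intabs (BMOaux.measurableSet_cube a l)
            (fun y _ => Finset.abs_sum_le_sum_abs _ _)
        have e3 : ∫ y in cube a l, ∑ k ∈ Fs, |f (y - x k)| =
            ∑ k ∈ Fs, ∫ y in cube a l, |f (y - x k)| :=
          integral_finset_sum Fs (fun k _ =>
            ((hfint.comp_sub_right (x k)).abs).integrableOn)
        have e4 : ∀ k ∈ Fs, ∫ y in cube a l, |f (y - x k)| ≤ ∫ y, |f y| := by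
          intro k _
          have h1 : ∫ y in cube a l, |f (y - x k)| ≤ ∫ y, |f (y - x k)| :=
            setIntegral_le_integral ((hfint.comp_sub_right (x k)).abs)
              (ae_of_all _ fun y => abs_nonneg _)
          have h2 : ∫ y, |f (y - x k)| = ∫ y, |f y| :=
            integral_sub_right_eq_self (fun y => |f y|) (x k)
          rw [h2] at h1
          exact h1
        have e5 : ∑ k ∈ Fs, ∫ y in cube a l, |f (y - x k)| ≤
            (Fs.card : ℝ) * ∫ y, |f y| := by
          have := Finset.sum_le_card_nsmul Fs _ _ e4
          rwa [nsmul_eq_mul] at this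
        rw [e1]
        exact e2.trans (e3.trans_le e5)
      -- final chain
      have hvt : (volume (cube a l)).toReal = l^n := BMOaux.volume_cube_toReal _ hl.le
      rw [hvt] at hosc2
      have step1 : (l^n)⁻¹ * ∫ y in cube a l, |∑' k : ℕ, f (y - x k)| ≤
          4^n * ∫ y, |f y| := by
        have h1 : ∫ y in cube a l, |∑' k : ℕ, f (y - x k)| ≤
            4^n * l^n * ∫ y, |f y| :=
          hI.trans (mul_le_mul_of_nonneg_right hcard hFint)
        calc (l^n)⁻¹ * ∫ y in cube a l, |∑' k : ℕ, f (y - x k)|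
            ≤ (l^n)⁻¹ * (4^n * l^n * ∫ y, |f y|) :=
              mul_le_mul_of_nonneg_left h1 (by positivity)
          _ = 4^n * ∫ y, |f y| := by
              rw [show (4:ℝ)^n * l^n * ∫ y, |f y| = (l^n) * (4^n * ∫ y, |f y|) from by ring,
                inv_mul_cancel_left₀ hln.ne']
      have step2 : oscN (fun y => ∑' k : ℕ, f (y - x k)) (cube a l) ≤
          2 * (4^n * ∫ y, |f y|) :=
        hosc2.trans (by linarith)
      have step3 : (2:ℝ) * (4^n * ∫ y, |f y|) ≤ 2 * (4^n * (2^n * (M + 2^(n+1) * M))) := by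
        have := mul_le_mul_of_nonneg_left hL1 (by positivity : (0:ℝ) ≤ 4^n)
        linarith
      have step4 : (2:ℝ) * (4^n * (2^n * (M + 2^(n+1) * M))) =
          (2 * 4^n * 2^n * (2^(n+1) + 1)) * M := by ring
      have step5 : (2 * 4^n * 2^n * (2^(n+1) + 1) : ℝ) * M ≤ C * M := by
        apply mul_le_mul_of_nonneg_right _ hM0
        rw [hCdef]; linarith
      linarith
  refine iSup_le fun a => iSup_le fun l => iSup_le fun hl => ?_
  exact ENNReal.ofReal_le_ofReal (main a l hl)
end
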